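/- arXiv:1407.1662 — 3 statements merged into one kernel-verified Lean document; each statement's English description precedes it below -/
import Mathlib

section
/- Let q ≥ 1 and let x = (x₁,…,x_q), x' = (x'₁,…,x'_q) be nonnegative vectors with Σx_i = Σx'_i = h ≤ 1. Let A_x (resp. A_{x'}) be the set of probability distributions a on [q] with a_i ≥ x_i (resp. a_i ≥ x'_i) for all i. Then for every a ∈ A_x there exists b ∈ A_{x'} with ‖a − b‖₁ ≤ ‖x − x'‖₁; consequently for every bounded graphon W and symmetric q×q matrix J, |E^x(W,J) − E^{x'}(W,J)| ≤ 2·‖x − x'‖₁·‖W‖_∞·‖J‖_∞, where E^x(W,J) = inf_{a ∈ A_x} E_a(W,J). -/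
open MeasureTheory Filter

noncomputable section

/-- The unit interval as a subset of ℝ. -/
def I01 : Set ℝ := Set.Icc 0 1

/-- A `q`-fractional partition: measurable functions `ρ i : [0,1] → [0,1]`
summing pointwise to `1` on `[0,1]`. -/
structure FracPartition (q : ℕ) where
  toFun : Fin q → ℝ → ℝ
  measurable : ∀ i, Measurable (toFun i)
  mem_I01 : ∀ i x, x ∈ I01 → toFun i x ∈ I01
  sum_one : ∀ x ∈ I01, ∑ i, toFun i x = 1

/-- Energy of a fractional partition with respect to a graphon `W` and matrix `J`. -/
def energy {q : ℕ} (W : ℝ → ℝ → ℝ) (J : Matrix (Fin q) (Fin q) ℝ)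
    (ρ : FracPartition q) : ℝ :=
  - ∑ i, ∑ j, J i j * ∫ x in I01, ∫ y in I01, ρ.toFun i x * ρ.toFun j y * W x y

/-- `a` is a probability distribution on `Fin q`. -/
def IsDist {q : ℕ} (a : Fin q → ℝ) : Prop :=
  (∀ i, 0 ≤ a i) ∧ ∑ i, a i = 1

/-- Microcanonical ground state energy. -/
def mgse {q : ℕ} (W : ℝ → ℝ → ℝ) (J : Matrix (Fin q) (Fin q) ℝ) (a : Fin q → ℝ) : ℝ :=
  sInf {e | ∃ ρ : FracPartition q, (∀ i, (∫ x in I01, ρ.toFun i x) = a i) ∧ e = energy W J ρ}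

/-- General lower threshold ground state energy with threshold vector `x`. -/
def ltgseV {q : ℕ} (W : ℝ → ℝ → ℝ) (J : Matrix (Fin q) (Fin q) ℝ) (x : Fin q → ℝ) : ℝ :=
  sInf {e | ∃ a : Fin q → ℝ, IsDist a ∧ (∀ i, x i ≤ a i) ∧ e = mgse W J a}

/-- Homogeneous lower threshold ground state energy with scalar threshold `c`. -/
def ltgse {q : ℕ} (W : ℝ → ℝ → ℝ) (J : Matrix (Fin q) (Fin q) ℝ) (c : ℝ) : ℝ :=
  ltgseV W J (fun _ => c)

/-- Unrestricted ground state energy. -/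
def gse {q : ℕ} (W : ℝ → ℝ → ℝ) (J : Matrix (Fin q) (Fin q) ℝ) : ℝ :=
  sInf {e | ∃ ρ : FracPartition q, e = energy W J ρ}

/-- `W` is a graphon: a bounded symmetric measurable function. -/
def IsGraphon (W : ℝ → ℝ → ℝ) : Prop :=
  Measurable (Function.uncurry W) ∧ (∀ x y, W x y = W y x) ∧ ∃ M, ∀ x y, |W x y| ≤ M

namespace Stmt9Aux

lemma measI01 : MeasurableSet I01 := measurableSet_Icc
lemma volI01 : volume I01 = 1 := by simp [I01, Real.volume_Icc]

instance : IsFiniteMeasure (volume.restrict I01) :=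
  ⟨by rw [Measure.restrict_apply_univ, volI01]; exact ENNReal.one_lt_top⟩

lemma meas_univ_I01 : (volume.restrict I01 Set.univ).toReal = 1 := by
  rw [Measure.restrict_apply_univ, volI01]; simp

lemma volI01_toReal : (volume I01).toReal = 1 := by rw [volI01]; simp

lemma intOn_bound {f : ℝ → ℝ} {C : ℝ} (hf : Measurable f) (hC : ∀ y ∈ I01, |f y| ≤ C) :
    IntegrableOn f I01 := by
  refine Integrable.mono' (integrable_const C) hf.aestronglyMeasurable.restrict ?_
  exact (ae_restrict_iff' measI01).2 (ae_of_all _ fun y hy => by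
    simpa [Real.norm_eq_abs] using hC y hy)

variable {q : ℕ}

lemma fp_nonneg (ρ : FracPartition q) (i : Fin q) {x : ℝ} (hx : x ∈ I01) :
    0 ≤ ρ.toFun i x := (ρ.mem_I01 i x hx).1

lemma fp_le_one (ρ : FracPartition q) (i : Fin q) {x : ℝ} (hx : x ∈ I01) :
    ρ.toFun i x ≤ 1 := (ρ.mem_I01 i x hx).2

lemma fp_int (ρ : FracPartition q) (i : Fin q) : IntegrableOn (ρ.toFun i) I01 :=
  intOn_bound (ρ.measurable i) (fun y hy => abs_le.2 ⟨by linarith [fp_nonneg ρ i hy], fp_le_one ρ i hy⟩)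

lemma fp_integral_nonneg (ρ : FracPartition q) (i : Fin q) :
    0 ≤ ∫ x in I01, ρ.toFun i x :=
  setIntegral_nonneg measI01 (fun x hx => fp_nonneg ρ i hx)

/-- constant fractional partition -/
def constFP (a : Fin q → ℝ) (ha : IsDist a) : FracPartition q where
  toFun := fun i _ => a i
  measurable := fun _ => measurable_const
  mem_I01 := fun i _ _ => ⟨ha.1 i, by
    calc a i ≤ ∑ j, a j := Finset.single_le_sum (fun j _ => ha.1 j) (Finset.mem_univ i)
    _ = 1 := ha.2⟩
  sum_one := fun _ _ => ha.2

lemma constFP_integral (a : Fin q → ℝ) (ha : IsDist a) (i : Fin q) :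
    (∫ x in I01, (constFP a ha).toFun i x) = a i := by
  simp [constFP, meas_univ_I01, volI01_toReal, measureReal_def]

/-- crude bound on the double integral -/
lemma double_integral_bound (ρ : FracPartition q) {W : ℝ → ℝ → ℝ} {Wmax : ℝ}
    (hWb : ∀ s t, |W s t| ≤ Wmax) (i j : Fin q) :
    |∫ x in I01, ∫ y in I01, ρ.toFun i x * ρ.toFun j y * W x y| ≤ Wmax := by
  have hW0 : 0 ≤ Wmax := le_trans (abs_nonneg _) (hWb 0 0)
  have inner : ∀ x ∈ I01, |∫ y in I01, ρ.toFun i x * ρ.toFun j y * W x y| ≤ Wmax := by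
    intro x hx
    have := norm_integral_le_of_norm_le_const (μ := volume.restrict I01)
      (f := fun y => ρ.toFun i x * ρ.toFun j y * W x y) (C := Wmax) ?_
    · simpa [Real.norm_eq_abs, meas_univ_I01, volI01_toReal, measureReal_def] using this
    · refine (ae_restrict_iff' measI01).2 (ae_of_all _ fun y hy => ?_)
      rw [Real.norm_eq_abs, abs_mul, abs_mul]
      calc |ρ.toFun i x| * |ρ.toFun j y| * |W x y| ≤ 1 * 1 * Wmax := by
            gcongr <;> first
              | exact abs_nonneg _
              | exact abs_le.2 ⟨by linarith [fp_nonneg ρ i hx], fp_le_one ρ i hx⟩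
              | exact abs_le.2 ⟨by linarith [fp_nonneg ρ j hy], fp_le_one ρ j hy⟩
              | exact hWb x y
        _ = Wmax := by ring
  have := norm_integral_le_of_norm_le_const (μ := volume.restrict I01)
    (f := fun x => ∫ y in I01, ρ.toFun i x * ρ.toFun j y * W x y) (C := Wmax) ?_
  · simpa [Real.norm_eq_abs, meas_univ_I01, volI01_toReal, measureReal_def] using this
  · exact (ae_restrict_iff' measI01).2 (ae_of_all _ fun x hx => by
      simpa [Real.norm_eq_abs] using inner x hx)

lemma energy_lb {W : ℝ → ℝ → ℝ} {J : Matrix (Fin q) (Fin q) ℝ} {Wmax Jmax : ℝ}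
    (hWb : ∀ s t, |W s t| ≤ Wmax) (hJb : ∀ i j, |J i j| ≤ Jmax) (ρ : FracPartition q) :
    -((q : ℝ)^2 * (Wmax * Jmax)) ≤ energy W J ρ := by
  have hJ0 : ∀ i j : Fin q, (0:ℝ) ≤ Jmax := fun i j => le_trans (abs_nonneg _) (hJb i j)
  have key : ∑ i, ∑ j, J i j * ∫ x in I01, ∫ y in I01, ρ.toFun i x * ρ.toFun j y * W x y
      ≤ (q : ℝ)^2 * (Wmax * Jmax) := by
    calc ∑ i, ∑ j, J i j * ∫ x in I01, ∫ y in I01, ρ.toFun i x * ρ.toFun j y * W x y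
        ≤ ∑ i : Fin q, ∑ j : Fin q, Wmax * Jmax := by
          refine Finset.sum_le_sum fun i _ => Finset.sum_le_sum fun j _ => ?_
          calc J i j * _ ≤ |J i j * _| := le_abs_self _
            _ = |J i j| * |_| := abs_mul _ _
            _ ≤ Jmax * Wmax := by
                refine mul_le_mul (hJb i j) (double_integral_bound ρ hWb i j)
                  (abs_nonneg _) (hJ0 i j)
            _ = Wmax * Jmax := mul_comm _ _
      _ = (q : ℝ)^2 * (Wmax * Jmax) := by simp [Finset.sum_const]; ring
  simpa [energy] using neg_le_neg key

lemma abs_split (t : ℝ) : max t 0 + max (-t) 0 = |t| := by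
  rcases le_total t 0 with h | h
  · rw [max_eq_right h, max_eq_left (by linarith), abs_of_nonpos h]; ring
  · rw [max_eq_left h, max_eq_right (by linarith), abs_of_nonneg h]; ring

lemma exists_close_fp {W : ℝ → ℝ → ℝ} (hWm : Measurable (Function.uncurry W))
    {J : Matrix (Fin q) (Fin q) ℝ} {Wmax Jmax : ℝ}
    (hWb : ∀ s t, |W s t| ≤ Wmax) (hJb : ∀ i j, |J i j| ≤ Jmax)
    {a b : Fin q → ℝ} (ha : IsDist a) (hb : IsDist b)
    (ρ : FracPartition q) (hρ : ∀ i, (∫ x in I01, ρ.toFun i x) = a i) :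
    ∃ ρ' : FracPartition q, (∀ i, (∫ x in I01, ρ'.toFun i x) = b i) ∧
      |energy W J ρ' - energy W J ρ| ≤ 2 * (∑ i, |a i - b i|) * Wmax * Jmax := by
  have hW0 : 0 ≤ Wmax := le_trans (abs_nonneg _) (hWb 0 0)
  set n := ∑ i, |a i - b i| with hn
  by_cases hn0 : n = 0
  · refine ⟨ρ, fun i => ?_, by rw [sub_self, abs_zero]; simp [hn0]⟩
    have h1 : |a i - b i| = 0 :=
      (Finset.sum_eq_zero_iff_of_nonneg (fun i _ => abs_nonneg (a i - b i))).1 hn0 i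
        (Finset.mem_univ i)
    have := abs_eq_zero.1 h1
    rw [hρ i]; linarith
  -- nontrivial case
  have hqpos : Nonempty (Fin q) := by
    obtain ⟨i, -, -⟩ := Finset.exists_ne_zero_of_sum_ne_zero hn0
    exact ⟨i⟩
  have hJ0 : 0 ≤ Jmax := le_trans (abs_nonneg _) (hJb hqpos.some hqpos.some)
  have hnpos : 0 < n := lt_of_le_of_ne (Finset.sum_nonneg fun i _ => abs_nonneg _) (Ne.symm hn0)
  set ε := n / 2 with hεdef
  have hε : 0 < ε := by positivity
  set d : Fin q → ℝ := fun i => max (a i - b i) 0 with hd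
  set e : Fin q → ℝ := fun i => max (b i - a i) 0 with he
  have hdval : ∀ i, d i = max (a i - b i) 0 := fun i => rfl
  have heval : ∀ i, e i = max (b i - a i) 0 := fun i => rfl
  have hd0 : ∀ i, 0 ≤ d i := fun i => le_max_right _ _
  have he0 : ∀ i, 0 ≤ e i := fun i => le_max_right _ _
  have hde : ∀ i, d i + e i = |a i - b i| := by
    intro i; rw [hdval, heval]
    have := abs_split (a i - b i)
    simpa using this
  have hdmul : ∀ i, d i * e i = 0 := by
    intro i; rcases le_total (a i) (b i) with h | h
    · rw [hdval]; simp [max_eq_right (by linarith : a i - b i ≤ 0)]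
    · rw [heval]; simp [max_eq_right (by linarith : b i - a i ≤ 0)]
  have hdiff : ∀ i, d i - e i = a i - b i := by
    intro i; rcases le_total (a i) (b i) with h | h
    · rw [hdval, heval, max_eq_right (by linarith : a i - b i ≤ 0),
        max_eq_left (by linarith : 0 ≤ b i - a i)]; ring
    · rw [hdval, heval, max_eq_left (by linarith : 0 ≤ a i - b i),
        max_eq_right (by linarith : b i - a i ≤ 0)]; ring
  have hsum_sub : ∑ i, d i - ∑ i, e i = 0 := by
    rw [← Finset.sum_sub_distrib]
    have : ∑ i, (d i - e i) = ∑ i, (a i - b i) := Finset.sum_congr rfl fun i _ => hdiff i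
    rw [this, Finset.sum_sub_distrib, ha.2, hb.2, sub_self]
  have hsum_add : ∑ i, d i + ∑ i, e i = n := by
    rw [← Finset.sum_add_distrib, hn]
    exact Finset.sum_congr rfl fun i _ => hde i
  have hsum_d : ∑ i, d i = ε := by rw [hεdef]; linarith
  have hsum_e : ∑ i, e i = ε := by rw [hεdef]; linarith
  have hmind : ∀ j, min (a j) (b j) + d j = a j := by
    intro j; rcases le_total (a j) (b j) with h | h
    · rw [min_eq_left h, hdval, max_eq_right (by linarith : a j - b j ≤ 0)]; ring
    · rw [min_eq_right h, hdval, max_eq_left (by linarith : 0 ≤ a j - b j)]; ring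
  have hmine : ∀ i, min (a i) (b i) + e i = b i := by
    intro i; rcases le_total (a i) (b i) with h | h
    · rw [min_eq_left h, heval, max_eq_left (by linarith : 0 ≤ b i - a i)]; ring
    · rw [min_eq_right h, heval, max_eq_right (by linarith : b i - a i ≤ 0)]; ring
  set c : Fin q → Fin q → ℝ := fun j i =>
    if a j = 0 then (if j = i then 1 else 0)
    else ((if j = i then min (a j) (b j) / a j else 0) + (d j / a j) * (e i / ε)) with hc
  have hcval : ∀ j i, c j i = if a j = 0 then (if j = i then 1 else 0)
    else ((if j = i then min (a j) (b j) / a j else 0) + (d j / a j) * (e i / ε)) :=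
    fun _ _ => rfl
  have ha0 : ∀ j, a j ≠ 0 → 0 < a j := fun j hj => lt_of_le_of_ne (ha.1 j) (Ne.symm hj)
  have hmin0 : ∀ j, 0 ≤ min (a j) (b j) := fun j => le_min (ha.1 j) (hb.1 j)
  have hc0 : ∀ j i, 0 ≤ c j i := by
    intro j i
    by_cases hj : a j = 0
    · rw [hcval]; simp only [if_pos hj]; split <;> norm_num
    · have haj := ha0 j hj
      rw [hcval]; simp only [if_neg hj]
      refine add_nonneg ?_ (mul_nonneg (div_nonneg (hd0 j) haj.le) (div_nonneg (he0 i) hε.le))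
      split
      · exact div_nonneg (hmin0 j) haj.le
      · exact le_refl 0
  have hcB : ∀ j, ∑ i, c j i = 1 := by
    intro j
    by_cases hj : a j = 0
    · simp [hcval, hj]
    · have haj := ha0 j hj
      simp only [hcval, if_neg hj]
      rw [Finset.sum_add_distrib, Finset.sum_ite_eq, if_pos (Finset.mem_univ j),
        ← Finset.mul_sum]
      have h1 : ∑ i, e i / ε = 1 := by rw [← Finset.sum_div, hsum_e, div_self hε.ne']
      rw [h1, mul_one, ← add_div, hmind j, div_self hj]
  have hcA : ∀ j i, c j i * a j = (if j = i then min (a j) (b j) else 0) + d j * (e i / ε) := by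
    intro j i
    by_cases hj : a j = 0
    · have hdj : d j = 0 := by
        have hle : a j - b j ≤ 0 := by rw [hj]; linarith [hb.1 j]
        rw [hdval j]; exact max_eq_right hle
      rw [hcval, if_pos hj, hj]
      simp [hdj, min_eq_left (hb.1 j)]
    · rw [hcval]; simp only [if_neg hj]
      rw [add_mul]
      congr 1
      · split
        · rw [div_mul_cancel₀ _ hj]
        · rw [zero_mul]
      · field_simp
  have hcC : ∀ i, ∑ j, c j i * a j = b i := by
    intro i
    rw [Finset.sum_congr rfl fun j _ => hcA j i, Finset.sum_add_distrib,
      Finset.sum_ite_eq', if_pos (Finset.mem_univ i), ← Finset.sum_mul, hsum_d]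
    have : ε * (e i / ε) = e i := by field_simp
    rw [this, hmine i]
  have hcD : ∀ i, c i i ≤ 1 := by
    intro i
    by_cases hi : a i = 0
    · rw [hcval]; simp [if_pos hi]
    · have hai := ha0 i hi
      rw [hcval]; simp only [if_neg hi, if_pos rfl]
      have h2 : d i / a i * (e i / ε) = 0 := by
        rcases mul_eq_zero.1 (hdmul i) with h | h <;> simp [h]
      rw [h2, add_zero]
      exact div_le_one_of_le₀ (min_le_left _ _) (ha.1 i)
  have hcE : ∀ i, c i i * a i = min (a i) (b i) := by
    intro i
    rw [hcA i i, if_pos rfl, mul_div_assoc' (d i), hdmul i, zero_div, add_zero]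
  -- the modified fractional partition
  have hmeas' : ∀ k, Measurable (fun x => ∑ j, c j k * ρ.toFun j x) :=
    fun k => Finset.measurable_sum _ fun j _ => (ρ.measurable j).const_mul _
  have hsum1 : ∀ x ∈ I01, ∑ k, ∑ j, c j k * ρ.toFun j x = 1 := by
    intro x hx
    rw [Finset.sum_comm]
    calc ∑ j, ∑ k, c j k * ρ.toFun j x = ∑ j, (∑ k, c j k) * ρ.toFun j x := by
          refine Finset.sum_congr rfl fun j _ => ?_
          rw [Finset.sum_mul]
      _ = ∑ j, ρ.toFun j x := by
          refine Finset.sum_congr rfl fun j _ => by rw [hcB j, one_mul]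
      _ = 1 := ρ.sum_one x hx
  have hnn' : ∀ k x, x ∈ I01 → 0 ≤ ∑ j, c j k * ρ.toFun j x := fun k x hx =>
    Finset.sum_nonneg fun j _ => mul_nonneg (hc0 j k) (fp_nonneg ρ j hx)
  set ρ' : FracPartition q :=
    { toFun := fun k x => ∑ j, c j k * ρ.toFun j x
      measurable := hmeas'
      mem_I01 := fun k x hx => ⟨hnn' k x hx, by
        calc ∑ j, c j k * ρ.toFun j x
            ≤ ∑ k', ∑ j, c j k' * ρ.toFun j x :=
              Finset.single_le_sum (fun k' _ => hnn' k' x hx) (Finset.mem_univ k)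
          _ = 1 := hsum1 x hx⟩
      sum_one := hsum1 } with hρ'
  have hρ'val : ∀ k x, ρ'.toFun k x = ∑ j, c j k * ρ.toFun j x := fun _ _ => rfl
  have hρ'int : ∀ k, (∫ x in I01, ρ'.toFun k x) = b k := by
    intro k
    have : (∫ x in I01, ρ'.toFun k x) = ∑ j, c j k * a j := by
      simp only [hρ'val]
      rw [integral_finset_sum _ (fun j _ => ((fp_int ρ j).const_mul _))]
      exact Finset.sum_congr rfl fun j _ => by rw [MeasureTheory.integral_const_mul, hρ j]
    rw [this, hcC k]
  -- the L¹ distance bound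
  set δ : Fin q → ℝ := fun k => ∫ x in I01, |ρ'.toFun k x - ρ.toFun k x| with hδdef
  have hδval : ∀ k, δ k = ∫ x in I01, |ρ'.toFun k x - ρ.toFun k x| := fun _ => rfl
  have hδint : ∀ k, IntegrableOn (fun x => |ρ'.toFun k x - ρ.toFun k x|) I01 :=
    fun k => ((fp_int ρ' k).sub (fp_int ρ k)).abs
  have hδ0 : ∀ k, 0 ≤ δ k := fun k =>
    setIntegral_nonneg measI01 fun x _ => abs_nonneg _
  have hδle : ∀ k, δ k ≤ |a k - b k| := by
    intro k
    have hGint : IntegrableOn (fun x => (1 - c k k) * ρ.toFun k x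
        + ∑ j ∈ Finset.univ.erase k, c j k * ρ.toFun j x) I01 :=
      ((fp_int ρ k).const_mul _).add
        (integrable_finset_sum _ fun j _ => (fp_int ρ j).const_mul _)
    have hmono : δ k ≤ ∫ x in I01, ((1 - c k k) * ρ.toFun k x
        + ∑ j ∈ Finset.univ.erase k, c j k * ρ.toFun j x) := by
      rw [hδval]
      refine setIntegral_mono_on (hδint k) hGint measI01 fun x hx => ?_
      have hsp : ρ'.toFun k x - ρ.toFun k x = (c k k - 1) * ρ.toFun k x
          + ∑ j ∈ Finset.univ.erase k, c j k * ρ.toFun j x := by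
        rw [hρ'val, ← Finset.add_sum_erase _ _ (Finset.mem_univ k)]; ring
      rw [hsp]
      have h1 : |(c k k - 1) * ρ.toFun k x| = (1 - c k k) * ρ.toFun k x := by
        rw [abs_mul, abs_of_nonpos (by linarith [hcD k] : c k k - 1 ≤ 0),
          abs_of_nonneg (fp_nonneg ρ k hx)]; ring
      have h2 : |∑ j ∈ Finset.univ.erase k, c j k * ρ.toFun j x|
          = ∑ j ∈ Finset.univ.erase k, c j k * ρ.toFun j x :=
        abs_of_nonneg (Finset.sum_nonneg fun j _ => mul_nonneg (hc0 j k) (fp_nonneg ρ j hx))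
      calc |(c k k - 1) * ρ.toFun k x + ∑ j ∈ Finset.univ.erase k, c j k * ρ.toFun j x|
          ≤ |(c k k - 1) * ρ.toFun k x| + |∑ j ∈ Finset.univ.erase k, c j k * ρ.toFun j x| :=
            abs_add_le _ _
        _ = (1 - c k k) * ρ.toFun k x + ∑ j ∈ Finset.univ.erase k, c j k * ρ.toFun j x := by
            rw [h1, h2]
    have hval : (∫ x in I01, ((1 - c k k) * ρ.toFun k x
        + ∑ j ∈ Finset.univ.erase k, c j k * ρ.toFun j x))
        = (1 - c k k) * a k + ∑ j ∈ Finset.univ.erase k, c j k * a j := by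
      rw [integral_add ((fp_int ρ k).const_mul _)
        (integrable_finset_sum _ fun j _ => (fp_int ρ j).const_mul _),
        MeasureTheory.integral_const_mul, hρ k,
        integral_finset_sum _ (fun j _ => (fp_int ρ j).const_mul _)]
      congr 1
      exact Finset.sum_congr rfl fun j _ => by rw [MeasureTheory.integral_const_mul, hρ j]
    have htot : c k k * a k + ∑ j ∈ Finset.univ.erase k, c j k * a j = b k := by
      rw [Finset.add_sum_erase _ (fun j => c j k * a j) (Finset.mem_univ k)]
      exact hcC k
    have hlast : (1 - c k k) * a k + ∑ j ∈ Finset.univ.erase k, c j k * a j = |a k - b k| := by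
      have h3 : c k k * a k = min (a k) (b k) := hcE k
      rcases le_total (a k) (b k) with hle | hle
      · rw [abs_of_nonpos (by linarith : a k - b k ≤ 0)]
        have := min_eq_left hle; nlinarith [htot, h3]
      · rw [abs_of_nonneg (by linarith : 0 ≤ a k - b k)]
        have := min_eq_right hle; nlinarith [htot, h3]
    calc δ k ≤ _ := hmono
      _ = |a k - b k| := by rw [hval, hlast]
  have hδsum : ∑ k, δ k ≤ n := by rw [hn]; exact Finset.sum_le_sum fun k _ => hδle k
  -- kernels
  have hKm : ∀ (σ : FracPartition q) (j : Fin q),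
      Measurable (fun x => ∫ y in I01, σ.toFun j y * W x y) := by
    intro σ j
    have hm : Measurable (Function.uncurry fun x y => σ.toFun j y * W x y) :=
      ((σ.measurable j).comp measurable_snd).mul hWm
    exact hm.stronglyMeasurable.integral_prod_right'.measurable
  have hKb : ∀ (σ : FracPartition q) (j : Fin q) (x : ℝ),
      |∫ y in I01, σ.toFun j y * W x y| ≤ Wmax * ∫ y in I01, σ.toFun j y := by
    intro σ j x
    have hb1 : ∀ᵐ y ∂(volume.restrict I01), ‖σ.toFun j y * W x y‖ ≤ Wmax * σ.toFun j y := by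
      refine (ae_restrict_iff' measI01).2 (ae_of_all _ fun y hy => ?_)
      rw [Real.norm_eq_abs, abs_mul, abs_of_nonneg (fp_nonneg σ j hy), mul_comm]
      exact mul_le_mul_of_nonneg_right (hWb x y) (fp_nonneg σ j hy)
    have := norm_integral_le_of_norm_le ((fp_int σ j).const_mul Wmax) hb1
    rw [Real.norm_eq_abs] at this
    calc |∫ y in I01, σ.toFun j y * W x y| ≤ ∫ y in I01, Wmax * σ.toFun j y := this
      _ = Wmax * ∫ y in I01, σ.toFun j y := MeasureTheory.integral_const_mul _ _
  have hKint : ∀ (σ τ : FracPartition q) (i j : Fin q),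
      IntegrableOn (fun x => σ.toFun i x * ∫ y in I01, τ.toFun j y * W x y) I01 := by
    intro σ τ i j
    refine intOn_bound (C := Wmax * ∫ y in I01, τ.toFun j y) ((σ.measurable i).mul (hKm τ j)) fun x hx => ?_
    rw [abs_mul]
    calc |σ.toFun i x| * |∫ y in I01, τ.toFun j y * W x y|
        ≤ 1 * (Wmax * ∫ y in I01, τ.toFun j y) := by
          refine mul_le_mul ?_ (hKb τ j x) (abs_nonneg _) zero_le_one
          exact abs_le.2 ⟨by linarith [fp_nonneg σ i hx], fp_le_one σ i hx⟩
      _ = Wmax * ∫ y in I01, τ.toFun j y := one_mul _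
  have henergy : ∀ σ : FracPartition q, energy W J σ =
      - ∑ i, ∑ j, J i j * ∫ x in I01, σ.toFun i x * ∫ y in I01, σ.toFun j y * W x y := by
    intro σ
    unfold energy
    simp_rw [mul_assoc, MeasureTheory.integral_const_mul]
  have hKdiff : ∀ (j : Fin q) (x : ℝ),
      |(∫ y in I01, ρ'.toFun j y * W x y) - ∫ y in I01, ρ.toFun j y * W x y| ≤ Wmax * δ j := by
    intro j x
    have hWx : Measurable (W x) := hWm.comp measurable_prodMk_left
    have hint1 : IntegrableOn (fun y => ρ'.toFun j y * W x y) I01 :=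
      intOn_bound ((ρ'.measurable j).mul hWx) fun y hy => by
        rw [abs_mul]
        calc |ρ'.toFun j y| * |W x y| ≤ 1 * Wmax :=
              mul_le_mul (abs_le.2 ⟨by linarith [fp_nonneg ρ' j hy], fp_le_one ρ' j hy⟩)
                (hWb x y) (abs_nonneg _) zero_le_one
          _ = Wmax := one_mul _
    have hint2 : IntegrableOn (fun y => ρ.toFun j y * W x y) I01 :=
      intOn_bound ((ρ.measurable j).mul hWx) fun y hy => by
        rw [abs_mul]
        calc |ρ.toFun j y| * |W x y| ≤ 1 * Wmax :=
              mul_le_mul (abs_le.2 ⟨by linarith [fp_nonneg ρ j hy], fp_le_one ρ j hy⟩)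
                (hWb x y) (abs_nonneg _) zero_le_one
          _ = Wmax := one_mul _
    rw [← integral_sub hint1 hint2]
    have hb2 : ∀ᵐ y ∂(volume.restrict I01),
        ‖ρ'.toFun j y * W x y - ρ.toFun j y * W x y‖
          ≤ Wmax * |ρ'.toFun j y - ρ.toFun j y| := by
      refine ae_of_all _ fun y => ?_
      rw [Real.norm_eq_abs, show ρ'.toFun j y * W x y - ρ.toFun j y * W x y
          = (ρ'.toFun j y - ρ.toFun j y) * W x y by ring, abs_mul, mul_comm]
      exact mul_le_mul_of_nonneg_right (hWb x y) (abs_nonneg _)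
    have := norm_integral_le_of_norm_le ((hδint j).const_mul Wmax) hb2
    rw [Real.norm_eq_abs] at this
    calc |∫ y in I01, (ρ'.toFun j y * W x y - ρ.toFun j y * W x y)|
        ≤ ∫ y in I01, Wmax * |ρ'.toFun j y - ρ.toFun j y| := this
      _ = Wmax * δ j := by rw [MeasureTheory.integral_const_mul, hδval]
  have hGdiff : ∀ i j : Fin q,
      |(∫ x in I01, ρ'.toFun i x * ∫ y in I01, ρ'.toFun j y * W x y)
        - ∫ x in I01, ρ.toFun i x * ∫ y in I01, ρ.toFun j y * W x y|
        ≤ Wmax * a j * δ i + Wmax * δ j * b i := by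
    intro i j
    rw [← integral_sub (hKint ρ' ρ' i j) (hKint ρ ρ i j)]
    have hg : IntegrableOn (fun x => (Wmax * a j) * |ρ'.toFun i x - ρ.toFun i x|
        + (Wmax * δ j) * ρ'.toFun i x) I01 :=
      ((hδint i).const_mul _).add ((fp_int ρ' i).const_mul _)
    have hb3 : ∀ᵐ x ∂(volume.restrict I01),
        ‖ρ'.toFun i x * (∫ y in I01, ρ'.toFun j y * W x y)
          - ρ.toFun i x * ∫ y in I01, ρ.toFun j y * W x y‖
        ≤ (Wmax * a j) * |ρ'.toFun i x - ρ.toFun i x| + (Wmax * δ j) * ρ'.toFun i x := by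
      refine (ae_restrict_iff' measI01).2 (ae_of_all _ fun x hx => ?_)
      set K := ∫ y in I01, ρ.toFun j y * W x y
      set K' := ∫ y in I01, ρ'.toFun j y * W x y
      have hsplit : ρ'.toFun i x * K' - ρ.toFun i x * K
          = (ρ'.toFun i x - ρ.toFun i x) * K + ρ'.toFun i x * (K' - K) := by ring
      rw [Real.norm_eq_abs, hsplit]
      have hKa : |K| ≤ Wmax * a j := by
        have := hKb ρ j x; rw [hρ j] at this; exact this
      calc |(ρ'.toFun i x - ρ.toFun i x) * K + ρ'.toFun i x * (K' - K)|
          ≤ |(ρ'.toFun i x - ρ.toFun i x) * K| + |ρ'.toFun i x * (K' - K)| := abs_add_le _ _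
        _ = |ρ'.toFun i x - ρ.toFun i x| * |K| + ρ'.toFun i x * |K' - K| := by
            rw [abs_mul, abs_mul, abs_of_nonneg (fp_nonneg ρ' i hx)]
        _ ≤ |ρ'.toFun i x - ρ.toFun i x| * (Wmax * a j) + ρ'.toFun i x * (Wmax * δ j) := by
            refine add_le_add ?_ ?_
            · exact mul_le_mul_of_nonneg_left hKa (abs_nonneg _)
            · exact mul_le_mul_of_nonneg_left (hKdiff j x) (fp_nonneg ρ' i hx)
        _ = (Wmax * a j) * |ρ'.toFun i x - ρ.toFun i x| + (Wmax * δ j) * ρ'.toFun i x := by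
            ring
    have := norm_integral_le_of_norm_le hg hb3
    rw [Real.norm_eq_abs] at this
    refine le_trans this (le_of_eq ?_)
    rw [integral_add ((hδint i).const_mul _) ((fp_int ρ' i).const_mul _),
      MeasureTheory.integral_const_mul, MeasureTheory.integral_const_mul,
      hρ'int i, ← hδval i]
  -- assemble
  refine ⟨ρ', hρ'int, ?_⟩
  have key : |energy W J ρ' - energy W J ρ|
      ≤ ∑ i, ∑ j, Jmax * (Wmax * a j * δ i + Wmax * δ j * b i) := by
    rw [henergy ρ', henergy ρ]
    have heq : (- ∑ i, ∑ j, J i j * ∫ x in I01, ρ'.toFun i x * ∫ y in I01, ρ'.toFun j y * W x y)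
        - (- ∑ i, ∑ j, J i j * ∫ x in I01, ρ.toFun i x * ∫ y in I01, ρ.toFun j y * W x y)
        = ∑ i, ∑ j, J i j * ((∫ x in I01, ρ.toFun i x * ∫ y in I01, ρ.toFun j y * W x y)
            - ∫ x in I01, ρ'.toFun i x * ∫ y in I01, ρ'.toFun j y * W x y) := by
      rw [neg_sub_neg, ← Finset.sum_sub_distrib]
      refine Finset.sum_congr rfl fun i _ => ?_
      rw [← Finset.sum_sub_distrib]
      refine Finset.sum_congr rfl fun j _ => by ring
    rw [heq]
    refine le_trans (Finset.abs_sum_le_sum_abs _ _) (Finset.sum_le_sum fun i _ =>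
      le_trans (Finset.abs_sum_le_sum_abs _ _) (Finset.sum_le_sum fun j _ => ?_))
    rw [abs_mul]
    refine mul_le_mul (hJb i j) ?_ (abs_nonneg _) hJ0
    rw [abs_sub_comm]
    exact hGdiff i j
  refine le_trans key ?_
  have hexp : ∑ i, ∑ j, Jmax * (Wmax * a j * δ i + Wmax * δ j * b i)
      = Jmax * Wmax * ((∑ i, δ i) * (∑ j, a j) + (∑ i, b i) * (∑ j, δ j)) := by
    have h1 : (∑ i, δ i) * (∑ j, a j) = ∑ i, ∑ j, δ i * a j := Finset.sum_mul_sum _ _ _ _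
    have h2 : (∑ i, b i) * (∑ j, δ j) = ∑ i, ∑ j, b i * δ j := Finset.sum_mul_sum _ _ _ _
    rw [h1, h2, ← Finset.sum_add_distrib]
    rw [Finset.mul_sum]
    refine Finset.sum_congr rfl fun i _ => ?_
    rw [← Finset.sum_add_distrib, Finset.mul_sum]
    refine Finset.sum_congr rfl fun j _ => by ring
  rw [hexp, ha.2, hb.2, mul_one, one_mul]
  have : (∑ i, δ i) + (∑ j, δ j) ≤ 2 * n := by
    have := hδsum; linarith
  calc Jmax * Wmax * ((∑ i, δ i) + (∑ j, δ j)) ≤ Jmax * Wmax * (2 * n) := by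
        refine mul_le_mul_of_nonneg_left this (by positivity)
    _ = 2 * n * Wmax * Jmax := by ring


lemma part1 {q : ℕ} {x x' : Fin q → ℝ} (hx' : ∀ i, 0 ≤ x' i)
    (hs : ∑ i, x i = ∑ i, x' i) (a : Fin q → ℝ) (ha : IsDist a) (hax : ∀ i, x i ≤ a i) :
    ∃ b : Fin q → ℝ, IsDist b ∧ (∀ i, x' i ≤ b i) ∧
      ∑ i, |a i - b i| ≤ ∑ i, |x i - x' i| := by
  refine ⟨fun i => a i - x i + x' i,
    ⟨fun i => by show (0:ℝ) ≤ a i - x i + x' i; linarith [hax i, hx' i], ?_⟩,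
    fun i => by show x' i ≤ a i - x i + x' i; linarith [hax i], le_of_eq ?_⟩
  · rw [Finset.sum_add_distrib, Finset.sum_sub_distrib, ha.2, hs]; ring
  · exact Finset.sum_congr rfl fun i _ => congrArg abs (by ring)

lemma mgse_lb {q : ℕ} {W : ℝ → ℝ → ℝ} {J : Matrix (Fin q) (Fin q) ℝ} {Wmax Jmax : ℝ}
    (hWb : ∀ s t, |W s t| ≤ Wmax) (hJb : ∀ i j, |J i j| ≤ Jmax)
    (a : Fin q → ℝ) (ha : IsDist a) :
    -((q : ℝ)^2 * (Wmax * Jmax)) ≤ mgse W J a := by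
  refine le_csInf ⟨energy W J (constFP a ha), constFP a ha, constFP_integral a ha, rfl⟩ ?_
  rintro e ⟨ρ, -, rfl⟩
  exact energy_lb hWb hJb ρ

lemma mgse_le {q : ℕ} {W : ℝ → ℝ → ℝ} (hWm : Measurable (Function.uncurry W))
    {J : Matrix (Fin q) (Fin q) ℝ} {Wmax Jmax : ℝ}
    (hWb : ∀ s t, |W s t| ≤ Wmax) (hJb : ∀ i j, |J i j| ≤ Jmax)
    {a b : Fin q → ℝ} (ha : IsDist a) (hb : IsDist b) :
    mgse W J b ≤ mgse W J a + 2 * (∑ i, |a i - b i|) * Wmax * Jmax := by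
  have hbdd : BddBelow {e | ∃ ρ : FracPartition q,
      (∀ i, (∫ x in I01, ρ.toFun i x) = b i) ∧ e = energy W J ρ} :=
    ⟨-((q : ℝ)^2 * (Wmax * Jmax)), by rintro e ⟨ρ, -, rfl⟩; exact energy_lb hWb hJb ρ⟩
  have hne : {e | ∃ ρ : FracPartition q,
      (∀ i, (∫ x in I01, ρ.toFun i x) = a i) ∧ e = energy W J ρ}.Nonempty :=
    ⟨energy W J (constFP a ha), constFP a ha, constFP_integral a ha, rfl⟩
  have hstep : ∀ e ∈ {e | ∃ ρ : FracPartition q,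
      (∀ i, (∫ x in I01, ρ.toFun i x) = a i) ∧ e = energy W J ρ},
      mgse W J b - 2 * (∑ i, |a i - b i|) * Wmax * Jmax ≤ e := by
    rintro e ⟨ρ, hρ, rfl⟩
    obtain ⟨ρ', hρ', hcl⟩ := exists_close_fp hWm hWb hJb ha hb ρ hρ
    have h1 : mgse W J b ≤ energy W J ρ' := csInf_le hbdd ⟨ρ', hρ', rfl⟩
    have h2 : energy W J ρ' - energy W J ρ ≤ 2 * (∑ i, |a i - b i|) * Wmax * Jmax :=
      le_trans (le_abs_self _) hcl
    linarith
  have h3 : mgse W J b - 2 * (∑ i, |a i - b i|) * Wmax * Jmax ≤ mgse W J a :=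
    le_csInf hne hstep
  linarith

lemma ltgseV_le {q : ℕ} (hq : 1 ≤ q) {W : ℝ → ℝ → ℝ} (hWm : Measurable (Function.uncurry W))
    {J : Matrix (Fin q) (Fin q) ℝ} {Wmax Jmax : ℝ}
    (hWb : ∀ s t, |W s t| ≤ Wmax) (hJb : ∀ i j, |J i j| ≤ Jmax)
    {h : ℝ} (hh : h ≤ 1) {x x' : Fin q → ℝ} (hx : ∀ i, 0 ≤ x i) (hx' : ∀ i, 0 ≤ x' i)
    (hxs : ∑ i, x i = h) (hx's : ∑ i, x' i = h) :
    ltgseV W J x' ≤ ltgseV W J x + 2 * (∑ i, |x i - x' i|) * Wmax * Jmax := by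
  have hW0 : 0 ≤ Wmax := le_trans (abs_nonneg _) (hWb 0 0)
  have i0 : Fin q := ⟨0, hq⟩
  have hJ0 : 0 ≤ Jmax := le_trans (abs_nonneg _) (hJb i0 i0)
  have hq0 : (q : ℝ) ≠ 0 := Nat.cast_ne_zero.2 (by omega)
  have hslack : 0 ≤ (1 - h) / q := div_nonneg (by linarith) (Nat.cast_nonneg q)
  have hbdd : BddBelow {e | ∃ a : Fin q → ℝ, IsDist a ∧ (∀ i, x' i ≤ a i) ∧ e = mgse W J a} :=
    ⟨-((q : ℝ)^2 * (Wmax * Jmax)), by rintro e ⟨a, ha, -, rfl⟩; exact mgse_lb hWb hJb a ha⟩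
  have hne : {e | ∃ a : Fin q → ℝ, IsDist a ∧ (∀ i, x i ≤ a i) ∧ e = mgse W J a}.Nonempty := by
    refine ⟨mgse W J (fun i => x i + (1 - h) / q),
      ⟨fun i => x i + (1 - h) / q, ⟨fun i => by linarith [hx i], ?_⟩,
        fun i => by linarith, rfl⟩⟩
    rw [Finset.sum_add_distrib, hxs, Finset.sum_const, Finset.card_univ, Fintype.card_fin,
      nsmul_eq_mul]
    rw [mul_comm, div_mul_cancel₀ _ hq0]; ring
  have hstep : ∀ e ∈ {e | ∃ a : Fin q → ℝ, IsDist a ∧ (∀ i, x i ≤ a i) ∧ e = mgse W J a},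
      ltgseV W J x' - 2 * (∑ i, |x i - x' i|) * Wmax * Jmax ≤ e := by
    rintro e ⟨a, ha, hax, rfl⟩
    obtain ⟨b, hbd, hbx', hbl⟩ := part1 hx' (by rw [hxs, hx's]) a ha hax
    have h1 : ltgseV W J x' ≤ mgse W J b := csInf_le hbdd ⟨b, hbd, hbx', rfl⟩
    have h2 := mgse_le hWm hWb hJb ha hbd
    have h3 : 2 * (∑ i, |a i - b i|) * Wmax * Jmax
        ≤ 2 * (∑ i, |x i - x' i|) * Wmax * Jmax :=
      mul_le_mul_of_nonneg_right
        (mul_le_mul_of_nonneg_right (by linarith) hW0) hJ0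
    linarith
  have h4 : ltgseV W J x' - 2 * (∑ i, |x i - x' i|) * Wmax * Jmax ≤ ltgseV W J x :=
    le_csInf hne hstep
  linarith

end Stmt9Aux

theorem stmt9 (q : ℕ) (hq : 1 ≤ q) (h : ℝ) (hh : h ≤ 1)
    (x x' : Fin q → ℝ) (hx : ∀ i, 0 ≤ x i) (hx' : ∀ i, 0 ≤ x' i)
    (hxs : ∑ i, x i = h) (hx's : ∑ i, x' i = h)
    (W : ℝ → ℝ → ℝ) (hW : IsGraphon W) (J : Matrix (Fin q) (Fin q) ℝ) (hJ : J.IsSymm)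
    (Wmax Jmax : ℝ) (hWb : ∀ s t, |W s t| ≤ Wmax) (hJb : ∀ i j, |J i j| ≤ Jmax) :
    (∀ a : Fin q → ℝ, IsDist a → (∀ i, x i ≤ a i) →
      ∃ b : Fin q → ℝ, IsDist b ∧ (∀ i, x' i ≤ b i) ∧
        ∑ i, |a i - b i| ≤ ∑ i, |x i - x' i|) ∧
    |ltgseV W J x - ltgseV W J x'| ≤ 2 * (∑ i, |x i - x' i|) * Wmax * Jmax := by
  obtain ⟨hWm, -, -⟩ := hW
  constructor
  · exact fun a ha hax => Stmt9Aux.part1 hx' (by rw [hxs, hx's]) a ha hax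
  · have h1 := Stmt9Aux.ltgseV_le hq hWm hWb hJb hh hx hx' hxs hx's
    have h2 := Stmt9Aux.ltgseV_le hq hWm hWb hJb hh hx' hx hx's hxs
    have hsymm : ∑ i, |x' i - x i| = ∑ i, |x i - x' i| :=
      Finset.sum_congr rfl fun i _ => abs_sub_comm _ _
    rw [hsymm] at h2
    rw [abs_sub_le_iff]
    exact ⟨by linarith, by linarith⟩
end
end

section
/- Let I be a bounded interval and (W_n) a sequence of graphons with values in I. Suppose 0 ≤ h₁ < h₂ ≤ 1. If for every q ≥ 1 and every symmetric q×q matrix J the sequence (E^{h₂/q}(W_n, J))_n converges, then for every q ≥ 1 and every symmetric q×q matrix J the sequence (E^{h₁/q}(W_n, J))_n converges. -/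
open MeasureTheory Filter

noncomputable section

namespace StmtAux


lemma measurableSet_I01 : MeasurableSet I01 := measurableSet_Icc

lemma volume_I01 : volume I01 = 1 := by
  rw [I01, Real.volume_Icc]; norm_num

lemma volume_I01_ne_top : volume I01 ≠ ⊤ := by rw [volume_I01]; simp

lemma volume_I01_lt_top : volume I01 < ⊤ := by rw [volume_I01]; simp

lemma toReal_volume_I01 : (volume I01).toReal = 1 := by rw [volume_I01]; simp

/-- Integrability of bounded measurable functions on `I01`. -/
lemma integrableOn_I01 {f : ℝ → ℝ} (hf : Measurable f) {c : ℝ}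
    (hb : ∀ x ∈ I01, |f x| ≤ c) : IntegrableOn f I01 := by
  refine Measure.integrableOn_of_bounded (M := c) volume_I01_ne_top hf.aestronglyMeasurable ?_
  rw [ae_restrict_iff' measurableSet_I01]
  exact Filter.Eventually.of_forall fun x hx => hb x hx

lemma abs_setIntegral_le {f : ℝ → ℝ} {c : ℝ}
    (hf : Measurable f) (hb : ∀ x ∈ I01, |f x| ≤ c) :
    |∫ x in I01, f x| ≤ c := by
  have := norm_setIntegral_le_of_norm_le_const (μ := volume) (s := I01) (f := f) (C := c)
    volume_I01_lt_top (fun x hx => hb x hx)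
  simpa [measureReal_def, toReal_volume_I01] using this

section Inn

variable (W : ℝ → ℝ → ℝ)

/-- inner kernel integral -/
def Kk (g : ℝ → ℝ) (x : ℝ) : ℝ := ∫ y in I01, g y * W x y

def inn (f g : ℝ → ℝ) : ℝ := ∫ x in I01, f x * Kk W g x

variable {W}
variable (hW : Measurable (Function.uncurry W)) {M : ℝ} (hM : ∀ x y, |W x y| ≤ M)

include hM in
lemma M_nonneg : 0 ≤ M := le_trans (abs_nonneg _) (hM 0 0)

include hW in
lemma measurable_W_left (x : ℝ) : Measurable (W x) := hW.of_uncurry_left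

include hW in
lemma Kk_measurable {g : ℝ → ℝ} (hg : Measurable g) : Measurable (Kk W g) := by
  have : StronglyMeasurable fun p : ℝ × ℝ => g p.2 * W p.1 p.2 :=
    ((hg.comp measurable_snd).mul hW).stronglyMeasurable
  exact (this.integral_prod_right' (ν := volume.restrict I01)).measurable

include hW hM in
lemma Kk_bound {g : ℝ → ℝ} (hg : Measurable g) {c : ℝ} (hc : 0 ≤ c)
    (hb : ∀ y ∈ I01, |g y| ≤ c) (x : ℝ) : |Kk W g x| ≤ c * M := by
  refine abs_setIntegral_le (hg.mul (measurable_W_left hW x)) (fun y hy => ?_)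
  rw [abs_mul]
  exact mul_le_mul (hb y hy) (hM x y) (abs_nonneg _) hc

include hW hM in
lemma inn_bound {f g : ℝ → ℝ} (hf : Measurable f) (hg : Measurable g)
    {c d : ℝ} (hc : 0 ≤ c) (hd : 0 ≤ d)
    (hbf : ∀ x ∈ I01, |f x| ≤ c) (hbg : ∀ y ∈ I01, |g y| ≤ d) :
    |inn W f g| ≤ c * (d * M) := by
  refine abs_setIntegral_le ((hf.mul (Kk_measurable hW hg))) (fun x hx => ?_)
  rw [abs_mul]
  exact mul_le_mul (hbf x hx) (Kk_bound hW hM hg hd hbg x) (abs_nonneg _) hc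

include hW hM in
lemma integrableOn_mul_Kk {f g : ℝ → ℝ} (hf : Measurable f) (hg : Measurable g)
    {c d : ℝ} (hc : 0 ≤ c) (hd : 0 ≤ d)
    (hbf : ∀ x ∈ I01, |f x| ≤ c) (hbg : ∀ y ∈ I01, |g y| ≤ d) :
    IntegrableOn (fun x => f x * Kk W g x) I01 := by
  refine integrableOn_I01 (hf.mul (Kk_measurable hW hg)) (c := c * (d * M)) (fun x hx => ?_)
  rw [abs_mul]
  exact mul_le_mul (hbf x hx) (Kk_bound hW hM hg hd hbg x) (abs_nonneg _) hc

lemma Kk_smul (r : ℝ) (g : ℝ → ℝ) (x : ℝ) :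
    Kk W (fun y => r * g y) x = r * Kk W g x := by
  unfold Kk
  rw [← integral_const_mul]
  congr 1; funext y; ring

lemma Kk_div (r : ℝ) (g : ℝ → ℝ) (x : ℝ) :
    Kk W (fun y => g y / r) x = Kk W g x / r := by
  unfold Kk
  rw [← integral_div]
  congr 1; funext y; ring

include hW hM in
lemma Kk_sum {ι : Type*} (s : Finset ι) (g : ι → ℝ → ℝ)
    (hg : ∀ β ∈ s, Measurable (g β)) (hbg : ∀ β ∈ s, ∀ y ∈ I01, |g β y| ≤ 1) (x : ℝ) :
    Kk W (fun y => ∑ β ∈ s, g β y) x = ∑ β ∈ s, Kk W (g β) x := by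
  unfold Kk
  rw [← integral_finset_sum]
  · congr 1; funext y; rw [Finset.sum_mul]
  · intro β hβ
    refine integrableOn_I01 ((hg β hβ).mul (measurable_W_left hW x)) (c := 1 * M)
      (fun y hy => ?_)
    rw [abs_mul]
    exact mul_le_mul (hbg β hβ y hy) (hM x y) (abs_nonneg _) zero_le_one

include hW hM in
lemma inn_sum_left {ι : Type*} (s : Finset ι) (f : ι → ℝ → ℝ) (g : ℝ → ℝ)
    (hf : ∀ α ∈ s, Measurable (f α)) (hbf : ∀ α ∈ s, ∀ x ∈ I01, |f α x| ≤ 1)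
    (hg : Measurable g) (hbg : ∀ y ∈ I01, |g y| ≤ 1) :
    inn W (fun x => ∑ α ∈ s, f α x) g = ∑ α ∈ s, inn W (f α) g := by
  unfold inn
  rw [← integral_finset_sum]
  · congr 1; funext x; rw [Finset.sum_mul]
  · intro α hα
    exact integrableOn_mul_Kk hW hM (hf α hα) hg zero_le_one zero_le_one (hbf α hα) hbg

include hW hM in
lemma inn_sum_right {ι : Type*} (s : Finset ι) (f : ℝ → ℝ) (g : ι → ℝ → ℝ)
    (hf : Measurable f) (hbf : ∀ x ∈ I01, |f x| ≤ 1)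
    (hg : ∀ β ∈ s, Measurable (g β)) (hbg : ∀ β ∈ s, ∀ y ∈ I01, |g β y| ≤ 1) :
    inn W f (fun y => ∑ β ∈ s, g β y) = ∑ β ∈ s, inn W f (g β) := by
  unfold inn
  have hK : ∀ x, Kk W (fun y => ∑ β ∈ s, g β y) x = ∑ β ∈ s, Kk W (g β) x :=
    Kk_sum hW hM s g hg hbg
  calc ∫ x in I01, f x * Kk W (fun y => ∑ β ∈ s, g β y) x
      = ∫ x in I01, ∑ β ∈ s, f x * Kk W (g β) x := by
        congr 1; funext x; rw [hK x, Finset.mul_sum]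
    _ = ∑ β ∈ s, ∫ x in I01, f x * Kk W (g β) x := by
        rw [integral_finset_sum]
        intro β hβ
        exact integrableOn_mul_Kk hW hM hf (hg β hβ) zero_le_one zero_le_one hbf (hbg β hβ)

lemma inn_smul_left (r : ℝ) (f g : ℝ → ℝ) :
    inn W (fun x => r * f x) g = r * inn W f g := by
  unfold inn
  rw [← integral_const_mul]
  congr 1; funext x; ring

lemma inn_div_left (r : ℝ) (f g : ℝ → ℝ) :
    inn W (fun x => f x / r) g = inn W f g / r := by
  unfold inn
  rw [← integral_div]
  congr 1; funext x; ring

lemma inn_div_right (r : ℝ) (f g : ℝ → ℝ) :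
    inn W f (fun y => g y / r) = inn W f g / r := by
  unfold inn
  rw [← integral_div]
  have : ∀ x, Kk W (fun y => g y / r) x = Kk W g x / r := Kk_div r g
  congr 1; funext x; rw [this x]; ring

include hW hM in
lemma inn_sub_left {f₁ f₂ g : ℝ → ℝ} (hf₁ : Measurable f₁) (hf₂ : Measurable f₂)
    (hg : Measurable g) {c₁ c₂ : ℝ} (hc₁ : 0 ≤ c₁) (hc₂ : 0 ≤ c₂)
    (hb₁ : ∀ x ∈ I01, |f₁ x| ≤ c₁) (hb₂ : ∀ x ∈ I01, |f₂ x| ≤ c₂)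
    (hbg : ∀ y ∈ I01, |g y| ≤ 1) :
    inn W (fun x => f₁ x - f₂ x) g = inn W f₁ g - inn W f₂ g := by
  unfold inn
  rw [← integral_sub]
  · congr 1; funext x; ring
  · exact integrableOn_mul_Kk hW hM hf₁ hg hc₁ zero_le_one hb₁ hbg
  · exact integrableOn_mul_Kk hW hM hf₂ hg hc₂ zero_le_one hb₂ hbg

include hW hM in
lemma inn_sub_right {f g₁ g₂ : ℝ → ℝ} (hf : Measurable f) (hg₁ : Measurable g₁)
    (hg₂ : Measurable g₂) {c₁ c₂ : ℝ} (hc₁ : 0 ≤ c₁) (hc₂ : 0 ≤ c₂)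
    (hbf : ∀ x ∈ I01, |f x| ≤ 1)
    (hb₁ : ∀ y ∈ I01, |g₁ y| ≤ c₁) (hb₂ : ∀ y ∈ I01, |g₂ y| ≤ c₂) :
    inn W f (fun y => g₁ y - g₂ y) = inn W f g₁ - inn W f g₂ := by
  unfold inn
  have hK : ∀ x, Kk W (fun y => g₁ y - g₂ y) x = Kk W g₁ x - Kk W g₂ x := by
    intro x
    unfold Kk
    rw [← integral_sub]
    · congr 1; funext y; ring
    · refine integrableOn_I01 (hg₁.mul (measurable_W_left hW x)) (c := c₁ * M) (fun y hy => ?_)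
      rw [abs_mul]; exact mul_le_mul (hb₁ y hy) (hM x y) (abs_nonneg _) hc₁
    · refine integrableOn_I01 (hg₂.mul (measurable_W_left hW x)) (c := c₂ * M) (fun y hy => ?_)
      rw [abs_mul]; exact mul_le_mul (hb₂ y hy) (hM x y) (abs_nonneg _) hc₂
  rw [← integral_sub]
  · congr 1; funext x; rw [hK x]; ring
  · exact integrableOn_mul_Kk hW hM hf hg₁ zero_le_one hc₁ hbf hb₁
  · exact integrableOn_mul_Kk hW hM hf hg₂ zero_le_one hc₂ hbf hb₂

include hW hM in
lemma inn_diff_bound {f f' g g' : ℝ → ℝ} {s : ℝ} (hs : 0 ≤ s)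
    (hf : Measurable f) (hf' : Measurable f') (hg : Measurable g) (hg' : Measurable g')
    (hbf : ∀ x ∈ I01, |f x| ≤ 1) (hbf' : ∀ x ∈ I01, |f' x| ≤ 1)
    (hbg : ∀ y ∈ I01, |g y| ≤ 1) (hbg' : ∀ y ∈ I01, |g' y| ≤ 1)
    (hdf : ∀ x ∈ I01, |f x - f' x| ≤ s) (hdg : ∀ y ∈ I01, |g y - g' y| ≤ s) :
    |inn W f g - inn W f' g'| ≤ 2 * (s * M) := by
  have e1 : inn W (fun x => f x - f' x) g = inn W f g - inn W f' g :=
    inn_sub_left hW hM hf hf' hg zero_le_one zero_le_one hbf hbf' hbg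
  have e2 : inn W f' (fun y => g y - g' y) = inn W f' g - inn W f' g' :=
    inn_sub_right hW hM hf' hg hg' zero_le_one zero_le_one hbf' hbg hbg'
  have key : inn W f g - inn W f' g' =
      inn W (fun x => f x - f' x) g + inn W f' (fun y => g y - g' y) := by
    rw [e1, e2]; ring
  rw [key]
  have b1 : |inn W (fun x => f x - f' x) g| ≤ s * (1 * M) :=
    inn_bound hW hM (hf.sub hf') hg hs zero_le_one hdf hbg
  have b2 : |inn W f' (fun y => g y - g' y)| ≤ 1 * (s * M) :=
    inn_bound hW hM hf' (hg.sub hg') zero_le_one hs hbf' hdg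
  calc |inn W (fun x => f x - f' x) g + inn W f' (fun y => g y - g' y)|
      ≤ |inn W (fun x => f x - f' x) g| + |inn W f' (fun y => g y - g' y)| := abs_add_le _ _
    _ ≤ s * (1 * M) + 1 * (s * M) := add_le_add b1 b2
    _ = 2 * (s * M) := by ring

end Inn


section Energy

variable {q N : ℕ} {W : ℝ → ℝ → ℝ}
variable (hW : Measurable (Function.uncurry W)) {M : ℝ} (hM : ∀ x y, |W x y| ≤ M)

lemma part_bd (ρ : FracPartition q) (i : Fin q) : ∀ x ∈ I01, |ρ.toFun i x| ≤ 1 := by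
  intro x hx
  have h := ρ.mem_I01 i x hx
  rw [I01, Set.mem_Icc] at h
  rw [abs_le]; exact ⟨by linarith [h.1], h.2⟩

lemma part_nonneg (ρ : FracPartition q) (i : Fin q) {x : ℝ} (hx : x ∈ I01) :
    0 ≤ ρ.toFun i x := (ρ.mem_I01 i x hx).1

lemma part_le_one (ρ : FracPartition q) (i : Fin q) {x : ℝ} (hx : x ∈ I01) :
    ρ.toFun i x ≤ 1 := (ρ.mem_I01 i x hx).2

lemma energy_eq_inn (J : Matrix (Fin q) (Fin q) ℝ) (ρ : FracPartition q) :
    energy W J ρ = -∑ i, ∑ j, J i j * inn W (ρ.toFun i) (ρ.toFun j) := by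
  unfold energy inn Kk
  congr 1
  refine Finset.sum_congr rfl fun i _ => Finset.sum_congr rfl fun j _ => ?_
  congr 2
  funext x
  rw [← integral_const_mul]
  congr 1; funext y; ring

include hW hM in
lemma energy_abs_bound (J : Matrix (Fin q) (Fin q) ℝ) (ρ : FracPartition q) :
    |energy W J ρ| ≤ (∑ i, ∑ j, |J i j|) * M := by
  rw [energy_eq_inn, abs_neg]
  calc |∑ i, ∑ j, J i j * inn W (ρ.toFun i) (ρ.toFun j)|
      ≤ ∑ i, |∑ j, J i j * inn W (ρ.toFun i) (ρ.toFun j)| := Finset.abs_sum_le_sum_abs _ _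
    _ ≤ ∑ i, ∑ j, |J i j * inn W (ρ.toFun i) (ρ.toFun j)| :=
        Finset.sum_le_sum fun i _ => Finset.abs_sum_le_sum_abs _ _
    _ ≤ ∑ i, ∑ j, |J i j| * M := by
        refine Finset.sum_le_sum fun i _ => Finset.sum_le_sum fun j _ => ?_
        rw [abs_mul]
        have hb := inn_bound hW hM (ρ.measurable i) (ρ.measurable j) zero_le_one zero_le_one
          (part_bd ρ i) (part_bd ρ j)
        calc |J i j| * |inn W (ρ.toFun i) (ρ.toFun j)| ≤ |J i j| * (1 * (1 * M)) :=
              mul_le_mul_of_nonneg_left (by simpa using hb) (abs_nonneg _)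
          _ = |J i j| * M := by ring
    _ = (∑ i, ∑ j, |J i j|) * M := by rw [Finset.sum_mul]; congr 1; funext i; rw [Finset.sum_mul]

include hW hM in
lemma energy_diff_bound (J : Matrix (Fin q) (Fin q) ℝ) (ρ σ : FracPartition q) {s : ℝ}
    (hs : 0 ≤ s) (hd : ∀ i, ∀ x ∈ I01, |ρ.toFun i x - σ.toFun i x| ≤ s) :
    |energy W J ρ - energy W J σ| ≤ (∑ i, ∑ j, |J i j|) * (2 * (s * M)) := by
  rw [energy_eq_inn, energy_eq_inn]
  have key : -∑ i, ∑ j, J i j * inn W (ρ.toFun i) (ρ.toFun j) -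
      -∑ i, ∑ j, J i j * inn W (σ.toFun i) (σ.toFun j) =
      ∑ i, ∑ j, J i j * (inn W (σ.toFun i) (σ.toFun j) - inn W (ρ.toFun i) (ρ.toFun j)) := by
    rw [neg_sub_neg, ← Finset.sum_sub_distrib]
    refine Finset.sum_congr rfl fun i _ => ?_
    rw [← Finset.sum_sub_distrib]
    refine Finset.sum_congr rfl fun j _ => by ring
  rw [key]
  calc |∑ i, ∑ j, J i j * (inn W (σ.toFun i) (σ.toFun j) - inn W (ρ.toFun i) (ρ.toFun j))|
      ≤ ∑ i, ∑ j, |J i j * (inn W (σ.toFun i) (σ.toFun j) - inn W (ρ.toFun i) (ρ.toFun j))| := by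
        refine le_trans (Finset.abs_sum_le_sum_abs _ _) (Finset.sum_le_sum fun i _ =>
          Finset.abs_sum_le_sum_abs _ _)
    _ ≤ ∑ i, ∑ j, |J i j| * (2 * (s * M)) := by
        refine Finset.sum_le_sum fun i _ => Finset.sum_le_sum fun j _ => ?_
        rw [abs_mul]
        refine mul_le_mul_of_nonneg_left ?_ (abs_nonneg _)
        exact inn_diff_bound hW hM hs (σ.measurable i) (ρ.measurable i) (σ.measurable j)
          (ρ.measurable j) (part_bd σ i) (part_bd ρ i) (part_bd σ j) (part_bd ρ j)
          (fun x hx => by rw [abs_sub_comm]; exact hd i x hx)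
          (fun x hx => by rw [abs_sub_comm]; exact hd j x hx)
    _ = (∑ i, ∑ j, |J i j|) * (2 * (s * M)) := by
        rw [Finset.sum_mul]; congr 1; funext i; rw [Finset.sum_mul]

/-- The constant partition realizing a distribution `a`. -/
def constPart (a : Fin q → ℝ) (h0 : ∀ i, 0 ≤ a i) (h1 : ∑ i, a i = 1) : FracPartition q where
  toFun i _ := a i
  measurable _ := measurable_const
  mem_I01 i x _ := by
    refine Set.mem_Icc.mpr ⟨h0 i, ?_⟩
    calc a i ≤ ∑ j, a j := Finset.single_le_sum (fun j _ => h0 j) (Finset.mem_univ i)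
      _ = 1 := h1
  sum_one _ _ := h1

lemma constPart_integral (a : Fin q → ℝ) (h0 : ∀ i, 0 ≤ a i) (h1 : ∑ i, a i = 1) (i : Fin q) :
    (∫ x in I01, (constPart a h0 h1).toFun i x) = a i := by
  simp [constPart, measureReal_def, toReal_volume_I01]

/-- Mixing a partition with a constant partition. -/
def mixPart (s : ℝ) (hs0 : 0 ≤ s) (hs1 : s ≤ 1) (c : Fin q → ℝ) (hc0 : ∀ i, 0 ≤ c i)
    (hc1 : ∑ i, c i = 1) (ρ : FracPartition q) : FracPartition q where
  toFun i x := (1 - s) * ρ.toFun i x + s * c i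
  measurable i := (measurable_const.mul (ρ.measurable i)).add measurable_const
  mem_I01 i x hx := by
    show (1 - s) * ρ.toFun i x + s * c i ∈ I01
    have h := ρ.mem_I01 i x hx
    rw [I01, Set.mem_Icc] at h
    have hci : c i ≤ 1 := by
      calc c i ≤ ∑ j, c j := Finset.single_le_sum (fun j _ => hc0 j) (Finset.mem_univ i)
        _ = 1 := hc1
    have h1 : (0:ℝ) ≤ (1 - s) * ρ.toFun i x := mul_nonneg (by linarith) h.1
    have h2 : (0:ℝ) ≤ s * c i := mul_nonneg hs0 (hc0 i)
    refine Set.mem_Icc.mpr ⟨by linarith, ?_⟩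
    nlinarith [h.1, h.2, hc0 i]
  sum_one x hx := by
    rw [Finset.sum_add_distrib, ← Finset.mul_sum, ← Finset.mul_sum, ρ.sum_one x hx, hc1]
    ring

lemma mixPart_integral (s : ℝ) (hs0 : 0 ≤ s) (hs1 : s ≤ 1) (c : Fin q → ℝ)
    (hc0 : ∀ i, 0 ≤ c i) (hc1 : ∑ i, c i = 1) (ρ : FracPartition q) (i : Fin q) :
    (∫ x in I01, (mixPart s hs0 hs1 c hc0 hc1 ρ).toFun i x) =
      (1 - s) * (∫ x in I01, ρ.toFun i x) + s * c i := by
  show (∫ x in I01, ((1 - s) * ρ.toFun i x + s * c i)) = _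
  rw [integral_add]
  · rw [integral_const_mul]
    congr 1
    rw [setIntegral_const, measureReal_def, toReal_volume_I01, smul_eq_mul, one_mul]
  · exact ((integrableOn_I01 (ρ.measurable i) (part_bd ρ i)).const_mul _)
  · exact integrableOn_const volume_I01_ne_top

/-- Merging a partition along a map of indices. -/
def mergePart (φ : Fin N → Fin q) (ρ : FracPartition N) : FracPartition q where
  toFun i x := ∑ α ∈ Finset.univ.filter (fun α => φ α = i), ρ.toFun α x
  measurable i := Finset.measurable_sum _ fun α _ => ρ.measurable α
  mem_I01 i x hx := by
    constructor
    · exact Finset.sum_nonneg fun α _ => part_nonneg ρ α hx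
    · calc ∑ α ∈ Finset.univ.filter (fun α => φ α = i), ρ.toFun α x
          ≤ ∑ α, ρ.toFun α x := Finset.sum_le_sum_of_subset_of_nonneg
            (Finset.filter_subset _ _) (fun α _ _ => part_nonneg ρ α hx)
        _ = 1 := ρ.sum_one x hx
  sum_one x hx := by
    rw [Finset.sum_fiberwise Finset.univ φ (fun α => ρ.toFun α x)]
    exact ρ.sum_one x hx

lemma mergePart_integral (φ : Fin N → Fin q) (ρ : FracPartition N) (i : Fin q) :
    (∫ x in I01, (mergePart φ ρ).toFun i x) =
      ∑ α ∈ Finset.univ.filter (fun α => φ α = i), ∫ x in I01, ρ.toFun α x := by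
  show (∫ x in I01, ∑ α ∈ Finset.univ.filter (fun α => φ α = i), ρ.toFun α x) = _
  exact integral_finset_sum _ fun α _ => integrableOn_I01 (ρ.measurable α) (part_bd ρ α)

/-- Splitting a partition along a map of indices, dividing each class evenly. -/
def scalePart (φ : Fin N → Fin q) (m : Fin q → ℕ) (hm : ∀ i, 1 ≤ m i)
    (hcard : ∀ i, (Finset.univ.filter fun α => φ α = i).card = m i)
    (ρ : FracPartition q) : FracPartition N where
  toFun α x := ρ.toFun (φ α) x / (m (φ α) : ℝ)
  measurable α := (ρ.measurable (φ α)).div_const _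
  mem_I01 α x hx := by
    have hmpos : (0:ℝ) < (m (φ α) : ℝ) := by
      have := hm (φ α)
      exact_mod_cast Nat.lt_of_lt_of_le Nat.zero_lt_one this
    show ρ.toFun (φ α) x / (m (φ α) : ℝ) ∈ I01
    refine Set.mem_Icc.mpr ⟨?_, ?_⟩
    · exact div_nonneg (part_nonneg ρ _ hx) (le_of_lt hmpos)
    · rw [div_le_one hmpos]
      calc ρ.toFun (φ α) x ≤ 1 := part_le_one ρ _ hx
        _ ≤ (m (φ α) : ℝ) := by exact_mod_cast hm (φ α)
  sum_one x hx := by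
    rw [← Finset.sum_fiberwise Finset.univ φ (fun α => ρ.toFun (φ α) x / (m (φ α) : ℝ))]
    have : ∀ i : Fin q, ∑ α ∈ Finset.univ.filter (fun α => φ α = i),
        ρ.toFun (φ α) x / (m (φ α) : ℝ) = ρ.toFun i x := by
      intro i
      have hmne : ((m i : ℝ)) ≠ 0 := by
        have := hm i; positivity
      rw [Finset.sum_congr rfl (fun α hα => by
        rw [(Finset.mem_filter.mp hα).2])]
      rw [Finset.sum_const, hcard i, nsmul_eq_mul, mul_div_cancel₀ _ hmne]
    rw [Finset.sum_congr rfl fun i _ => this i]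
    exact ρ.sum_one x hx

lemma scalePart_integral (φ : Fin N → Fin q) (m : Fin q → ℕ) (hm : ∀ i, 1 ≤ m i)
    (hcard : ∀ i, (Finset.univ.filter fun α => φ α = i).card = m i)
    (ρ : FracPartition q) (α : Fin N) :
    (∫ x in I01, (scalePart φ m hm hcard ρ).toFun α x) =
      (∫ x in I01, ρ.toFun (φ α) x) / (m (φ α) : ℝ) := by
  have : (∫ x in I01, ρ.toFun (φ α) x / (m (φ α) : ℝ)) =
      (∫ x in I01, ρ.toFun (φ α) x) / (m (φ α) : ℝ) := integral_div _ _
  exact this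

end Energy

section Transfer

variable {q N : ℕ} {W : ℝ → ℝ → ℝ}
variable (hW : Measurable (Function.uncurry W)) {M : ℝ} (hM : ∀ x y, |W x y| ≤ M)

include hW hM in
lemma energy_merge (J : Matrix (Fin q) (Fin q) ℝ) (φ : Fin N → Fin q) (ρ : FracPartition N) :
    energy W (J.submatrix φ φ) ρ = energy W J (mergePart φ ρ) := by
  rw [energy_eq_inn, energy_eq_inn]
  congr 1
  have hmm : ∀ j, Measurable ((mergePart φ ρ).toFun j) := (mergePart φ ρ).measurable
  have hmb : ∀ j, ∀ x ∈ I01, |(mergePart φ ρ).toFun j x| ≤ 1 := part_bd _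
  have step1 : ∀ α : Fin N, (∑ β, (J.submatrix φ φ) α β * inn W (ρ.toFun α) (ρ.toFun β))
      = ∑ j, J (φ α) j * inn W (ρ.toFun α) ((mergePart φ ρ).toFun j) := by
    intro α
    rw [← Finset.sum_fiberwise Finset.univ φ
      (fun β => (J.submatrix φ φ) α β * inn W (ρ.toFun α) (ρ.toFun β))]
    refine Finset.sum_congr rfl fun j _ => ?_
    rw [Finset.sum_congr rfl (fun β hβ => by
      rw [Matrix.submatrix_apply, (Finset.mem_filter.mp hβ).2] :
      ∀ β ∈ Finset.univ.filter (fun β => φ β = j),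
        (J.submatrix φ φ) α β * inn W (ρ.toFun α) (ρ.toFun β)
        = J (φ α) j * inn W (ρ.toFun α) (ρ.toFun β))]
    rw [← Finset.mul_sum]
    congr 1
    rw [← inn_sum_right hW hM _ (ρ.toFun α) (fun β => ρ.toFun β)
      (ρ.measurable α) (part_bd ρ α) (fun β _ => ρ.measurable β) (fun β _ => part_bd ρ β)]
    rfl
  rw [Finset.sum_congr rfl fun α _ => step1 α]
  rw [← Finset.sum_fiberwise Finset.univ φ
    (fun α => ∑ j, J (φ α) j * inn W (ρ.toFun α) ((mergePart φ ρ).toFun j))]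
  refine Finset.sum_congr rfl fun i _ => ?_
  rw [Finset.sum_congr rfl (fun α hα => by
    rw [(Finset.mem_filter.mp hα).2] :
    ∀ α ∈ Finset.univ.filter (fun α => φ α = i),
      (∑ j, J (φ α) j * inn W (ρ.toFun α) ((mergePart φ ρ).toFun j))
      = ∑ j, J i j * inn W (ρ.toFun α) ((mergePart φ ρ).toFun j))]
  rw [Finset.sum_comm]
  refine Finset.sum_congr rfl fun j _ => ?_
  rw [← Finset.mul_sum]
  congr 1
  rw [← inn_sum_left hW hM _ (fun α => ρ.toFun α) ((mergePart φ ρ).toFun j)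
    (fun α _ => ρ.measurable α) (fun α _ => part_bd ρ α) (hmm j) (hmb j)]
  rfl

lemma energy_scale (J : Matrix (Fin q) (Fin q) ℝ) (φ : Fin N → Fin q) (m : Fin q → ℕ)
    (hm : ∀ i, 1 ≤ m i) (hcard : ∀ i, (Finset.univ.filter fun α => φ α = i).card = m i)
    (ρ : FracPartition q) :
    energy W (J.submatrix φ φ) (scalePart φ m hm hcard ρ) = energy W J ρ := by
  rw [energy_eq_inn, energy_eq_inn]
  congr 1
  have hmne : ∀ i : Fin q, ((m i : ℝ)) ≠ 0 := fun i => by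
    have := hm i; positivity
  have hterm : ∀ α β : Fin N,
      inn W ((scalePart φ m hm hcard ρ).toFun α) ((scalePart φ m hm hcard ρ).toFun β)
      = inn W (ρ.toFun (φ α)) (ρ.toFun (φ β)) / (m (φ β) : ℝ) / (m (φ α) : ℝ) := by
    intro α β
    have h1 : inn W ((scalePart φ m hm hcard ρ).toFun α) ((scalePart φ m hm hcard ρ).toFun β)
        = inn W (fun x => ρ.toFun (φ α) x / (m (φ α) : ℝ))
            (fun y => ρ.toFun (φ β) y / (m (φ β) : ℝ)) := rfl
    rw [h1, inn_div_left, inn_div_right]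
  calc ∑ α, ∑ β, (J.submatrix φ φ) α β *
        inn W ((scalePart φ m hm hcard ρ).toFun α) ((scalePart φ m hm hcard ρ).toFun β)
      = ∑ α, ∑ β, J (φ α) (φ β) *
          (inn W (ρ.toFun (φ α)) (ρ.toFun (φ β)) / (m (φ β) : ℝ) / (m (φ α) : ℝ)) := by
        refine Finset.sum_congr rfl fun α _ => Finset.sum_congr rfl fun β _ => ?_
        rw [Matrix.submatrix_apply, hterm α β]
    _ = ∑ i, ∑ j, J i j * inn W (ρ.toFun i) (ρ.toFun j) := by
        rw [← Finset.sum_fiberwise Finset.univ φ (fun α => ∑ β, J (φ α) (φ β) *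
          (inn W (ρ.toFun (φ α)) (ρ.toFun (φ β)) / (m (φ β) : ℝ) / (m (φ α) : ℝ)))]
        refine Finset.sum_congr rfl fun i _ => ?_
        rw [Finset.sum_congr rfl (fun α hα => by
          rw [(Finset.mem_filter.mp hα).2] :
          ∀ α ∈ Finset.univ.filter (fun α => φ α = i),
            (∑ β, J (φ α) (φ β) *
              (inn W (ρ.toFun (φ α)) (ρ.toFun (φ β)) / (m (φ β) : ℝ) / (m (φ α) : ℝ)))
            = ∑ β, J i (φ β) *
              (inn W (ρ.toFun i) (ρ.toFun (φ β)) / (m (φ β) : ℝ) / (m i : ℝ)))]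
        rw [Finset.sum_const, hcard i, nsmul_eq_mul]
        rw [← Finset.sum_fiberwise Finset.univ φ (fun β => J i (φ β) *
          (inn W (ρ.toFun i) (ρ.toFun (φ β)) / (m (φ β) : ℝ) / (m i : ℝ))), Finset.mul_sum]
        refine Finset.sum_congr rfl fun j _ => ?_
        rw [Finset.sum_congr rfl (fun β hβ => by
          rw [(Finset.mem_filter.mp hβ).2] :
          ∀ β ∈ Finset.univ.filter (fun β => φ β = j),
            J i (φ β) * (inn W (ρ.toFun i) (ρ.toFun (φ β)) / (m (φ β) : ℝ) / (m i : ℝ))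
            = J i j * (inn W (ρ.toFun i) (ρ.toFun j) / (m j : ℝ) / (m i : ℝ)))]
        rw [Finset.sum_const, hcard j, nsmul_eq_mul]
        have hi := hmne i
        have hj := hmne j
        field_simp

end Transfer

section Plumbing

variable {q N : ℕ} {W : ℝ → ℝ → ℝ}
variable (hW : Measurable (Function.uncurry W)) {M : ℝ} (hM : ∀ x y, |W x y| ≤ M)

lemma isDist_uniform (hq : 1 ≤ q) : IsDist (fun _ : Fin q => 1 / (q : ℝ)) := by
  constructor
  · intro i; positivity
  · have hq0 : (q : ℝ) ≠ 0 := by positivity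
    rw [Finset.sum_const, Finset.card_univ, Fintype.card_fin, nsmul_eq_mul]
    field_simp

include hW hM in
lemma mgse_le_energy (J : Matrix (Fin q) (Fin q) ℝ) (a : Fin q → ℝ) (ρ : FracPartition q)
    (hρ : ∀ i, (∫ x in I01, ρ.toFun i x) = a i) : mgse W J a ≤ energy W J ρ := by
  apply csInf_le
  · refine ⟨-((∑ i, ∑ j, |J i j|) * M), ?_⟩
    rintro e ⟨σ, hσ, rfl⟩
    linarith [(abs_le.mp (energy_abs_bound hW hM J σ)).1]
  · exact ⟨ρ, hρ, rfl⟩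

include hW hM in
lemma mgse_lb (J : Matrix (Fin q) (Fin q) ℝ) (a : Fin q → ℝ) (h0 : ∀ i, 0 ≤ a i)
    (h1 : ∑ i, a i = 1) : -((∑ i, ∑ j, |J i j|) * M) ≤ mgse W J a := by
  apply le_csInf
  · exact ⟨_, constPart a h0 h1, fun i => constPart_integral a h0 h1 i, rfl⟩
  · rintro e ⟨σ, hσ, rfl⟩
    linarith [(abs_le.mp (energy_abs_bound hW hM J σ)).1]

include hW hM in
lemma ltgseV_le_mgse (J : Matrix (Fin q) (Fin q) ℝ) (x a : Fin q → ℝ) (ha : IsDist a)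
    (hx : ∀ i, x i ≤ a i) : ltgseV W J x ≤ mgse W J a := by
  apply csInf_le
  · refine ⟨-((∑ i, ∑ j, |J i j|) * M), ?_⟩
    rintro e ⟨b, hb, _, rfl⟩
    exact mgse_lb hW hM J b hb.1 hb.2
  · exact ⟨a, ha, hx, rfl⟩

include hW hM in
lemma exists_near_ltgse (J : Matrix (Fin q) (Fin q) ℝ) (c : ℝ)
    (hc : ∃ a : Fin q → ℝ, IsDist a ∧ ∀ i, c ≤ a i) {ε : ℝ} (hε : 0 < ε) :
    ∃ (a : Fin q → ℝ) (ρ : FracPartition q), IsDist a ∧ (∀ i, c ≤ a i) ∧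
      (∀ i, (∫ x in I01, ρ.toFun i x) = a i) ∧
      energy W J ρ < ltgse W J c + ε := by
  obtain ⟨a0, ha0, hca0⟩ := hc
  have hne : Set.Nonempty {e | ∃ a : Fin q → ℝ, IsDist a ∧ (∀ i, (fun _ : Fin q => c) i ≤ a i)
      ∧ e = mgse W J a} := ⟨_, a0, ha0, hca0, rfl⟩
  obtain ⟨e, he, helt⟩ := Real.lt_sInf_add_pos hne (half_pos hε)
  obtain ⟨a, ha, hca, rfl⟩ := he
  have hne2 : Set.Nonempty {e | ∃ ρ : FracPartition q,
      (∀ i, (∫ x in I01, ρ.toFun i x) = a i) ∧ e = energy W J ρ} :=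
    ⟨_, constPart a ha.1 ha.2, fun i => constPart_integral a ha.1 ha.2 i, rfl⟩
  obtain ⟨e2, he2, hlt2⟩ := Real.lt_sInf_add_pos hne2 (half_pos hε)
  obtain ⟨ρ, hρ, rfl⟩ := he2
  refine ⟨a, ρ, ha, hca, hρ, ?_⟩
  have h1 : ltgse W J c = sInf {e | ∃ a : Fin q → ℝ, IsDist a ∧
      (∀ i, (fun _ : Fin q => c) i ≤ a i) ∧ e = mgse W J a} := rfl
  have h2 : mgse W J a = sInf {e | ∃ ρ : FracPartition q,
      (∀ i, (∫ x in I01, ρ.toFun i x) = a i) ∧ e = energy W J ρ} := rfl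
  rw [h1]
  rw [h2] at helt
  linarith

/-- Existence of a map `Fin N → Fin q` with prescribed fiber sizes. -/
lemma exists_phi (m : Fin q → ℕ) (hN : ∑ i, m i = N) :
    ∃ φ : Fin N → Fin q, ∀ i, (Finset.univ.filter fun α => φ α = i).card = m i := by
  have hcard : Fintype.card (Σ i : Fin q, Fin (m i)) = N := by
    simp [Fintype.card_sigma, hN]
  let e := Fintype.equivFinOfCardEq hcard
  refine ⟨fun α => (e.symm α).1, fun i => ?_⟩
  rw [← Fintype.card_subtype]
  have e1 : {α : Fin N // (e.symm α).1 = i} ≃ {σ : Σ i', Fin (m i') // σ.1 = i} :=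
    (e.symm).subtypeEquiv (fun α => Iff.rfl)
  have e2 : {σ : Σ i', Fin (m i') // σ.1 = i} ≃ Fin (m i) := by
    refine ⟨fun σ => Fin.cast (congrArg m σ.2) σ.1.2, fun k => ⟨⟨i, k⟩, rfl⟩, ?_, ?_⟩
    · rintro ⟨⟨i', k⟩, h⟩
      dsimp at h
      subst h
      rfl
    · intro k; rfl
  rw [Fintype.card_congr (e1.trans e2), Fintype.card_fin]

include hW hM in
lemma ltgse_le_comp (J : Matrix (Fin q) (Fin q) ℝ) (φ : Fin N → Fin q) (m : Fin q → ℕ)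
    (hcard : ∀ i, (Finset.univ.filter fun α => φ α = i).card = m i) (c c' : ℝ)
    (hc'0 : 0 ≤ c') (hthr : ∀ i, c ≤ (m i : ℝ) * c') (hN : 1 ≤ N) (hc'le : c' ≤ 1 / (N : ℝ)) :
    ltgse W J c ≤ ltgse W (J.submatrix φ φ) c' := by
  have hBdd : ltgse W (J.submatrix φ φ) c' = sInf {e | ∃ b : Fin N → ℝ, IsDist b ∧
      (∀ α, (fun _ : Fin N => c') α ≤ b α) ∧ e = mgse W (J.submatrix φ φ) b} := rfl
  rw [hBdd]
  apply le_csInf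
  · refine ⟨_, (fun _ : Fin N => 1 / (N : ℝ)), isDist_uniform hN, fun α => hc'le, rfl⟩
  · rintro e ⟨b, hb, hcb, rfl⟩
    apply le_csInf
    · exact ⟨_, constPart b hb.1 hb.2, fun α => constPart_integral b hb.1 hb.2 α, rfl⟩
    · rintro e' ⟨ρ', hρ', rfl⟩
      set A : Fin q → ℝ := fun i => ∑ α ∈ Finset.univ.filter (fun α => φ α = i), b α with hA
      have hAint : ∀ i, (∫ x in I01, (mergePart φ ρ').toFun i x) = A i := by
        intro i
        rw [mergePart_integral]
        exact Finset.sum_congr rfl fun α _ => hρ' α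
      have hAdist : IsDist A := by
        constructor
        · intro i; exact Finset.sum_nonneg fun α _ => hb.1 α
        · rw [hA]
          rw [Finset.sum_fiberwise Finset.univ φ b]
          exact hb.2
      have hAc : ∀ i, c ≤ A i := by
        intro i
        refine le_trans (hthr i) ?_
        have := Finset.card_nsmul_le_sum (Finset.univ.filter fun α => φ α = i) b c'
          (fun α _ => hcb α)
        rw [hcard i, nsmul_eq_mul] at this
        exact this
      calc ltgse W J c ≤ mgse W J A := ltgseV_le_mgse hW hM J _ A hAdist hAc
        _ ≤ energy W J (mergePart φ ρ') := mgse_le_energy hW hM J A _ hAint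
        _ = energy W (J.submatrix φ φ) ρ' := (energy_merge hW hM J φ ρ').symm

include hW hM in
lemma comp_le_energy (J : Matrix (Fin q) (Fin q) ℝ) (φ : Fin N → Fin q) (m : Fin q → ℕ)
    (hm : ∀ i, 1 ≤ m i)
    (hcard : ∀ i, (Finset.univ.filter fun α => φ α = i).card = m i) (c' : ℝ)
    (ρ : FracPartition q) (a : Fin q → ℝ) (hint : ∀ i, (∫ x in I01, ρ.toFun i x) = a i)
    (ha : IsDist a) (hge : ∀ i, (m i : ℝ) * c' ≤ a i) :
    ltgse W (J.submatrix φ φ) c' ≤ energy W J ρ := by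
  have hmpos : ∀ i : Fin q, (0:ℝ) < (m i : ℝ) := fun i => by
    have := hm i; exact_mod_cast Nat.lt_of_lt_of_le Nat.zero_lt_one this
  set b : Fin N → ℝ := fun α => a (φ α) / (m (φ α) : ℝ) with hbdef
  have hbdist : IsDist b := by
    constructor
    · intro α; exact div_nonneg (ha.1 _) (le_of_lt (hmpos _))
    · rw [hbdef]
      rw [← Finset.sum_fiberwise Finset.univ φ (fun α => a (φ α) / (m (φ α) : ℝ))]
      have : ∀ i : Fin q, ∑ α ∈ Finset.univ.filter (fun α => φ α = i),
          a (φ α) / (m (φ α) : ℝ) = a i := by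
        intro i
        rw [Finset.sum_congr rfl (fun α hα => by rw [(Finset.mem_filter.mp hα).2] :
          ∀ α ∈ Finset.univ.filter (fun α => φ α = i),
            a (φ α) / (m (φ α) : ℝ) = a i / (m i : ℝ))]
        rw [Finset.sum_const, hcard i, nsmul_eq_mul, mul_div_cancel₀ _ (ne_of_gt (hmpos i))]
      rw [Finset.sum_congr rfl fun i _ => this i]
      exact ha.2
  have hbge : ∀ α, c' ≤ b α := by
    intro α
    rw [hbdef]
    rw [le_div_iff₀ (hmpos (φ α))]
    calc c' * (m (φ α) : ℝ) = (m (φ α) : ℝ) * c' := by ring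
      _ ≤ a (φ α) := hge (φ α)
  have hbint : ∀ α, (∫ x in I01, (scalePart φ m hm hcard ρ).toFun α x) = b α := by
    intro α
    rw [scalePart_integral, hint (φ α)]
  calc ltgse W (J.submatrix φ φ) c' ≤ mgse W (J.submatrix φ φ) b :=
      ltgseV_le_mgse hW hM _ _ b hbdist hbge
    _ ≤ energy W (J.submatrix φ φ) (scalePart φ m hm hcard ρ) :=
      mgse_le_energy hW hM _ b _ hbint
    _ = energy W J ρ := energy_scale J φ m hm hcard ρ

end Plumbing

section Rounding

lemma rounding {q N : ℕ} (hq : 1 ≤ q) (hN : 1 ≤ N) {h₂ : ℝ} (hh2 : 0 < h₂)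
    (y : Fin q → ℝ) (hy0 : ∀ i, 0 ≤ y i) (hsum : ∑ i, y i = h₂) :
    ∃ m : Fin q → ℕ, (∑ i, m i = N) ∧
      ∀ i, |(m i : ℝ) * (h₂ / N) - y i| ≤ (q : ℝ) * h₂ / N := by
  have hNpos : (0:ℝ) < N := by exact_mod_cast hN
  have hqpos : (0:ℝ) < q := by exact_mod_cast hq
  set i₀ : Fin q := ⟨0, hq⟩ with hi₀
  set g : Fin q → ℕ := fun i => ⌊(N : ℝ) * y i / h₂⌋₊ with hgdef
  have hgle : ∀ i, (g i : ℝ) ≤ (N:ℝ) * y i / h₂ := fun i => Nat.floor_le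
    (by have := hy0 i; positivity)
  have hglt : ∀ i, (N:ℝ) * y i / h₂ < (g i : ℝ) + 1 := fun i => Nat.lt_floor_add_one _
  have keyle : ∀ i, (g i : ℝ) * (h₂/N) ≤ y i := by
    intro i
    have h := mul_le_mul_of_nonneg_right (hgle i) (le_of_lt (div_pos hh2 hNpos))
    have he : ((N:ℝ) * y i / h₂) * (h₂/N) = y i := by field_simp
    rw [he] at h
    exact h
  have keygt : ∀ i, y i - h₂/N < (g i : ℝ) * (h₂/N) := by
    intro i
    have h := mul_lt_mul_of_pos_right (hglt i) (div_pos hh2 hNpos)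
    have he : ((N:ℝ) * y i / h₂) * (h₂/N) = y i := by field_simp
    rw [he] at h
    nlinarith [h]
  set S : ℕ := ∑ i ∈ Finset.univ.erase i₀, g i with hSdef
  have hyerase : ∑ j ∈ Finset.univ.erase i₀, y j ≤ h₂ := by
    rw [← hsum]
    exact Finset.sum_le_sum_of_subset_of_nonneg (Finset.erase_subset _ _)
      (fun j _ _ => hy0 j)
  have hS : S ≤ N := by
    have hr : ((S:ℕ):ℝ) ≤ (N:ℝ) := by
      rw [hSdef]
      push_cast
      calc ∑ i ∈ Finset.univ.erase i₀, (g i : ℝ)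
          ≤ ∑ i ∈ Finset.univ.erase i₀, (N:ℝ) * y i / h₂ :=
            Finset.sum_le_sum fun i _ => hgle i
        _ = ((N:ℝ)/h₂) * ∑ i ∈ Finset.univ.erase i₀, y i := by
            rw [Finset.mul_sum]
            exact Finset.sum_congr rfl fun i _ => by ring
        _ ≤ ((N:ℝ)/h₂) * h₂ := by
            exact mul_le_mul_of_nonneg_left hyerase (le_of_lt (div_pos hNpos hh2))
        _ = (N:ℝ) := by field_simp
    exact_mod_cast hr
  set m : Fin q → ℕ := fun i => if i = i₀ then N - S else g i with hmdef
  have hmi₀ : m i₀ = N - S := by rw [hmdef]; simp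
  have hmne : ∀ i, i ≠ i₀ → m i = g i := fun i hi => by rw [hmdef]; simp [hi]
  refine ⟨m, ?_, ?_⟩
  · rw [← Finset.add_sum_erase _ _ (Finset.mem_univ i₀), hmi₀,
      Finset.sum_congr rfl (fun i hi => hmne i (Finset.ne_of_mem_erase hi))]
    show N - S + S = N
    have hS' := hS
    omega
  · intro i
    have hbd : (0:ℝ) < h₂ / N := div_pos hh2 hNpos
    have hq1 : (1:ℝ) ≤ q := by exact_mod_cast hq
    by_cases hii : i = i₀
    · subst hii
      rw [hmi₀]
      have hyi : y i₀ = h₂ - ∑ j ∈ Finset.univ.erase i₀, y j := by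
        rw [← hsum, ← Finset.add_sum_erase _ y (Finset.mem_univ i₀)]
        ring
      have hSr : ((S:ℕ):ℝ) = ∑ j ∈ Finset.univ.erase i₀, (g j : ℝ) := by
        rw [hSdef]
        push_cast
        rfl
      have hkey : ((N - S : ℕ):ℝ) * (h₂/N) - y i₀
          = ∑ j ∈ Finset.univ.erase i₀, (y j - (g j : ℝ) * (h₂/N)) := by
        rw [Nat.cast_sub hS, Finset.sum_sub_distrib, hyi, hSr, ← Finset.sum_mul]
        field_simp
        ring
      rw [hkey]
      have habs : |∑ j ∈ Finset.univ.erase i₀, (y j - (g j : ℝ) * (h₂/N))|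
          = ∑ j ∈ Finset.univ.erase i₀, (y j - (g j : ℝ) * (h₂/N)) :=
        abs_of_nonneg (Finset.sum_nonneg fun j _ => by linarith [keyle j])
      rw [habs]
      calc ∑ j ∈ Finset.univ.erase i₀, (y j - (g j : ℝ) * (h₂/N))
          ≤ ∑ j ∈ Finset.univ.erase i₀, h₂/N :=
            Finset.sum_le_sum fun j _ => by linarith [keygt j]
        _ = ((Finset.univ.erase i₀).card : ℝ) * (h₂/N) := by
            rw [Finset.sum_const, nsmul_eq_mul]
        _ ≤ (q:ℝ) * (h₂/N) := by
            refine mul_le_mul_of_nonneg_right ?_ (le_of_lt hbd)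
            have : (Finset.univ.erase i₀).card ≤ q := by
              calc (Finset.univ.erase i₀).card ≤ Finset.univ.card :=
                    Finset.card_le_card (Finset.erase_subset _ _)
                _ = q := by rw [Finset.card_univ, Fintype.card_fin]
            exact_mod_cast this
        _ = (q:ℝ) * h₂ / N := by ring
    · rw [hmne i hii]
      rw [abs_le]
      constructor
      · have : -(h₂/N) ≤ (g i : ℝ) * (h₂/N) - y i := by linarith [keygt i]
        have h2' : -((q:ℝ) * h₂ / N) ≤ -(h₂/N) := by
          rw [neg_le_neg_iff]
          calc h₂/N = 1 * (h₂/N) := by ring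
            _ ≤ (q:ℝ) * (h₂/N) := mul_le_mul_of_nonneg_right hq1 (le_of_lt hbd)
            _ = (q:ℝ) * h₂ / N := by ring
        linarith
      · have : (g i : ℝ) * (h₂/N) - y i ≤ 0 := by linarith [keyle i]
        have : (0:ℝ) ≤ (q:ℝ) * h₂ / N := by positivity
        linarith

end Rounding

section MainApprox

set_option maxHeartbeats 2000000 in
lemma main_approx {q : ℕ} (hq : 1 ≤ q) (J : Matrix (Fin q) (Fin q) ℝ)
    {h₁ h₂ : ℝ} (h1 : 0 ≤ h₁) (h12 : h₁ < h₂) (h2 : h₂ ≤ 1) {ε : ℝ} (hε : 0 < ε)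
    {Mbd : ℝ} (hMbd : 0 ≤ Mbd) :
    ∃ N : ℕ, 1 ≤ N ∧ ∀ (W : ℝ → ℝ → ℝ), Measurable (Function.uncurry W) →
      (∀ x y, |W x y| ≤ Mbd) →
      ∃ m : Fin q → ℕ, (∑ i, m i = N) ∧ (∀ i, 1 ≤ m i) ∧
        (∀ i, h₁ / q ≤ (m i : ℝ) * (h₂ / N)) ∧
        ∀ φ : Fin N → Fin q, (∀ i, (Finset.univ.filter fun α => φ α = i).card = m i) →
          ltgse W (J.submatrix φ φ) (h₂ / N) ≤ ltgse W J (h₁ / q) + ε := by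
  have hqpos : (0:ℝ) < q := by exact_mod_cast hq
  have hqne : (q:ℝ) ≠ 0 := ne_of_gt hqpos
  have h21 : 0 < h₂ := lt_of_le_of_lt h1 h12
  have h1l : h₁ < 1 := lt_of_lt_of_le h12 h2
  have h1l' : (0:ℝ) < 1 - h₁ := by linarith
  obtain ⟨t, htdef⟩ : ∃ t : ℝ, t = (h₂ - h₁) / (1 - h₁) := ⟨_, rfl⟩
  have ht0 : 0 < t := htdef ▸ div_pos (by linarith) h1l'
  have ht1 : t ≤ 1 := by rw [htdef, div_le_one h1l']; linarith
  obtain ⟨Csum, hCsumdef⟩ : ∃ c : ℝ, c = ∑ i, ∑ j, |J i j| := ⟨_, rfl⟩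
  have hCsum : 0 ≤ Csum := hCsumdef ▸
    Finset.sum_nonneg fun i _ => Finset.sum_nonneg fun j _ => abs_nonneg _
  obtain ⟨C, hCdef⟩ : ∃ c : ℝ, c = Csum * (2 * Mbd) := ⟨_, rfl⟩
  have hC : 0 ≤ C := hCdef ▸ mul_nonneg hCsum (by linarith)
  obtain ⟨s, hsdef⟩ : ∃ s : ℝ, s = min 1 (ε / (2 * (C + 1))) := ⟨_, rfl⟩
  have hs0 : 0 < s := hsdef ▸ lt_min one_pos (div_pos hε (by linarith))
  have hs1 : s ≤ 1 := hsdef ▸ min_le_left _ _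
  have hsC : s * C ≤ ε / 2 := by
    have h3 : s * C ≤ ε / (2 * (C + 1)) * C :=
      mul_le_mul_of_nonneg_right (hsdef ▸ min_le_right _ _) hC
    have h4 : ε / (2 * (C + 1)) * C ≤ ε / 2 := by
      rw [div_mul_eq_mul_div, div_le_div_iff₀ (by linarith) (by norm_num)]
      nlinarith
    linarith
  obtain ⟨γ, hγdef⟩ : ∃ g : ℝ, g = s * (h₂ - h₁) / q := ⟨_, rfl⟩
  have hγ : 0 < γ := hγdef ▸ div_pos (by nlinarith) hqpos
  obtain ⟨δ, hδdef⟩ : ∃ d : ℝ, d = min (γ / 2) (s / (2 * q)) := ⟨_, rfl⟩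
  have hδ : 0 < δ := hδdef ▸ lt_min (by linarith) (div_pos hs0 (by linarith))
  have hδγ : δ ≤ γ / 2 := hδdef ▸ min_le_left _ _
  have hδs : δ ≤ s / (2 * q) := hδdef ▸ min_le_right _ _
  obtain ⟨N, hNdef⟩ : ∃ N : ℕ, N = ⌈(q : ℝ) * h₂ / δ⌉₊ + 1 := ⟨_, rfl⟩
  have hN1 : 1 ≤ N := hNdef ▸ Nat.le_add_left 1 _
  have hNpos : (0:ℝ) < N := by exact_mod_cast hN1
  have hNδ : (q : ℝ) * h₂ / N ≤ δ := by
    rw [div_le_iff₀ hNpos]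
    have hle : (q : ℝ) * h₂ / δ ≤ N := by
      calc (q : ℝ) * h₂ / δ ≤ ⌈(q : ℝ) * h₂ / δ⌉₊ := Nat.le_ceil _
        _ ≤ (N : ℝ) := by rw [hNdef]; push_cast; linarith
    calc (q:ℝ) * h₂ = ((q:ℝ) * h₂ / δ) * δ := by
          rw [div_mul_cancel₀ _ (ne_of_gt hδ)]
      _ ≤ (N:ℝ) * δ := mul_le_mul_of_nonneg_right hle (le_of_lt hδ)
      _ = δ * N := by ring
  refine ⟨N, hN1, ?_⟩
  intro W hWm hWb
  have hunif : ∃ a : Fin q → ℝ, IsDist a ∧ ∀ i, h₁ / q ≤ a i := by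
    refine ⟨fun _ => 1 / (q:ℝ), isDist_uniform hq, fun i => ?_⟩
    rw [div_le_div_iff₀ hqpos hqpos]
    nlinarith
  obtain ⟨a, ρ, ha, hca, hint, hen⟩ :=
    exists_near_ltgse hWm hWb J (h₁ / q) hunif (show (0:ℝ) < ε/4 by linarith)
  obtain ⟨a', ha'def⟩ : ∃ v : Fin q → ℝ, v = fun i => (1 - s) * a i + s / q := ⟨_, rfl⟩
  have ha'app : ∀ i, a' i = (1 - s) * a i + s / q := fun i => by rw [ha'def]
  have hqs : (q:ℝ) * (s / q) = s := by
    rw [mul_comm]; exact div_mul_cancel₀ s hqne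
  have ha'sum : ∑ i, a' i = 1 := by
    rw [ha'def, Finset.sum_add_distrib, ← Finset.mul_sum, ha.2, Finset.sum_const,
      Finset.card_univ, Fintype.card_fin, nsmul_eq_mul, hqs]
    ring
  have hgap : ∀ i, s * (1 - h₁) / q ≤ a' i - h₁ / q := by
    intro i
    have h5 := hca i
    have h6 : (1 - s) * (h₁ / q) ≤ (1 - s) * a i :=
      mul_le_mul_of_nonneg_left h5 (by linarith)
    have h7 : (1 - s) * (h₁ / q) + s / q - h₁ / q = s * (1 - h₁) / q := by
      field_simp
      ring
    rw [ha'app i]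
    linarith
  have hgap0 : ∀ i, 0 ≤ a' i - h₁ / q := by
    intro i
    have h8 : 0 ≤ s * (1 - h₁) / q := div_nonneg (by nlinarith) (le_of_lt hqpos)
    linarith [hgap i]
  obtain ⟨xs, hxsdef⟩ : ∃ v : Fin q → ℝ, v = fun i => h₁ / q + t * (a' i - h₁ / q) :=
    ⟨_, rfl⟩
  have hxsapp : ∀ i, xs i = h₁ / q + t * (a' i - h₁ / q) := fun i => by rw [hxsdef]
  have hq10 : 0 ≤ h₁ / q := div_nonneg h1 (le_of_lt hqpos)
  have hx0 : ∀ i, 0 ≤ xs i := by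
    intro i
    have h9 : 0 ≤ t * (a' i - h₁ / q) := mul_nonneg (le_of_lt ht0) (hgap0 i)
    rw [hxsapp i]
    linarith
  have htmul : t * (1 - h₁) = h₂ - h₁ := by
    rw [htdef, div_mul_cancel₀ _ (ne_of_gt h1l')]
  have htγ : t * (s * (1 - h₁) / q) = γ := by
    rw [hγdef]
    rw [show s * (h₂ - h₁) = s * (t * (1 - h₁)) by rw [htmul]]
    ring
  have hxγ : ∀ i, h₁ / q + γ ≤ xs i := by
    intro i
    have h11 : t * (s * (1 - h₁) / q) ≤ t * (a' i - h₁ / q) :=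
      mul_le_mul_of_nonneg_left (hgap i) (le_of_lt ht0)
    rw [hxsapp i]
    linarith [htγ ▸ h11]
  have hxa' : ∀ i, xs i ≤ a' i := by
    intro i
    have h13 : 0 ≤ (1 - t) * (a' i - h₁ / q) := mul_nonneg (by linarith) (hgap0 i)
    have h12' : a' i - xs i = (1 - t) * (a' i - h₁ / q) := by
      rw [hxsapp i]; ring
    linarith
  have hxsum : ∑ i, xs i = h₂ := by
    rw [hxsdef, Finset.sum_add_distrib, ← Finset.mul_sum, Finset.sum_sub_distrib, ha'sum,
      Finset.sum_const, Finset.card_univ, Fintype.card_fin, nsmul_eq_mul]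
    have hq1' : (q:ℝ) * (h₁ / q) = h₁ := by
      rw [mul_comm]; exact div_mul_cancel₀ h₁ hqne
    rw [hq1']
    linarith [htmul]
  obtain ⟨m, hmsum, hmapprox⟩ := rounding hq hN1 h21 xs hx0 hxsum
  have hFx : ∀ i, |(m i : ℝ) * (h₂ / N) - xs i| ≤ δ :=
    fun i => le_trans (hmapprox i) hNδ
  have hFlb : ∀ i, h₁ / q + γ / 2 ≤ (m i : ℝ) * (h₂ / N) := by
    intro i
    have h14 := (abs_le.mp (hFx i)).1
    have := hxγ i
    linarith
  have hthr : ∀ i, h₁ / q ≤ (m i : ℝ) * (h₂ / N) := by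
    intro i
    have := hFlb i
    linarith
  have hm1 : ∀ i, 1 ≤ m i := by
    intro i
    rcases Nat.eq_zero_or_pos (m i) with h | h
    · exfalso
      have h15 := hFlb i
      rw [h] at h15
      push_cast at h15
      linarith
    · exact h
  have hFsum : ∑ i, (m i : ℝ) * (h₂ / N) = h₂ := by
    rw [← Finset.sum_mul]
    have hcastsum : (∑ i, (m i : ℝ)) = (N : ℝ) := by
      rw [← Nat.cast_sum, hmsum]
    rw [hcastsum, mul_comm]
    exact div_mul_cancel₀ h₂ (ne_of_gt hNpos)
  obtain ⟨c, hcdef⟩ : ∃ v : Fin q → ℝ,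
      v = fun i => ((m i : ℝ) * (h₂ / N) - xs i) / s + 1 / q := ⟨_, rfl⟩
  have hcapp : ∀ i, c i = ((m i : ℝ) * (h₂ / N) - xs i) / s + 1 / q := fun i => by
    rw [hcdef]
  have hc0 : ∀ i, 0 ≤ c i := by
    intro i
    have h17 := (abs_le.mp (hFx i)).1
    have h18 : -(s / (2 * q)) ≤ (m i : ℝ) * (h₂ / N) - xs i := by linarith
    have h19 : -(s / (2 * q)) / s ≤ ((m i : ℝ) * (h₂ / N) - xs i) / s :=
      (div_le_div_iff_of_pos_right hs0).mpr h18
    have h20 : -(s / (2 * q)) / s = -(1 / (2 * q)) := by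
      rw [neg_div]
      congr 1
      rw [div_div, mul_comm, ← div_div, div_self (ne_of_gt hs0)]
    have h21'' : (1:ℝ) / (2 * q) ≤ 1 / q :=
      one_div_le_one_div_of_le hqpos (by linarith)
    rw [hcapp i]
    rw [h20] at h19
    linarith
  have hcsum : ∑ i, c i = 1 := by
    rw [hcdef, Finset.sum_add_distrib, ← Finset.sum_div, Finset.sum_sub_distrib, hFsum,
      hxsum, sub_self, zero_div, Finset.sum_const, Finset.card_univ, Fintype.card_fin,
      nsmul_eq_mul, mul_one_div, div_self hqne]
    ring
  obtain ⟨ρ'', hρ''def⟩ : ∃ r : FracPartition q,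
      r = mixPart s (le_of_lt hs0) hs1 c hc0 hcsum ρ := ⟨_, rfl⟩
  obtain ⟨A, hAdef⟩ : ∃ v : Fin q → ℝ, v = fun i => (1 - s) * a i + s * c i := ⟨_, rfl⟩
  have hAapp : ∀ i, A i = (1 - s) * a i + s * c i := fun i => by rw [hAdef]
  have hAint : ∀ i, (∫ x in I01, ρ''.toFun i x) = A i := by
    intro i
    rw [hρ''def, mixPart_integral, hint i, hAapp i]
  have hsc : ∀ i, s * c i = ((m i : ℝ) * (h₂ / N) - xs i) + s / q := by
    intro i
    rw [hcapp i, mul_add, mul_div_cancel₀ _ (ne_of_gt hs0), mul_one_div]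
  have hAeq : ∀ i, A i = a' i + ((m i : ℝ) * (h₂ / N) - xs i) := by
    intro i
    rw [hAapp i, hsc i, ha'app i]
    ring
  have hAF : ∀ i, (m i : ℝ) * (h₂ / N) ≤ A i := by
    intro i
    rw [hAeq i]
    linarith [hxa' i]
  have hAdist : IsDist A := by
    constructor
    · intro i
      linarith [hAF i, hthr i, hq10]
    · rw [hAdef, Finset.sum_add_distrib, ← Finset.mul_sum, ← Finset.mul_sum, ha.2, hcsum]
      ring
  have hc1 : ∀ i, c i ≤ 1 := by
    intro i
    calc c i ≤ ∑ j, c j := Finset.single_le_sum (fun j _ => hc0 j) (Finset.mem_univ i)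
      _ = 1 := hcsum
  have hd : ∀ i, ∀ x ∈ I01, |ρ''.toFun i x - ρ.toFun i x| ≤ s := by
    intro i x hx
    have h25 : ρ''.toFun i x = (1 - s) * ρ.toFun i x + s * c i := by
      rw [hρ''def]; rfl
    have h26 : ρ''.toFun i x - ρ.toFun i x = s * (c i - ρ.toFun i x) := by
      rw [h25]; ring
    rw [h26, abs_mul, abs_of_pos hs0]
    have h27 := part_nonneg ρ i hx
    have h28 := part_le_one ρ i hx
    have h29 : |c i - ρ.toFun i x| ≤ 1 := by
      rw [abs_le]
      constructor
      · have := hc0 i; linarith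
      · have := hc1 i; linarith
    nlinarith
  have hdiff : |energy W J ρ'' - energy W J ρ| ≤ s * C := by
    have hdb := energy_diff_bound hWm hWb J ρ'' ρ (le_of_lt hs0) hd
    have heq : (∑ i, ∑ j, |J i j|) * (2 * (s * Mbd)) = s * C := by
      rw [hCdef, hCsumdef]; ring
    rw [heq] at hdb
    exact hdb
  refine ⟨m, hmsum, hm1, hthr, ?_⟩
  intro φ hφ
  have step := comp_le_energy hWm hWb J φ m hm1 hφ (h₂ / N) ρ'' A hAint hAdist hAF
  have h30 : energy W J ρ'' ≤ energy W J ρ + s * C := by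
    have := (abs_le.mp hdiff).2
    linarith
  calc ltgse W (J.submatrix φ φ) (h₂ / N) ≤ energy W J ρ'' := step
    _ ≤ energy W J ρ + s * C := h30
    _ ≤ (ltgse W J (h₁ / q) + ε / 4) + ε / 2 := by
        have := le_of_lt hen
        linarith
    _ ≤ ltgse W J (h₁ / q) + ε := by linarith

end MainApprox

end StmtAux

theorem stmt11 (lo hi : ℝ) (W : ℕ → ℝ → ℝ → ℝ)
    (hW : ∀ n, IsGraphon (W n)) (hWI : ∀ n x y, W n x y ∈ Set.Icc lo hi)
    (h₁ h₂ : ℝ) (h1 : 0 ≤ h₁) (h12 : h₁ < h₂) (h2 : h₂ ≤ 1)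
    (hconv : ∀ q : ℕ, 1 ≤ q → ∀ J : Matrix (Fin q) (Fin q) ℝ, J.IsSymm →
      ∃ L : ℝ, Tendsto (fun n => ltgse (W n) J (h₂ / q)) atTop (nhds L)) :
    ∀ q : ℕ, 1 ≤ q → ∀ J : Matrix (Fin q) (Fin q) ℝ, J.IsSymm →
      ∃ L : ℝ, Tendsto (fun n => ltgse (W n) J (h₁ / q)) atTop (nhds L) := by
  intro q hq J hJ
  classical
  obtain ⟨Mbd, hMbddef⟩ : ∃ M : ℝ, M = max |lo| |hi| := ⟨_, rfl⟩
  have hMbd0 : 0 ≤ Mbd := hMbddef ▸ le_trans (abs_nonneg lo) (le_max_left _ _)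
  have hWb : ∀ n x y, |W n x y| ≤ Mbd := by
    intro n x y
    obtain ⟨hlo, hhi⟩ := Set.mem_Icc.mp (hWI n x y)
    rw [abs_le]
    constructor
    · have ha1 : -|lo| ≤ lo := neg_abs_le lo
      have ha2 : |lo| ≤ Mbd := hMbddef ▸ le_max_left _ _
      linarith
    · have hb1 : hi ≤ |hi| := le_abs_self hi
      have hb2 : |hi| ≤ Mbd := hMbddef ▸ le_max_right _ _
      linarith
  have hWm : ∀ n, Measurable (Function.uncurry (W n)) := fun n => (hW n).1
  apply cauchySeq_tendsto_of_complete
  rw [Metric.cauchySeq_iff']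
  intro ε hε
  obtain ⟨N, hN1, happrox⟩ :=
    StmtAux.main_approx hq J h1 h12 h2 (show (0:ℝ) < ε/4 by linarith) hMbd0
  have hNpos : (0:ℝ) < N := by exact_mod_cast hN1
  have hsymm : ∀ φ : Fin N → Fin q, (J.submatrix φ φ).IsSymm := by
    intro φ
    rw [Matrix.IsSymm]
    ext α β
    rw [Matrix.transpose_apply, Matrix.submatrix_apply, Matrix.submatrix_apply, hJ.apply]
  have hφ : ∀ v : Fin q → Fin (N+1), ∀ _ : (∑ i, ((v i : ℕ)) = N),
      ∃ φ : Fin N → Fin q,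
        ∀ i, (Finset.univ.filter fun α => φ α = i).card = (v i : ℕ) :=
    fun v h => StmtAux.exists_phi _ h
  choose φf φspec using hφ
  obtain ⟨g, hgdef⟩ : ∃ g : (Fin q → Fin (N+1)) → ℕ → ℝ,
      g = fun v n => if h : (∑ i, ((v i : ℕ)) = N) then
        ltgse (W n) (J.submatrix (φf v h) (φf v h)) (h₂ / N) else 0 := ⟨_, rfl⟩
  have hgconv : ∀ v, ∃ L, Tendsto (fun n => g v n) atTop (nhds L) := by
    intro v
    by_cases h : (∑ i, ((v i : ℕ)) = N)
    · obtain ⟨L, hL⟩ := hconv N hN1 (J.submatrix (φf v h) (φf v h)) (hsymm _)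
      refine ⟨L, ?_⟩
      have : (fun n => g v n) = fun n =>
          ltgse (W n) (J.submatrix (φf v h) (φf v h)) (h₂ / N) := by
        funext n
        rw [hgdef]
        simp only
        rw [dif_pos h]
      rw [this]
      exact hL
    · refine ⟨0, ?_⟩
      have : (fun n => g v n) = fun _ => (0:ℝ) := by
        funext n
        rw [hgdef]
        simp only
        rw [dif_neg h]
      rw [this]
      exact tendsto_const_nhds
  have hcau : ∀ v, ∃ Nv : ℕ, ∀ a b, Nv ≤ a → Nv ≤ b → |g v a - g v b| < ε/4 := by
    intro v
    obtain ⟨L, hL⟩ := hgconv v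
    have hc := hL.cauchySeq
    rw [Metric.cauchySeq_iff] at hc
    obtain ⟨Nv, hNv⟩ := hc (ε/4) (by linarith)
    refine ⟨Nv, fun a b hA hB => ?_⟩
    have := hNv a hA b hB
    rwa [Real.dist_eq] at this
  choose nv hnv using hcau
  obtain ⟨NN, hNNdef⟩ : ∃ NN : ℕ, NN = Finset.univ.sup nv := ⟨_, rfl⟩
  have hNNle : ∀ v, nv v ≤ NN := fun v =>
    hNNdef ▸ Finset.le_sup (Finset.mem_univ v)
  have claimI : ∀ (k : ℕ) (v : Fin q → Fin (N+1)) (h : ∑ i, ((v i : ℕ)) = N),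
      (∀ i, h₁ / q ≤ (((v i : ℕ)) : ℝ) * (h₂ / N)) →
      ltgse (W k) J (h₁ / q) ≤ g v k := by
    intro k v h hthr
    have key := StmtAux.ltgse_le_comp (hWm k) (hWb k) J (φf v h) (fun i => ((v i : ℕ)))
      (φspec v h) (h₁ / q) (h₂ / N)
      (div_nonneg (by linarith) (le_of_lt hNpos)) hthr hN1
      ((div_le_div_iff_of_pos_right hNpos).mpr h2)
    rw [hgdef]
    simp only
    rw [dif_pos h]
    exact key
  have claimII : ∀ k : ℕ, ∃ (v : Fin q → Fin (N+1)) (h : ∑ i, ((v i : ℕ)) = N),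
      (∀ i, h₁ / q ≤ (((v i : ℕ)) : ℝ) * (h₂ / N)) ∧
      g v k ≤ ltgse (W k) J (h₁ / q) + ε/4 := by
    intro k
    obtain ⟨m, hmsum, hm1, hthr, hbound⟩ := happrox (W k) (hWm k) (hWb k)
    have hmle : ∀ i, m i ≤ N := by
      intro i
      rw [← hmsum]
      exact Finset.single_le_sum (f := m) (fun _ _ => Nat.zero_le _) (Finset.mem_univ i)
    refine ⟨fun i => ⟨m i, Nat.lt_succ_of_le (hmle i)⟩, hmsum, fun i => hthr i, ?_⟩
    rw [hgdef]
    simp only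
    rw [dif_pos hmsum]
    exact hbound _ (φspec _ hmsum)
  refine ⟨NN, ?_⟩
  intro n hn
  rw [Real.dist_eq]
  obtain ⟨v₁, hv₁, hth₁, hb₁⟩ := claimII NN
  obtain ⟨v₂, hv₂, hth₂, hb₂⟩ := claimII n
  have e_n_le : ltgse (W n) J (h₁ / q) ≤ g v₁ n := claimI n v₁ hv₁ hth₁
  have e_NN_le : ltgse (W NN) J (h₁ / q) ≤ g v₂ NN := claimI NN v₂ hv₂ hth₂
  have c1 := hnv v₁ n NN (le_trans (hNNle v₁) hn) (hNNle v₁)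
  have c2 := hnv v₂ n NN (le_trans (hNNle v₂) hn) (hNNle v₂)
  obtain ⟨c1a, c1b⟩ := abs_lt.mp c1
  obtain ⟨c2a, c2b⟩ := abs_lt.mp c2
  rw [abs_sub_lt_iff]
  constructor
  · linarith
  · linarith
end
end

section
/- Let I be a bounded interval, (W_n) a sequence of graphons with values in I, and 0 ≤ h ≤ 1. If for every q' ≥ 1 and every symmetric q'×q' matrix J' the sequence (E^{h/q'}(W_n, J'))_n converges, then for every q ≥ 1, every nonnegative vector x = (x₁,…,x_q) with Σx_i = h, and every symmetric q×q matrix J, the sequence (E^x(W_n, J))_n converges. -/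
open MeasureTheory Filter

noncomputable section

namespace Scratch

lemma measurableSet_I01 : MeasurableSet I01 := measurableSet_Icc

lemma volume_I01 : volume I01 = 1 := by simp [I01]

/-- inner integral -/
def CC (W : ℝ → ℝ → ℝ) (g : ℝ → ℝ) (x : ℝ) : ℝ := ∫ y in I01, g y * W x y

variable {W : ℝ → ℝ → ℝ} {M : ℝ}

lemma meas_CC (hWm : Measurable (Function.uncurry W)) {g : ℝ → ℝ} (hg : Measurable g) :
    Measurable (CC W g) := by
  have h1 : StronglyMeasurable (Function.uncurry (fun x y => g y * W x y)) :=
    ((hg.comp measurable_snd).mul hWm).stronglyMeasurable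
  exact (h1.integral_prod_right (ν := volume.restrict I01)).measurable

lemma intOn_of_bound {f : ℝ → ℝ} (hf : Measurable f) (A : ℝ) (hA : ∀ x ∈ I01, |f x| ≤ A) :
    IntegrableOn f I01 := by
  refine Integrable.mono' (g := fun _ => A)
    (integrableOn_const (by rw [volume_I01]; exact ENNReal.one_ne_top))
    hf.aestronglyMeasurable ?_
  refine (ae_restrict_iff' measurableSet_I01).2 (Eventually.of_forall ?_)
  intro x hx; simpa using hA x hx

lemma meas_slice (hWm : Measurable (Function.uncurry W)) (x : ℝ) :
    Measurable (fun y => W x y) :=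
  hWm.comp (measurable_const.prodMk measurable_id)

lemma abs_CC_le (hWm : Measurable (Function.uncurry W)) (hM : ∀ x y, |W x y| ≤ M)
    {g : ℝ → ℝ} (hg : Measurable g) {B : ℝ}
    (hgB : ∀ x ∈ I01, |g x| ≤ B) (hB : 0 ≤ B) (x : ℝ) : |CC W g x| ≤ B * M := by
  have h0M : 0 ≤ M := le_trans (abs_nonneg _) (hM 0 0)
  have := norm_setIntegral_le_of_norm_le_const (μ := volume) (s := I01)
    (f := fun y => g y * W x y) (C := B * M) (by rw [volume_I01]; exact ENNReal.one_lt_top)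
    (fun y hy => by
      rw [Real.norm_eq_abs, abs_mul]
      exact mul_le_mul (hgB y hy) (hM x y) (abs_nonneg _) hB)
  rw [Real.norm_eq_abs, measureReal_def, volume_I01] at this; simpa [CC] using this

end Scratch

namespace Scratch2
open Scratch

def PP (W : ℝ → ℝ → ℝ) (f g : ℝ → ℝ) : ℝ := ∫ x in I01, f x * CC W g x

variable {W : ℝ → ℝ → ℝ} {M : ℝ}

lemma PP_def (W : ℝ → ℝ → ℝ) (f g : ℝ → ℝ) :
    (∫ x in I01, ∫ y in I01, f x * g y * W x y) = PP W f g := by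
  unfold PP CC
  refine setIntegral_congr_fun measurableSet_I01 (fun x _ => ?_)
  rw [← integral_const_mul]
  refine setIntegral_congr_fun measurableSet_I01 (fun y _ => ?_)
  ring

/-- bundle of hypotheses on one factor -/
structure OkF (f : ℝ → ℝ) (A : ℝ) : Prop where
  meas : Measurable f
  bdd : ∀ x ∈ I01, |f x| ≤ A
  nonneg : 0 ≤ A

variable (hWm : Measurable (Function.uncurry W)) (hM : ∀ x y, |W x y| ≤ M)

include hWm hM in
lemma abs_PP_le' {f g : ℝ → ℝ} {A B : ℝ} (hf : OkF f A) (hg : OkF g B) :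
    |PP W f g| ≤ (∫ x in I01, |f x|) * (B * M) := by
  have h0M : 0 ≤ M := le_trans (abs_nonneg _) (hM 0 0)
  have hCb := abs_CC_le hWm hM hg.meas hg.bdd hg.nonneg
  have hint : IntegrableOn (fun x => |f x| * (B * M)) I01 :=
    (intOn_of_bound hf.meas.abs A (fun x hx => by
      simpa [abs_abs] using hf.bdd x hx)).mul_const _
  calc |PP W f g| ≤ ∫ x in I01, |f x| * |CC W g x| := by
        have := norm_integral_le_integral_norm (f := fun x => f x * CC W g x)
          (μ := volume.restrict I01)
        simpa [PP, Real.norm_eq_abs, abs_mul] using this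
    _ ≤ ∫ x in I01, |f x| * (B * M) := by
        refine setIntegral_mono_on ?_ hint measurableSet_I01 (fun x _ => ?_)
        · exact intOn_of_bound (hf.meas.abs.mul (meas_CC hWm hg.meas).abs) (A * (B * M))
            (fun x hx => by
              rw [abs_mul, abs_abs, abs_abs]
              exact mul_le_mul (hf.bdd x hx) (hCb x) (abs_nonneg _) hf.nonneg)
        · exact mul_le_mul_of_nonneg_left (hCb x) (abs_nonneg _)
    _ = (∫ x in I01, |f x|) * (B * M) := by rw [integral_mul_const]

include hWm hM in
lemma abs_PP_le {f g : ℝ → ℝ} {A B : ℝ} (hf : OkF f A) (hg : OkF g B) :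
    |PP W f g| ≤ A * (B * M) := by
  have h1 := abs_PP_le' hWm hM hf hg
  have h0M : 0 ≤ M := le_trans (abs_nonneg _) (hM 0 0)
  have h2 : (∫ x in I01, |f x|) ≤ A := by
    have h3 := norm_setIntegral_le_of_norm_le_const (μ := volume) (s := I01)
      (f := fun x => |f x|) (C := A) (by rw [volume_I01]; exact ENNReal.one_lt_top)
      (fun x hx => by simpa [abs_abs] using hf.bdd x hx)
    rw [measureReal_def, volume_I01] at h3
    simp only [Real.norm_eq_abs, ENNReal.toReal_one, mul_one] at h3
    exact le_trans (le_abs_self _) h3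
  refine h1.trans (mul_le_mul_of_nonneg_right h2 (mul_nonneg hg.nonneg h0M))

include hWm hM in
lemma intOn_mul_CC {f g : ℝ → ℝ} {A B : ℝ} (hf : OkF f A) (hg : OkF g B) :
    IntegrableOn (fun x => f x * CC W g x) I01 := by
  have hCb := abs_CC_le hWm hM hg.meas hg.bdd hg.nonneg
  exact intOn_of_bound (hf.meas.mul (meas_CC hWm hg.meas)) (A * (B * M))
    (fun x hx => by
      rw [abs_mul]
      exact mul_le_mul (hf.bdd x hx) (hCb x) (abs_nonneg _) hf.nonneg)

include hWm hM in
lemma PP_sub_left {f f' g : ℝ → ℝ} {A A' B : ℝ} (hf : OkF f A) (hf' : OkF f' A')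
    (hg : OkF g B) : PP W (fun x => f x - f' x) g = PP W f g - PP W f' g := by
  unfold PP
  rw [← integral_sub (intOn_mul_CC hWm hM hf hg) (intOn_mul_CC hWm hM hf' hg)]
  refine setIntegral_congr_fun measurableSet_I01 (fun x _ => ?_)
  ring

include hWm hM in
lemma PP_sum_left {ι : Type*} (s : Finset ι) {f : ι → ℝ → ℝ} {g : ℝ → ℝ} {B : ℝ}
    (hf : ∀ i ∈ s, OkF (f i) 1) (hg : OkF g B) :
    PP W (fun x => ∑ i ∈ s, f i x) g = ∑ i ∈ s, PP W (f i) g := by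
  unfold PP
  rw [← integral_finset_sum s (fun i hi => intOn_mul_CC hWm hM (hf i hi) hg)]
  refine setIntegral_congr_fun measurableSet_I01 (fun x _ => ?_)
  rw [Finset.sum_mul]

lemma CC_sum {ι : Type*} (s : Finset ι) {g : ι → ℝ → ℝ}
    (hg : ∀ i ∈ s, OkF (g i) 1) (hWm : Measurable (Function.uncurry W))
    (hM : ∀ x y, |W x y| ≤ M) (x : ℝ) :
    CC W (fun y => ∑ i ∈ s, g i y) x = ∑ i ∈ s, CC W (g i) x := by
  unfold CC
  rw [← integral_finset_sum s (fun i hi => intOn_of_bound (f := fun y => g i y * W x y)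
    (((hg i hi).meas).mul (meas_slice hWm x)) (1 * M) (fun y hy => by
      rw [abs_mul]
      exact mul_le_mul ((hg i hi).bdd y hy) (hM x y) (abs_nonneg _) zero_le_one))]
  refine setIntegral_congr_fun measurableSet_I01 (fun y _ => ?_)
  rw [Finset.sum_mul]

include hWm hM in
lemma PP_sum_right {ι : Type*} (s : Finset ι) {f : ℝ → ℝ} {g : ι → ℝ → ℝ} {A : ℝ}
    (hf : OkF f A) (hg : ∀ i ∈ s, OkF (g i) 1) :
    PP W f (fun y => ∑ i ∈ s, g i y) = ∑ i ∈ s, PP W f (g i) := by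
  unfold PP
  rw [← integral_finset_sum s (fun i hi => intOn_mul_CC hWm hM hf (hg i hi))]
  refine setIntegral_congr_fun measurableSet_I01 (fun x _ => ?_)
  rw [CC_sum s hg hWm hM x, Finset.mul_sum]

lemma CC_smul (c : ℝ) (g : ℝ → ℝ) (x : ℝ) :
    CC W (fun y => c * g y) x = c * CC W g x := by
  unfold CC
  rw [← integral_const_mul]
  refine setIntegral_congr_fun measurableSet_I01 (fun y _ => ?_)
  ring

lemma PP_smul (c d : ℝ) (f g : ℝ → ℝ) :
    PP W (fun x => c * f x) (fun y => d * g y) = (c * d) * PP W f g := by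
  unfold PP
  rw [← integral_const_mul]
  refine setIntegral_congr_fun measurableSet_I01 (fun x _ => ?_)
  rw [CC_smul]
  ring

include hWm hM in
lemma CC_sub {g g' : ℝ → ℝ} {B B' : ℝ} (hg : OkF g B) (hg' : OkF g' B') (x : ℝ) :
    CC W (fun y => g y - g' y) x = CC W g x - CC W g' x := by
  unfold CC
  rw [← integral_sub (intOn_of_bound (f := fun y => g y * W x y) (hg.meas.mul (meas_slice hWm x)) (B * M)
      (fun y hy => by rw [abs_mul]; exact mul_le_mul (hg.bdd y hy) (hM x y) (abs_nonneg _) hg.nonneg))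
    (intOn_of_bound (f := fun y => g' y * W x y) (hg'.meas.mul (meas_slice hWm x)) (B' * M)
      (fun y hy => by rw [abs_mul]; exact mul_le_mul (hg'.bdd y hy) (hM x y) (abs_nonneg _) hg'.nonneg))]
  refine setIntegral_congr_fun measurableSet_I01 (fun y _ => ?_)
  ring

include hWm hM in
lemma PP_sub_right {f g g' : ℝ → ℝ} {A B B' : ℝ} (hf : OkF f A) (hg : OkF g B)
    (hg' : OkF g' B') : PP W f (fun y => g y - g' y) = PP W f g - PP W f g' := by
  unfold PP
  rw [← integral_sub (intOn_mul_CC hWm hM hf hg) (intOn_mul_CC hWm hM hf hg')]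
  refine setIntegral_congr_fun measurableSet_I01 (fun x _ => ?_)
  rw [CC_sub hWm hM hg hg' x]
  ring

lemma int_abs_nonneg (f : ℝ → ℝ) : 0 ≤ ∫ x in I01, |f x| :=
  integral_nonneg (fun x => abs_nonneg _)

lemma int_abs_le {f : ℝ → ℝ} {A : ℝ} (hf : OkF f A) : (∫ x in I01, |f x|) ≤ A := by
  have h3 := norm_setIntegral_le_of_norm_le_const (μ := volume) (s := I01)
    (f := fun x => |f x|) (C := A) (by rw [volume_I01]; exact ENNReal.one_lt_top)
    (fun x hx => by simpa [abs_abs] using hf.bdd x hx)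
  rw [measureReal_def, volume_I01] at h3
  simp only [Real.norm_eq_abs, ENNReal.toReal_one, mul_one] at h3
  exact le_trans (le_abs_self _) h3

include hWm hM in
lemma abs_CC_le' {g : ℝ → ℝ} {B : ℝ} (hg : OkF g B) (x : ℝ) :
    |CC W g x| ≤ (∫ y in I01, |g y|) * M := by
  have h0M : 0 ≤ M := le_trans (abs_nonneg _) (hM 0 0)
  have hint : IntegrableOn (fun y => |g y| * M) I01 :=
    (intOn_of_bound hg.meas.abs B (fun y hy => by simpa [abs_abs] using hg.bdd y hy)).mul_const _
  calc |CC W g x| ≤ ∫ y in I01, |g y| * |W x y| := by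
        have := norm_integral_le_integral_norm (f := fun y => g y * W x y)
          (μ := volume.restrict I01)
        simpa [CC, Real.norm_eq_abs, abs_mul] using this
    _ ≤ ∫ y in I01, |g y| * M := by
        refine setIntegral_mono_on ?_ hint measurableSet_I01 (fun y _ => ?_)
        · exact intOn_of_bound (hg.meas.abs.mul (meas_slice hWm x).abs) (B * M)
            (fun y hy => by
              rw [abs_mul, abs_abs, abs_abs]
              exact mul_le_mul (hg.bdd y hy) (hM x y) (abs_nonneg _) hg.nonneg)
        · exact mul_le_mul_of_nonneg_left (hM x y) (abs_nonneg _)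
    _ = (∫ y in I01, |g y|) * M := by rw [integral_mul_const]

include hWm hM in
lemma abs_PP_le'' {f g : ℝ → ℝ} {A B : ℝ} (hf : OkF f A) (hg : OkF g B) :
    |PP W f g| ≤ A * ((∫ y in I01, |g y|) * M) := by
  have h0M : 0 ≤ M := le_trans (abs_nonneg _) (hM 0 0)
  have hC := abs_CC_le' hWm hM hg
  have hq : 0 ≤ (∫ y in I01, |g y|) * M := mul_nonneg (int_abs_nonneg g) h0M
  have hint : IntegrableOn (fun x => |f x| * ((∫ y in I01, |g y|) * M)) I01 :=
    (intOn_of_bound hf.meas.abs A (fun x hx => by simpa [abs_abs] using hf.bdd x hx)).mul_const _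
  calc |PP W f g| ≤ ∫ x in I01, |f x| * |CC W g x| := by
        have := norm_integral_le_integral_norm (f := fun x => f x * CC W g x)
          (μ := volume.restrict I01)
        simpa [PP, Real.norm_eq_abs, abs_mul] using this
    _ ≤ ∫ x in I01, |f x| * ((∫ y in I01, |g y|) * M) := by
        refine setIntegral_mono_on ?_ hint measurableSet_I01 (fun x _ => ?_)
        · exact intOn_of_bound (hf.meas.abs.mul (meas_CC hWm hg.meas).abs) (A * (B * M))
            (fun x hx => by
              rw [abs_mul, abs_abs, abs_abs]
              exact mul_le_mul (hf.bdd x hx) (abs_CC_le hWm hM hg.meas hg.bdd hg.nonneg x)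
                (abs_nonneg _) hf.nonneg)
        · exact mul_le_mul_of_nonneg_left (hC x) (abs_nonneg _)
    _ = (∫ x in I01, |f x|) * ((∫ y in I01, |g y|) * M) := by rw [integral_mul_const]
    _ ≤ A * ((∫ y in I01, |g y|) * M) := mul_le_mul_of_nonneg_right (int_abs_le hf) hq

include hWm hM in
lemma PP_diff_bound {f f' g g' : ℝ → ℝ} (hf : OkF f 1) (hf' : OkF f' 1) (hg : OkF g 1)
    (hg' : OkF g' 1) :
    |PP W f g - PP W f' g'| ≤
      ((∫ x in I01, |f x - f' x|) + (∫ y in I01, |g y - g' y|)) * M := by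
  have h0M : 0 ≤ M := le_trans (abs_nonneg _) (hM 0 0)
  have hff' : OkF (fun x => f x - f' x) 2 :=
    ⟨hf.meas.sub hf'.meas, fun x hx => (abs_sub (f x) (f' x)).trans
      (by linarith [hf.bdd x hx, hf'.bdd x hx]), by norm_num⟩
  have hgg' : OkF (fun y => g y - g' y) 2 :=
    ⟨hg.meas.sub hg'.meas, fun x hx => (abs_sub (g x) (g' x)).trans
      (by linarith [hg.bdd x hx, hg'.bdd x hx]), by norm_num⟩
  have e1 : PP W f g - PP W f' g' =
      PP W (fun x => f x - f' x) g + PP W f' (fun y => g y - g' y) := by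
    rw [PP_sub_left hWm hM hf hf' hg, PP_sub_right hWm hM hf' hg hg']
    ring
  rw [e1]
  have b1 : |PP W (fun x => f x - f' x) g| ≤ (∫ x in I01, |f x - f' x|) * M := by
    have := abs_PP_le' hWm hM hff' hg
    simpa using this
  have b2 : |PP W f' (fun y => g y - g' y)| ≤ (∫ y in I01, |g y - g' y|) * M := by
    have := abs_PP_le'' hWm hM hf' hgg'
    simpa using this
  calc |PP W (fun x => f x - f' x) g + PP W f' (fun y => g y - g' y)|
      ≤ |PP W (fun x => f x - f' x) g| + |PP W f' (fun y => g y - g' y)| := abs_add_le _ _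
    _ ≤ (∫ x in I01, |f x - f' x|) * M + (∫ y in I01, |g y - g' y|) * M := add_le_add b1 b2
    _ = _ := by ring

end Scratch2

namespace Scratch3
open Scratch Scratch2

variable {q : ℕ} {W : ℝ → ℝ → ℝ} {M : ℝ} {J : Matrix (Fin q) (Fin q) ℝ}
variable (hWm : Measurable (Function.uncurry W)) (hM : ∀ x y, |W x y| ≤ M)

lemma rho_mem (ρ : FracPartition q) (i : Fin q) {x : ℝ} (hx : x ∈ I01) :
    0 ≤ ρ.toFun i x ∧ ρ.toFun i x ≤ 1 := by
  have := ρ.mem_I01 i x hx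
  simpa [I01, Set.mem_Icc] using this

lemma okF_rho (ρ : FracPartition q) (i : Fin q) : OkF (ρ.toFun i) 1 := by
  refine ⟨ρ.measurable i, fun x hx => ?_, zero_le_one⟩
  obtain ⟨h1, h2⟩ := rho_mem ρ i hx
  rw [abs_le]; exact ⟨by linarith, h2⟩

lemma energy_eq (W : ℝ → ℝ → ℝ) (J : Matrix (Fin q) (Fin q) ℝ) (ρ : FracPartition q) :
    energy W J ρ = -∑ i, ∑ j, J i j * PP W (ρ.toFun i) (ρ.toFun j) := by
  unfold energy
  simp only [PP_def]

include hWm hM in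
lemma abs_energy_le (ρ : FracPartition q) :
    |energy W J ρ| ≤ (∑ i, ∑ j, |J i j|) * M := by
  have h0M : 0 ≤ M := le_trans (abs_nonneg _) (hM 0 0)
  rw [energy_eq, abs_neg]
  calc |∑ i, ∑ j, J i j * PP W (ρ.toFun i) (ρ.toFun j)|
      ≤ ∑ i, ∑ j, |J i j * PP W (ρ.toFun i) (ρ.toFun j)| :=
        (Finset.abs_sum_le_sum_abs _ _).trans (Finset.sum_le_sum fun i _ =>
          Finset.abs_sum_le_sum_abs _ _)
    _ ≤ ∑ i, ∑ j, |J i j| * M := by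
        refine Finset.sum_le_sum fun i _ => Finset.sum_le_sum fun j _ => ?_
        rw [abs_mul]
        have := abs_PP_le hWm hM (okF_rho ρ i) (okF_rho ρ j)
        calc |J i j| * |PP W (ρ.toFun i) (ρ.toFun j)| ≤ |J i j| * (1 * (1 * M)) :=
              mul_le_mul_of_nonneg_left this (abs_nonneg _)
          _ = |J i j| * M := by ring
    _ = (∑ i, ∑ j, |J i j|) * M := by rw [Finset.sum_mul]; congr 1; ext i; rw [Finset.sum_mul]

include hWm hM in
lemma energy_diff_le (ρ σ : FracPartition q) :
    |energy W J ρ - energy W J σ| ≤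
      (∑ i, ∑ j, |J i j|) * (2 * M * (∑ i, ∫ x in I01, |ρ.toFun i x - σ.toFun i x|)) := by
  have h0M : 0 ≤ M := le_trans (abs_nonneg _) (hM 0 0)
  set D := ∑ i, ∫ x in I01, |ρ.toFun i x - σ.toFun i x| with hD
  have hdnn : ∀ i : Fin q, 0 ≤ ∫ x in I01, |ρ.toFun i x - σ.toFun i x| :=
    fun i => int_abs_nonneg _
  have hdle : ∀ i : Fin q, (∫ x in I01, |ρ.toFun i x - σ.toFun i x|) ≤ D :=
    fun i => Finset.single_le_sum (fun j _ => hdnn j) (Finset.mem_univ i)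
  rw [energy_eq, energy_eq]
  have e1 : (-∑ i, ∑ j, J i j * PP W (ρ.toFun i) (ρ.toFun j)) -
      (-∑ i, ∑ j, J i j * PP W (σ.toFun i) (σ.toFun j)) =
      -∑ i, ∑ j, J i j * (PP W (ρ.toFun i) (ρ.toFun j) - PP W (σ.toFun i) (σ.toFun j)) := by
    have e2 : (∑ i, ∑ j, J i j * PP W (ρ.toFun i) (ρ.toFun j)) -
        (∑ i, ∑ j, J i j * PP W (σ.toFun i) (σ.toFun j)) =
        ∑ i, ∑ j, J i j * (PP W (ρ.toFun i) (ρ.toFun j) - PP W (σ.toFun i) (σ.toFun j)) := by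
      rw [← Finset.sum_sub_distrib]
      refine Finset.sum_congr rfl fun i _ => ?_
      rw [← Finset.sum_sub_distrib]
      exact Finset.sum_congr rfl fun j _ => by ring
    linarith [e2]
  rw [e1, abs_neg]
  calc |∑ i, ∑ j, J i j * (PP W (ρ.toFun i) (ρ.toFun j) - PP W (σ.toFun i) (σ.toFun j))|
      ≤ ∑ i, ∑ j, |J i j * (PP W (ρ.toFun i) (ρ.toFun j) - PP W (σ.toFun i) (σ.toFun j))| :=
        (Finset.abs_sum_le_sum_abs _ _).trans (Finset.sum_le_sum fun i _ =>
          Finset.abs_sum_le_sum_abs _ _)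
    _ ≤ ∑ i, ∑ j, |J i j| * (2 * M * D) := by
        refine Finset.sum_le_sum fun i _ => Finset.sum_le_sum fun j _ => ?_
        rw [abs_mul]
        refine mul_le_mul_of_nonneg_left ?_ (abs_nonneg _)
        have hb := PP_diff_bound hWm hM (okF_rho ρ i) (okF_rho σ i) (okF_rho ρ j) (okF_rho σ j)
        refine hb.trans ?_
        have : (∫ x in I01, |ρ.toFun i x - σ.toFun i x|) +
            (∫ y in I01, |ρ.toFun j y - σ.toFun j y|) ≤ D + D :=
          add_le_add (hdle i) (hdle j)
        calc ((∫ x in I01, |ρ.toFun i x - σ.toFun i x|) +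
              (∫ y in I01, |ρ.toFun j y - σ.toFun j y|)) * M ≤ (D + D) * M :=
            mul_le_mul_of_nonneg_right this h0M
          _ = 2 * M * D := by ring
    _ = (∑ i, ∑ j, |J i j|) * (2 * M * D) := by
        rw [Finset.sum_mul]; congr 1; ext i; rw [Finset.sum_mul]

lemma int_const_I01 (c : ℝ) : (∫ _x in I01, c) = c := by
  rw [setIntegral_const, measureReal_def, volume_I01]
  simp

/-- constant fractional partition from a distribution -/
def distFP (a : Fin q → ℝ) (ha : IsDist a) : FracPartition q where
  toFun := fun i _ => a i
  measurable := fun _ => measurable_const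
  mem_I01 := fun i x _ => by
    have h1 : a i ≤ 1 := by
      rw [← ha.2]
      exact Finset.single_le_sum (fun j _ => ha.1 j) (Finset.mem_univ i)
    exact ⟨ha.1 i, h1⟩
  sum_one := fun x _ => ha.2

def mgseSet (W : ℝ → ℝ → ℝ) (J : Matrix (Fin q) (Fin q) ℝ) (a : Fin q → ℝ) : Set ℝ :=
  {e | ∃ ρ : FracPartition q, (∀ i, (∫ x in I01, ρ.toFun i x) = a i) ∧ e = energy W J ρ}

lemma mgse_eq (W : ℝ → ℝ → ℝ) (J : Matrix (Fin q) (Fin q) ℝ) (a : Fin q → ℝ) :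
    mgse W J a = sInf (mgseSet W J a) := rfl

lemma mgseSet_nonempty {a : Fin q → ℝ} (ha : IsDist a) : (mgseSet W J a).Nonempty :=
  ⟨energy W J (distFP a ha), distFP a ha, fun i => int_const_I01 (a i), rfl⟩

include hWm hM in
lemma mgseSet_bddBelow : BddBelow (mgseSet W J a) := by
  refine ⟨-((∑ i, ∑ j, |J i j|) * M), fun e he => ?_⟩
  obtain ⟨ρ, _, rfl⟩ := he
  exact neg_le_of_abs_le (abs_energy_le hWm hM ρ)

include hWm hM in
lemma mgse_le_energy {a : Fin q → ℝ} (ρ : FracPartition q)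
    (hρ : ∀ i, (∫ x in I01, ρ.toFun i x) = a i) : mgse W J a ≤ energy W J ρ :=
  csInf_le (mgseSet_bddBelow hWm hM) ⟨ρ, hρ, rfl⟩

include hWm hM in
lemma abs_mgse_le {a : Fin q → ℝ} (ha : IsDist a) :
    |mgse W J a| ≤ (∑ i, ∑ j, |J i j|) * M := by
  rw [abs_le]
  constructor
  · rw [mgse_eq]
    refine le_csInf (mgseSet_nonempty ha) fun e he => ?_
    obtain ⟨ρ, _, rfl⟩ := he
    exact neg_le_of_abs_le (abs_energy_le hWm hM ρ)
  · refine (mgse_le_energy hWm hM (distFP a ha) (fun i => int_const_I01 (a i))).trans ?_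
    exact le_of_abs_le (abs_energy_le hWm hM _)

end Scratch3

namespace Scratch4
open Scratch Scratch2 Scratch3

variable {q : ℕ} {W : ℝ → ℝ → ℝ} {M : ℝ} {J : Matrix (Fin q) (Fin q) ℝ}
variable (hWm : Measurable (Function.uncurry W)) (hM : ∀ x y, |W x y| ≤ M)

/-- Transfer a fractional partition with marginals `a` to one with marginals `b`,
with total L¹ change at most `∑ |a i - b i|`. -/
lemma exists_transfer {a b : Fin q → ℝ} (ha : IsDist a) (hb : IsDist b)
    (ρ : FracPartition q) (hρ : ∀ i, (∫ x in I01, ρ.toFun i x) = a i) :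
    ∃ σ : FracPartition q, (∀ i, (∫ x in I01, σ.toFun i x) = b i) ∧
      (∑ i, ∫ x in I01, |σ.toFun i x - ρ.toFun i x|) ≤ ∑ i, |a i - b i| := by
  classical
  set m : Fin q → ℝ := fun i => min (a i) (b i) with hm
  set v : Fin q → ℝ := fun i => a i - m i with hv
  set u : Fin q → ℝ := fun i => b i - m i with hu
  have hv_nn : ∀ i, 0 ≤ v i := fun i => by simp [hv, hm]
  have hu_nn : ∀ i, 0 ≤ u i := fun i => by simp [hu, hm]
  have hm_nn : ∀ i, 0 ≤ m i := fun i => le_min (ha.1 i) (hb.1 i)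
  have huv : ∀ i, u i * v i = 0 := by
    intro i
    rcases le_total (a i) (b i) with hc | hc
    · have h0 : v i = 0 := by simp [hv, hm, min_eq_left hc]
      rw [h0, mul_zero]
    · have h0 : u i = 0 := by simp [hu, hm, min_eq_right hc]
      rw [h0, zero_mul]
  set r : ℝ := ∑ i, v i with hr
  have hsum_uv : ∑ i, u i = r := by
    rw [hr]
    have h1 : ∑ i, u i = 1 - ∑ i, m i := by
      rw [hu]; rw [Finset.sum_sub_distrib, hb.2]
    have h2 : ∑ i, v i = 1 - ∑ i, m i := by
      rw [hv]; rw [Finset.sum_sub_distrib, ha.2]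
    rw [h1, h2]
  have habs : ∀ i, v i + u i = |a i - b i| := by
    intro i
    rcases le_total (a i) (b i) with hc | hc
    · rw [abs_of_nonpos (by linarith)]
      simp only [hv, hu, hm, min_eq_left hc]; ring
    · rw [abs_of_nonneg (by linarith)]
      simp only [hv, hu, hm, min_eq_right hc]; ring
  by_cases hr0 : r = 0
  · -- then a = b, take σ = ρ
    have hab : ∀ i, a i = b i := by
      intro i
      have hvz : ∀ i, v i = 0 := by
        intro i
        have := (Finset.sum_eq_zero_iff_of_nonneg (fun j _ => hv_nn j)).1 (hr ▸ hr0) i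
          (Finset.mem_univ i)
        exact this
      have huz : ∀ i, u i = 0 := by
        intro i
        have hs : ∑ j, u j = 0 := by rw [hsum_uv]; exact hr0
        exact (Finset.sum_eq_zero_iff_of_nonneg (fun j _ => hu_nn j)).1 hs i (Finset.mem_univ i)
      have h1 := hvz i; have h2 := huz i
      simp only [hv, hu] at h1 h2
      linarith
    refine ⟨ρ, fun i => by rw [hρ i, hab i], ?_⟩
    have : ∀ i : Fin q, (∫ x in I01, |ρ.toFun i x - ρ.toFun i x|) = 0 := by
      intro i; simp
    rw [Finset.sum_congr rfl (fun i _ => this i)]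
    simp
    exact Finset.sum_nonneg fun i _ => abs_nonneg _
  · have hrpos : 0 < r := lt_of_le_of_ne (Finset.sum_nonneg fun i _ => hv_nn i) (Ne.symm hr0)
    set π : Fin q → Fin q → ℝ := fun i j => (if i = j then m i else 0) + u i * v j / r with hπ
    have hπ_nn : ∀ i j, 0 ≤ π i j := by
      intro i j
      refine add_nonneg ?_ (div_nonneg (mul_nonneg (hu_nn i) (hv_nn j)) hrpos.le)
      split
      · exact hm_nn i
      · exact le_refl 0
    have hπ_row : ∀ i, ∑ j, π i j = b i := by
      intro i
      rw [hπ]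
      simp only
      rw [Finset.sum_add_distrib]
      have h1 : (∑ j, if i = j then m i else 0) = m i := by
        simp [Finset.sum_ite_eq]
      have h2 : (∑ j, u i * v j / r) = u i := by
        rw [← Finset.sum_div, ← Finset.mul_sum, ← hr, mul_div_assoc, div_self hr0, mul_one]
      rw [h1, h2]
      simp only [hu]; ring
    have hπ_diag : ∀ i, π i i = m i := by
      intro i
      rw [hπ]
      simp [huv i]
    have hπ_zero : ∀ i j, a j = 0 → π i j = 0 := by
      intro i j hj
      have hmj : m j = 0 := by
        simp only [hm]
        rw [hj, min_eq_left (hb.1 j)]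
      have hvj : v j = 0 := by simp [hv, hj, hmj]
      rw [hπ]
      simp only [hvj, mul_zero, zero_div, add_zero]
      split
      · next h => rw [h, hmj]
      · rfl
    set Mm : Fin q → Fin q → ℝ := fun i j =>
      if a j = 0 then (if i = j then (1:ℝ) else 0) else π i j / a j with hMm
    have hMm_nn : ∀ i j, 0 ≤ Mm i j := by
      intro i j
      rw [hMm]
      simp only
      split
      · split <;> norm_num
      · next hj => exact div_nonneg (hπ_nn i j) (ha.1 j)
    have hMm_col : ∀ j, ∑ i, Mm i j = 1 := by
      intro j
      rw [hMm]
      simp only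
      by_cases hj : a j = 0
      · simp [hj, Finset.sum_ite_eq']
      · simp only [if_neg hj]
        rw [← Finset.sum_div]
        have hcol : ∑ i, π i j = a j := by
          rw [hπ]
          simp only
          rw [Finset.sum_add_distrib]
          have h1 : (∑ i : Fin q, if i = j then m i else 0) = m j := by
            rw [Finset.sum_ite_eq' Finset.univ j m]
            simp
          have h2 : (∑ i, u i * v j / r) = v j := by
            rw [← Finset.sum_div, ← Finset.sum_mul, hsum_uv, mul_comm, mul_div_assoc,
              div_self hr0, mul_one]
          rw [h1, h2]
          simp only [hv]; ring
        rw [hcol, div_self hj]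
    have hMa : ∀ i j, Mm i j * a j = π i j := by
      intro i j
      rw [hMm]
      simp only
      by_cases hj : a j = 0
      · rw [if_pos hj, hj, mul_zero, hπ_zero i j hj]
      · rw [if_neg hj, div_mul_cancel₀ _ hj]
    have hMrow : ∀ i, ∑ j, Mm i j * a j = b i := by
      intro i
      rw [Finset.sum_congr rfl (fun j _ => hMa i j)]
      exact hπ_row i
    -- the per-row L¹ distortion bound
    have hMdelta : ∀ i, (∑ j, |Mm i j - (if i = j then 1 else 0)| * a j) ≤ v i + u i := by
      intro i
      have hterm : ∀ j, |Mm i j - (if i = j then 1 else 0)| * a j ≤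
          (if i = j then v i else u i * v j / r) := by
        intro j
        by_cases hj : a j = 0
        · rw [hj, mul_zero]
          split
          · next h => subst h; exact hv_nn i
          · exact div_nonneg (mul_nonneg (hu_nn i) (hv_nn j)) hrpos.le
        · have haj : 0 ≤ a j := ha.1 j
          have : |Mm i j - (if i = j then 1 else 0)| * a j =
              |Mm i j * a j - (if i = j then 1 else 0) * a j| := by
            rw [← abs_of_nonneg haj, ← abs_mul, sub_mul, abs_of_nonneg haj]
          rw [this, hMa i j]
          by_cases hij : i = j
          · subst hij
            rw [if_pos rfl, one_mul, hπ_diag i]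
            have : |m i - a i| = v i := by
              rw [abs_sub_comm, abs_of_nonneg (hv_nn i)]
            simpa [hv] using le_of_eq this
          · rw [if_neg hij, zero_mul, sub_zero, if_neg hij]
            rw [hπ]
            simp only [if_neg hij, zero_add]
            rw [abs_of_nonneg (div_nonneg (mul_nonneg (hu_nn i) (hv_nn j)) hrpos.le)]
      calc (∑ j, |Mm i j - (if i = j then 1 else 0)| * a j)
          ≤ ∑ j, (if i = j then v i else u i * v j / r) := Finset.sum_le_sum fun j _ => hterm j
        _ ≤ v i + u i := by
            rw [← Finset.add_sum_erase Finset.univ _ (Finset.mem_univ i)]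
            rw [if_pos rfl]
            refine add_le_add_right ?_ (v i)
            have hsub : (∑ j ∈ Finset.univ.erase i, (if i = j then v i else u i * v j / r)) =
                ∑ j ∈ Finset.univ.erase i, u i * v j / r := by
              refine Finset.sum_congr rfl fun j hj => ?_
              rw [if_neg (Ne.symm (Finset.mem_erase.1 hj).1)]
            rw [hsub]
            calc (∑ j ∈ Finset.univ.erase i, u i * v j / r)
                ≤ ∑ j, u i * v j / r := by
                  refine Finset.sum_le_sum_of_subset_of_nonneg (Finset.subset_univ _)
                    fun j _ _ => div_nonneg (mul_nonneg (hu_nn i) (hv_nn j)) hrpos.le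
              _ = u i := by
                  rw [← Finset.sum_div, ← Finset.mul_sum, ← hr, mul_div_assoc, div_self hr0,
                    mul_one]
    -- define σ
    have hσmeas : ∀ i, Measurable (fun x => ∑ j, Mm i j * ρ.toFun j x) :=
      fun i => Finset.measurable_sum _ fun j _ => (ρ.measurable j).const_mul _
    have hσ_nn : ∀ i x, x ∈ I01 → 0 ≤ ∑ j, Mm i j * ρ.toFun j x := by
      intro i x hx
      exact Finset.sum_nonneg fun j _ => mul_nonneg (hMm_nn i j) (rho_mem ρ j hx).1
    have hσ_sum : ∀ x ∈ I01, ∑ i, ∑ j, Mm i j * ρ.toFun j x = 1 := by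
      intro x hx
      rw [Finset.sum_comm]
      have : ∀ j : Fin q, ∑ i, Mm i j * ρ.toFun j x = ρ.toFun j x := by
        intro j
        rw [← Finset.sum_mul, hMm_col j, one_mul]
      rw [Finset.sum_congr rfl (fun j _ => this j)]
      exact ρ.sum_one x hx
    set σ : FracPartition q :=
      { toFun := fun i x => ∑ j, Mm i j * ρ.toFun j x
        measurable := hσmeas
        mem_I01 := by
          intro i x hx
          refine ⟨hσ_nn i x hx, ?_⟩
          calc (∑ j, Mm i j * ρ.toFun j x) ≤ ∑ i', ∑ j, Mm i' j * ρ.toFun j x :=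
              Finset.single_le_sum (fun i' _ => hσ_nn i' x hx) (Finset.mem_univ i)
            _ = 1 := hσ_sum x hx
        sum_one := hσ_sum } with hσdef
    have hint_term : ∀ i j, IntegrableOn (fun x => Mm i j * ρ.toFun j x) I01 := by
      intro i j
      exact intOn_of_bound ((ρ.measurable j).const_mul _) (|Mm i j| * 1) (fun x hx => by
        rw [abs_mul]
        exact mul_le_mul_of_nonneg_left ((okF_rho ρ j).bdd x hx) (abs_nonneg _))
    have hσint : ∀ i, (∫ x in I01, σ.toFun i x) = b i := by
      intro i
      have : (∫ x in I01, σ.toFun i x) = ∑ j, Mm i j * a j := by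
        rw [hσdef]
        simp only
        rw [integral_finset_sum _ (fun j _ => hint_term i j)]
        refine Finset.sum_congr rfl fun j _ => ?_
        rw [integral_const_mul, hρ j]
      rw [this, hMrow i]
    refine ⟨σ, hσint, ?_⟩
    have hdi : ∀ i : Fin q, (∫ x in I01, |σ.toFun i x - ρ.toFun i x|) ≤ v i + u i := by
      intro i
      have hptw : ∀ x ∈ I01, |σ.toFun i x - ρ.toFun i x| ≤
          ∑ j, |Mm i j - (if i = j then 1 else 0)| * ρ.toFun j x := by
        intro x hx
        have e1 : σ.toFun i x - ρ.toFun i x =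
            ∑ j, (Mm i j - (if i = j then 1 else 0)) * ρ.toFun j x := by
          have e2 : ∑ j, (Mm i j - (if i = j then 1 else 0)) * ρ.toFun j x
              = (∑ j, Mm i j * ρ.toFun j x) -
                ∑ j, (if i = j then (1:ℝ) else 0) * ρ.toFun j x := by
            rw [← Finset.sum_sub_distrib]
            exact Finset.sum_congr rfl fun j _ => by ring
          have h2 : (∑ j, (if i = j then (1:ℝ) else 0) * ρ.toFun j x) = ρ.toFun i x := by
            simp [Finset.sum_ite_eq]
          rw [e2, h2, hσdef]
        rw [e1]
        calc |∑ j, (Mm i j - (if i = j then 1 else 0)) * ρ.toFun j x|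
            ≤ ∑ j, |(Mm i j - (if i = j then 1 else 0)) * ρ.toFun j x| :=
              Finset.abs_sum_le_sum_abs _ _
          _ = ∑ j, |Mm i j - (if i = j then 1 else 0)| * ρ.toFun j x := by
              refine Finset.sum_congr rfl fun j _ => ?_
              rw [abs_mul, abs_of_nonneg (rho_mem ρ j hx).1]
      have hintL : IntegrableOn (fun x => |σ.toFun i x - ρ.toFun i x|) I01 :=
        intOn_of_bound ((σ.measurable i).sub (ρ.measurable i)).abs 2 (fun x hx => by
          rw [abs_abs]
          exact (abs_sub _ _).trans
            (by linarith [(okF_rho σ i).bdd x hx, (okF_rho ρ i).bdd x hx]))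
      have hint_term' : ∀ j : Fin q,
          IntegrableOn (fun x => |Mm i j - (if i = j then 1 else 0)| * ρ.toFun j x) I01 := by
        intro j
        exact intOn_of_bound ((ρ.measurable j).const_mul _)
          (|Mm i j - (if i = j then 1 else 0)| * 1) (fun x hx => by
            rw [abs_mul, abs_abs]
            exact mul_le_mul_of_nonneg_left ((okF_rho ρ j).bdd x hx) (abs_nonneg _))
      have hintR : IntegrableOn
          (fun x => ∑ j, |Mm i j - (if i = j then 1 else 0)| * ρ.toFun j x) I01 :=
        integrable_finset_sum _ (fun j _ => hint_term' j)
      calc (∫ x in I01, |σ.toFun i x - ρ.toFun i x|)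
          ≤ ∫ x in I01, ∑ j, |Mm i j - (if i = j then 1 else 0)| * ρ.toFun j x :=
            setIntegral_mono_on hintL hintR measurableSet_I01 hptw
        _ = ∑ j, |Mm i j - (if i = j then 1 else 0)| * a j := by
            rw [integral_finset_sum _ (fun j _ => hint_term' j)]
            exact Finset.sum_congr rfl fun j _ => by rw [integral_const_mul, hρ j]
        _ ≤ v i + u i := hMdelta i
    calc (∑ i, ∫ x in I01, |σ.toFun i x - ρ.toFun i x|)
        ≤ ∑ i, (v i + u i) := Finset.sum_le_sum fun i _ => hdi i
      _ = ∑ i, |a i - b i| := Finset.sum_congr rfl fun i _ => habs i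

include hWm hM in
lemma mgse_le_add {a b : Fin q → ℝ} (ha : IsDist a) (hb : IsDist b) :
    mgse W J b ≤ mgse W J a + (∑ i, ∑ j, |J i j|) * (2 * M * ∑ i, |a i - b i|) := by
  have h0M : 0 ≤ M := le_trans (abs_nonneg _) (hM 0 0)
  have hJnn : 0 ≤ ∑ i, ∑ j, |J i j| :=
    Finset.sum_nonneg fun i _ => Finset.sum_nonneg fun j _ => abs_nonneg _
  set K := (∑ i, ∑ j, |J i j|) * (2 * M * ∑ i, |a i - b i|) with hK
  have key : mgse W J b - K ≤ sInf (mgseSet W J a) := by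
    refine le_csInf (mgseSet_nonempty ha) fun e he => ?_
    obtain ⟨ρ, hρ, rfl⟩ := he
    obtain ⟨σ, hσ, hd⟩ := exists_transfer ha hb ρ hρ
    have h1 : mgse W J b ≤ energy W J σ := mgse_le_energy hWm hM σ hσ
    have h2 := energy_diff_le hWm hM (J := J) σ ρ
    have h3 : (∑ i, ∑ j, |J i j|) * (2 * M * ∑ i, ∫ x in I01, |σ.toFun i x - ρ.toFun i x|) ≤
        K := by
      rw [hK]
      refine mul_le_mul_of_nonneg_left ?_ hJnn
      exact mul_le_mul_of_nonneg_left hd (by positivity)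
    have h4 := (le_of_abs_le h2).trans h3
    linarith
  rw [mgse_eq W J a]
  linarith

include hWm hM in
lemma abs_mgse_sub_le {a b : Fin q → ℝ} (ha : IsDist a) (hb : IsDist b) :
    |mgse W J a - mgse W J b| ≤ (∑ i, ∑ j, |J i j|) * (2 * M * ∑ i, |a i - b i|) := by
  rw [abs_le]
  constructor
  · have := mgse_le_add hWm hM (J := J) ha hb
    linarith
  · have := mgse_le_add hWm hM (J := J) hb ha
    have heq : (∑ i, |b i - a i|) = ∑ i, |a i - b i| :=
      Finset.sum_congr rfl fun i _ => abs_sub_comm _ _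
    rw [heq] at this
    linarith

def lSet (W : ℝ → ℝ → ℝ) (J : Matrix (Fin q) (Fin q) ℝ) (x : Fin q → ℝ) : Set ℝ :=
  {e | ∃ a : Fin q → ℝ, IsDist a ∧ (∀ i, x i ≤ a i) ∧ e = mgse W J a}

lemma ltgseV_eq (W : ℝ → ℝ → ℝ) (J : Matrix (Fin q) (Fin q) ℝ) (x : Fin q → ℝ) :
    ltgseV W J x = sInf (lSet W J x) := rfl

lemma exists_dist_ge (hq : 1 ≤ q) {x : Fin q → ℝ} (hx : ∀ i, 0 ≤ x i)
    (hs : ∑ i, x i ≤ 1) : ∃ a : Fin q → ℝ, IsDist a ∧ ∀ i, x i ≤ a i := by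
  refine ⟨fun i => x i + (1 - ∑ j, x j) / q, ⟨fun i => ?_, ?_⟩, fun i => ?_⟩
  · have : (0:ℝ) ≤ (1 - ∑ j, x j) / q := div_nonneg (by linarith) (Nat.cast_nonneg q)
    linarith [hx i]
  · rw [Finset.sum_add_distrib, Finset.sum_const, Finset.card_univ, Fintype.card_fin,
      nsmul_eq_mul]
    have hq0 : (q:ℝ) ≠ 0 := Nat.cast_ne_zero.2 (by omega)
    field_simp
    ring
  · have : (0:ℝ) ≤ (1 - ∑ j, x j) / q := div_nonneg (by linarith) (Nat.cast_nonneg q)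
    linarith

include hWm hM in
lemma lSet_bddBelow {x : Fin q → ℝ} : BddBelow (lSet W J x) := by
  refine ⟨-((∑ i, ∑ j, |J i j|) * M), fun e he => ?_⟩
  obtain ⟨a, ha, _, rfl⟩ := he
  exact neg_le_of_abs_le (abs_mgse_le hWm hM ha)

include hWm hM in
lemma ltgseV_le_mgse {x a : Fin q → ℝ} (ha : IsDist a) (hxa : ∀ i, x i ≤ a i) :
    ltgseV W J x ≤ mgse W J a :=
  csInf_le (lSet_bddBelow hWm hM) ⟨a, ha, hxa, rfl⟩

include hWm hM in
lemma ltgseV_le_add (hq : 1 ≤ q) {x x' : Fin q → ℝ} (hx : ∀ i, 0 ≤ x i)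
    (hx' : ∀ i, 0 ≤ x' i) (hsum : ∑ i, x i = ∑ i, x' i) (hs1 : ∑ i, x i ≤ 1) :
    ltgseV W J x' ≤ ltgseV W J x + (∑ i, ∑ j, |J i j|) * (2 * M * ∑ i, |x i - x' i|) := by
  set K := (∑ i, ∑ j, |J i j|) * (2 * M * ∑ i, |x i - x' i|) with hK
  have key : ltgseV W J x' - K ≤ sInf (lSet W J x) := by
    obtain ⟨a0, ha0, hxa0⟩ := exists_dist_ge hq hx hs1
    refine le_csInf ⟨mgse W J a0, a0, ha0, hxa0, rfl⟩ fun e he => ?_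
    obtain ⟨a, ha, hxa, rfl⟩ := he
    set a' : Fin q → ℝ := fun i => a i - x i + x' i with ha'
    have ha'dist : IsDist a' := by
      constructor
      · intro i
        have := hxa i
        have := hx' i
        simp only [ha']
        linarith
      · simp only [ha']
        rw [Finset.sum_add_distrib, Finset.sum_sub_distrib, ha.2, hsum]
        ring
    have hxa' : ∀ i, x' i ≤ a' i := by
      intro i
      simp only [ha']
      linarith [hxa i]
    have h1 : ltgseV W J x' ≤ mgse W J a' := ltgseV_le_mgse hWm hM ha'dist hxa'
    have h2 := mgse_le_add hWm hM (J := J) ha ha'dist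
    have heq : (∑ i, |a i - a' i|) = ∑ i, |x i - x' i| := by
      refine Finset.sum_congr rfl fun i _ => ?_
      simp only [ha']
      ring_nf
    rw [heq] at h2
    rw [hK]
    linarith
  rw [ltgseV_eq W J x]
  linarith

include hWm hM in
lemma abs_ltgseV_sub_le (hq : 1 ≤ q) {x x' : Fin q → ℝ} (hx : ∀ i, 0 ≤ x i)
    (hx' : ∀ i, 0 ≤ x' i) (hsum : ∑ i, x i = ∑ i, x' i) (hs1 : ∑ i, x i ≤ 1) :
    |ltgseV W J x - ltgseV W J x'| ≤
      (∑ i, ∑ j, |J i j|) * (2 * M * ∑ i, |x i - x' i|) := by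
  rw [abs_le]
  constructor
  · have := ltgseV_le_add hWm hM (J := J) hq hx hx' hsum hs1
    linarith
  · have := ltgseV_le_add hWm hM (J := J) hq hx' hx hsum.symm (hsum ▸ hs1)
    have heq : (∑ i, |x' i - x i|) = ∑ i, |x i - x' i| :=
      Finset.sum_congr rfl fun i _ => abs_sub_comm _ _
    rw [heq] at this
    linarith

end Scratch4
namespace Scratch5
open Scratch Scratch2 Scratch3 Scratch4

variable {q : ℕ} {W : ℝ → ℝ → ℝ} {M : ℝ} {J : Matrix (Fin q) (Fin q) ℝ}

/-- equivalence realizing `Fin (∑ k i)` as a disjoint union of blocks -/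
def EQ (k : Fin q → ℕ) : (Σ i : Fin q, Fin (k i)) ≃ Fin (∑ i, k i) :=
  Fintype.equivFinOfCardEq (by simp)

def gmap (k : Fin q → ℕ) : Fin (∑ i, k i) → Fin q := fun α => ((EQ k).symm α).1

def Jblow (k : Fin q → ℕ) (J : Matrix (Fin q) (Fin q) ℝ) :
    Matrix (Fin (∑ i, k i)) (Fin (∑ i, k i)) ℝ :=
  fun α β => J (gmap k α) (gmap k β)

lemma Jblow_symm (k : Fin q → ℕ) (hJ : J.IsSymm) : (Jblow k J).IsSymm := by
  unfold Matrix.IsSymm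
  ext α β
  rw [Matrix.transpose_apply]
  exact hJ.apply _ _

lemma sum_gmap (k : Fin q → ℕ) (F : Fin q → ℝ) :
    ∑ α, F (gmap k α) = ∑ i, (k i : ℝ) * F i := by
  have h1 : ∑ α, F (gmap k α) = ∑ σ : Σ i : Fin q, Fin (k i), F ((gmap k) (EQ k σ)) :=
    (Equiv.sum_comp (EQ k) (fun α => F (gmap k α))).symm
  have h2 : ∀ σ : Σ i : Fin q, Fin (k i), gmap k (EQ k σ) = σ.1 := by
    intro σ; unfold gmap; rw [Equiv.symm_apply_apply]
  rw [h1, Finset.sum_congr rfl (fun σ _ => by rw [h2 σ])]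
  rw [← Finset.univ_sigma_univ, Finset.sum_sigma]
  simp [Finset.sum_const, mul_comm]

lemma kpos {k : Fin q → ℕ} (hk : ∀ i, 1 ≤ k i) (i : Fin q) : (0:ℝ) < (k i : ℝ) := by
  exact_mod_cast Nat.lt_of_lt_of_le Nat.zero_lt_one (hk i)

/-- split a `q`-partition into a `∑ k`-partition, dividing each part equally -/
def splitFP (k : Fin q → ℕ) (hk : ∀ i, 1 ≤ k i) (ρ : FracPartition q) :
    FracPartition (∑ i, k i) where
  toFun := fun α x => (1 / (k (gmap k α) : ℝ)) * ρ.toFun (gmap k α) x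
  measurable := fun α => (ρ.measurable _).const_mul _
  mem_I01 := by
    intro α x hx
    obtain ⟨h1, h2⟩ := rho_mem ρ (gmap k α) hx
    have hkp := kpos hk (gmap k α)
    have hle : 1 / (k (gmap k α) : ℝ) ≤ 1 := by
      rw [div_le_one hkp]
      exact_mod_cast hk (gmap k α)
    constructor
    · positivity
    · calc (1 / (k (gmap k α) : ℝ)) * ρ.toFun (gmap k α) x ≤ 1 * 1 :=
          mul_le_mul hle h2 h1 zero_le_one
        _ = 1 := by ring
  sum_one := by
    intro x hx
    rw [sum_gmap k (fun i => (1 / (k i : ℝ)) * ρ.toFun i x)]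
    have : ∀ i : Fin q, (k i : ℝ) * ((1 / (k i : ℝ)) * ρ.toFun i x) = ρ.toFun i x := by
      intro i
      have := (kpos hk i).ne'
      field_simp
    rw [Finset.sum_congr rfl (fun i _ => this i)]
    exact ρ.sum_one x hx

lemma splitFP_int (k : Fin q → ℕ) (hk : ∀ i, 1 ≤ k i) (ρ : FracPartition q)
    {a : Fin q → ℝ} (hρ : ∀ i, (∫ x in I01, ρ.toFun i x) = a i) (α : Fin (∑ i, k i)) :
    (∫ x in I01, (splitFP k hk ρ).toFun α x) = (1 / (k (gmap k α) : ℝ)) * a (gmap k α) := by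
  unfold splitFP
  simp only
  rw [integral_const_mul, hρ]

variable (hWm : Measurable (Function.uncurry W)) (hM : ∀ x y, |W x y| ≤ M)

include hWm hM in
lemma splitFP_energy (k : Fin q → ℕ) (hk : ∀ i, 1 ≤ k i) (ρ : FracPartition q) :
    energy W (Jblow k J) (splitFP k hk ρ) = energy W J ρ := by
  rw [energy_eq, energy_eq]
  congr 1
  have hPP : ∀ α β, PP W ((splitFP k hk ρ).toFun α) ((splitFP k hk ρ).toFun β) =
      (1 / (k (gmap k α) : ℝ)) * (1 / (k (gmap k β) : ℝ)) *
        PP W (ρ.toFun (gmap k α)) (ρ.toFun (gmap k β)) := by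
    intro α β
    unfold splitFP
    simp only
    rw [PP_smul]
  set H : Fin q → Fin q → ℝ := fun i j =>
    J i j * ((1 / (k i : ℝ)) * (1 / (k j : ℝ)) * PP W (ρ.toFun i) (ρ.toFun j)) with hH
  have step : ∀ α, ∑ β, Jblow k J α β * PP W ((splitFP k hk ρ).toFun α)
      ((splitFP k hk ρ).toFun β) = ∑ j, (k j : ℝ) * H (gmap k α) j := by
    intro α
    rw [← sum_gmap k (fun j => H (gmap k α) j)]
    refine Finset.sum_congr rfl fun β _ => ?_
    rw [hPP α β]
    unfold Jblow
    rw [hH]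
    try ring
  rw [Finset.sum_congr rfl (fun α _ => step α)]
  rw [sum_gmap k (fun i => ∑ j, (k j : ℝ) * H i j)]
  refine Finset.sum_congr rfl fun i _ => ?_
  rw [Finset.mul_sum]
  refine Finset.sum_congr rfl fun j _ => ?_
  rw [hH]
  have h1 := (kpos hk i).ne'
  have h2 := (kpos hk j).ne'
  field_simp
  try ring

/-- group a `∑ k`-partition into a `q`-partition by summing over blocks -/
def grpFP (k : Fin q → ℕ) (ρ' : FracPartition (∑ i, k i)) : FracPartition q where
  toFun := fun i x => ∑ α, if gmap k α = i then ρ'.toFun α x else 0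
  measurable := by
    intro i
    refine Finset.measurable_sum _ fun α _ => ?_
    split
    · exact ρ'.measurable α
    · exact measurable_const
  mem_I01 := by
    intro i x hx
    have hnn : ∀ (i' : Fin q) (α : Fin (∑ j, k j)),
        0 ≤ (if gmap k α = i' then ρ'.toFun α x else 0) := by
      intro i' α
      split
      · exact (rho_mem ρ' α hx).1
      · exact le_refl 0
    have hsum : ∑ i', ∑ α, (if gmap k α = i' then ρ'.toFun α x else 0) = 1 := by
      rw [Finset.sum_comm]
      have hcollapse : ∀ α, (∑ i', if gmap k α = i' then ρ'.toFun α x else 0) =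
          ρ'.toFun α x := by
        intro α
        simp [Finset.sum_ite_eq]
      rw [Finset.sum_congr rfl (fun α _ => hcollapse α)]
      exact ρ'.sum_one x hx
    constructor
    · exact Finset.sum_nonneg fun α _ => hnn i α
    · calc (∑ α, if gmap k α = i then ρ'.toFun α x else 0)
          ≤ ∑ i', ∑ α, (if gmap k α = i' then ρ'.toFun α x else 0) :=
            Finset.single_le_sum (fun i' _ => Finset.sum_nonneg fun α _ => hnn i' α)
              (Finset.mem_univ i)
        _ = 1 := hsum
  sum_one := by
    intro x hx
    rw [Finset.sum_comm]
    have hcollapse : ∀ α, (∑ i', if gmap k α = i' then ρ'.toFun α x else 0) =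
        ρ'.toFun α x := by
      intro α
      simp [Finset.sum_ite_eq]
    rw [Finset.sum_congr rfl (fun α _ => hcollapse α)]
    exact ρ'.sum_one x hx

lemma grpFP_int (k : Fin q → ℕ) (ρ' : FracPartition (∑ i, k i))
    {b : Fin (∑ i, k i) → ℝ} (hρ' : ∀ α, (∫ x in I01, ρ'.toFun α x) = b α) (i : Fin q) :
    (∫ x in I01, (grpFP k ρ').toFun i x) = ∑ α, if gmap k α = i then b α else 0 := by
  unfold grpFP
  simp only
  rw [integral_finset_sum _ (fun α _ => ?_)]
  · refine Finset.sum_congr rfl fun α _ => ?_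
    split
    · exact hρ' α
    · simp
  · split
    · exact intOn_of_bound (ρ'.measurable α) 1 (okF_rho ρ' α).bdd
    · simp [integrableOn_const]

lemma okF_ite (k : Fin q → ℕ) (ρ' : FracPartition (∑ i, k i)) (i : Fin q)
    (α : Fin (∑ j, k j)) : OkF (fun x => if gmap k α = i then ρ'.toFun α x else 0) 1 := by
  split
  · exact okF_rho ρ' α
  · exact ⟨measurable_const, fun x _ => by norm_num, zero_le_one⟩

include hWm hM in
omit hWm hM in
lemma sum4_swap {ι κ : Type*} [Fintype ι] [Fintype κ] (f : ι → ι → κ → κ → ℝ) :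
    ∑ i, ∑ j, ∑ α, ∑ β, f i j α β = ∑ α, ∑ β, ∑ i, ∑ j, f i j α β := by
  calc ∑ i, ∑ j, ∑ α, ∑ β, f i j α β
      = ∑ i, ∑ α, ∑ j, ∑ β, f i j α β := Finset.sum_congr rfl fun i _ => Finset.sum_comm
    _ = ∑ α, ∑ i, ∑ j, ∑ β, f i j α β := Finset.sum_comm
    _ = ∑ α, ∑ i, ∑ β, ∑ j, f i j α β := Finset.sum_congr rfl fun a _ =>
        Finset.sum_congr rfl fun i _ => Finset.sum_comm
    _ = ∑ α, ∑ β, ∑ i, ∑ j, f i j α β := Finset.sum_congr rfl fun a _ => Finset.sum_comm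

include hWm hM in
lemma grpFP_energy (k : Fin q → ℕ) (ρ' : FracPartition (∑ i, k i)) :
    energy W J (grpFP k ρ') = energy W (Jblow k J) ρ' := by
  rw [energy_eq, energy_eq]
  congr 1
  have hgok : ∀ j : Fin q,
      OkF (fun x => ∑ α, if gmap k α = j then ρ'.toFun α x else 0) 1 :=
    fun j => okF_rho (grpFP k ρ') j
  have hPP : ∀ i j, PP W ((grpFP k ρ').toFun i) ((grpFP k ρ').toFun j) =
      ∑ α, ∑ β, (if gmap k α = i then 1 else 0) * (if gmap k β = j then 1 else 0) *
        PP W (ρ'.toFun α) (ρ'.toFun β) := by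
    intro i j
    show PP W (fun x => ∑ α, if gmap k α = i then ρ'.toFun α x else 0)
        (fun x => ∑ α, if gmap k α = j then ρ'.toFun α x else 0) = _
    rw [PP_sum_left hWm hM _ (fun α _ => okF_ite k ρ' i α) (hgok j)]
    refine Finset.sum_congr rfl fun α _ => ?_
    rw [PP_sum_right hWm hM _ (okF_ite k ρ' i α) (fun β _ => okF_ite k ρ' j β)]
    refine Finset.sum_congr rfl fun β _ => ?_
    by_cases h1 : gmap k α = i <;> by_cases h2 : gmap k β = j <;>
      simp [h1, h2, PP, CC]
  calc (∑ i, ∑ j, J i j * PP W ((grpFP k ρ').toFun i) ((grpFP k ρ').toFun j))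
      = ∑ i, ∑ j, ∑ α, ∑ β, J i j * ((if gmap k α = i then (1:ℝ) else 0) *
          (if gmap k β = j then 1 else 0) * PP W (ρ'.toFun α) (ρ'.toFun β)) := by
        refine Finset.sum_congr rfl fun i _ => Finset.sum_congr rfl fun j _ => ?_
        rw [hPP i j, Finset.mul_sum]
        exact Finset.sum_congr rfl fun α _ => by rw [Finset.mul_sum]
    _ = ∑ α, ∑ β, ∑ i, ∑ j, J i j * ((if gmap k α = i then (1:ℝ) else 0) *
          (if gmap k β = j then 1 else 0) * PP W (ρ'.toFun α) (ρ'.toFun β)) := sum4_swap _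
    _ = ∑ α, ∑ β, Jblow k J α β * PP W (ρ'.toFun α) (ρ'.toFun β) := by
        refine Finset.sum_congr rfl fun α _ => Finset.sum_congr rfl fun β _ => ?_
        have hc : ∀ i j, J i j * ((if gmap k α = i then (1:ℝ) else 0) *
            (if gmap k β = j then 1 else 0) * PP W (ρ'.toFun α) (ρ'.toFun β)) =
            (if gmap k α = i then (if gmap k β = j then
              J i j * PP W (ρ'.toFun α) (ρ'.toFun β) else 0) else 0) := by
          intro i j
          by_cases h1 : gmap k α = i <;> by_cases h2 : gmap k β = j <;> simp [h1, h2]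
        calc (∑ i, ∑ j, J i j * ((if gmap k α = i then (1:ℝ) else 0) *
              (if gmap k β = j then 1 else 0) * PP W (ρ'.toFun α) (ρ'.toFun β)))
            = ∑ i, ∑ j, (if gmap k α = i then (if gmap k β = j then
                J i j * PP W (ρ'.toFun α) (ρ'.toFun β) else 0) else 0) :=
              Finset.sum_congr rfl fun i _ => Finset.sum_congr rfl fun j _ => hc i j
          _ = ∑ i, (if gmap k α = i then (∑ j, if gmap k β = j then
                J i j * PP W (ρ'.toFun α) (ρ'.toFun β) else 0) else 0) := by
              refine Finset.sum_congr rfl fun i _ => ?_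
              by_cases hcase : gmap k α = i <;> simp [hcase]
          _ = ∑ j, (if gmap k β = j then J (gmap k α) j *
                PP W (ρ'.toFun α) (ρ'.toFun β) else 0) := by
              rw [Finset.sum_ite_eq Finset.univ (gmap k α)]
              simp
          _ = Jblow k J α β * PP W (ρ'.toFun α) (ρ'.toFun β) := by
              rw [Finset.sum_ite_eq Finset.univ (gmap k β)]
              simp [Jblow]

include hWm hM in
lemma ltgse_blow_eq (hq : 1 ≤ q) (k : Fin q → ℕ) (hk : ∀ i, 1 ≤ k i) {c : ℝ} (hc : 0 ≤ c)
    (hc1 : ((∑ i, k i : ℕ) : ℝ) * c ≤ 1) :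
    ltgse W (Jblow k J) c = ltgseV W J (fun i => (k i : ℝ) * c) := by
  have hq' : 1 ≤ ∑ i, k i := by
    have h0 : (⟨0, by omega⟩ : Fin q) ∈ Finset.univ := Finset.mem_univ _
    exact le_trans (hk ⟨0, by omega⟩) (Finset.single_le_sum (fun i _ => Nat.zero_le _) h0)
  have hxnn : ∀ i, (0:ℝ) ≤ (k i : ℝ) * c := fun i => mul_nonneg (Nat.cast_nonneg _) hc
  have hxsum : (∑ i, (k i : ℝ) * c) = ((∑ i, k i : ℕ) : ℝ) * c := by
    rw [← Finset.sum_mul]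
    push_cast
    ring
  have hcsum : (∑ _α : Fin (∑ i, k i), c) = ((∑ i, k i : ℕ) : ℝ) * c := by
    rw [Finset.sum_const, Finset.card_univ, Fintype.card_fin, nsmul_eq_mul]
  refine le_antisymm ?_ ?_
  · -- ltgse ≤ ltgseV
    rw [ltgseV_eq]
    obtain ⟨a0, ha0, hxa0⟩ := exists_dist_ge hq hxnn (by rw [hxsum]; exact hc1)
    refine le_csInf ⟨mgse W J a0, a0, ha0, hxa0, rfl⟩ ?_
    rintro e ⟨a, ha, hxa, rfl⟩
    set b : Fin (∑ i, k i) → ℝ := fun α => (1 / (k (gmap k α) : ℝ)) * a (gmap k α) with hb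
    have hbd : IsDist b := by
      constructor
      · intro α
        exact mul_nonneg (by positivity) (ha.1 _)
      · rw [hb]
        rw [sum_gmap k (fun i => (1 / (k i : ℝ)) * a i)]
        have : ∀ i : Fin q, (k i : ℝ) * ((1 / (k i : ℝ)) * a i) = a i := by
          intro i
          have := (kpos hk i).ne'
          field_simp
        rw [Finset.sum_congr rfl (fun i _ => this i)]
        exact ha.2
    have hbc : ∀ α, c ≤ b α := by
      intro α
      rw [hb]
      simp only [one_div]
      rw [← div_eq_inv_mul, le_div_iff₀ (kpos hk (gmap k α)), mul_comm]
      exact hxa (gmap k α)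
    have h1 : mgse W (Jblow k J) b ≤ mgse W J a := by
      rw [mgse_eq W J a]
      refine le_csInf (mgseSet_nonempty ha) ?_
      rintro e' ⟨ρ, hρ, rfl⟩
      refine le_of_le_of_eq (mgse_le_energy hWm hM (splitFP k hk ρ) ?_)
        (splitFP_energy hWm hM k hk ρ)
      intro α
      rw [splitFP_int k hk ρ hρ]
    exact le_trans (ltgseV_le_mgse hWm hM hbd hbc) h1
  · -- ltgseV ≤ ltgse
    show ltgseV W J _ ≤ ltgseV W (Jblow k J) (fun _ => c)
    rw [ltgseV_eq W (Jblow k J)]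
    obtain ⟨b0, hb0, hcb0⟩ := exists_dist_ge hq' (fun _ => hc) (by rw [hcsum]; exact hc1)
    refine le_csInf ⟨mgse W (Jblow k J) b0, b0, hb0, hcb0, rfl⟩ ?_
    rintro e ⟨b, hb, hcb, rfl⟩
    set a : Fin q → ℝ := fun i => ∑ α, if gmap k α = i then b α else 0 with ha
    have hadist : IsDist a := by
      constructor
      · intro i
        refine Finset.sum_nonneg fun α _ => ?_
        split
        · exact hb.1 α
        · exact le_refl 0
      · rw [ha]
        rw [Finset.sum_comm]
        have : ∀ α, (∑ i, if gmap k α = i then b α else 0) = b α := by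
          intro α
          rw [Finset.sum_ite_eq Finset.univ (gmap k α)]
          simp
        rw [Finset.sum_congr rfl (fun α _ => this α)]
        exact hb.2
    have hxa : ∀ i, (k i : ℝ) * c ≤ a i := by
      intro i
      have hkc : (∑ α, if gmap k α = i then c else 0) = (k i : ℝ) * c := by
        have h2 := sum_gmap k (fun i' => if i' = i then c else 0)
        have h3 : (∑ i', (k i' : ℝ) * (if i' = i then c else 0)) = (k i : ℝ) * c := by
          rw [Finset.sum_congr rfl (fun i' _ => by
            rw [show (k i' : ℝ) * (if i' = i then c else 0) =
              (if i' = i then (k i' : ℝ) * c else 0) from by split <;> simp])]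
          rw [Finset.sum_ite_eq' Finset.univ i]
          simp
        rw [h2, h3]
      rw [← hkc, ha]
      refine Finset.sum_le_sum fun α _ => ?_
      split
      · exact hcb α
      · exact le_refl 0
    have h1 : mgse W J a ≤ mgse W (Jblow k J) b := by
      rw [mgse_eq W (Jblow k J) b]
      refine le_csInf (mgseSet_nonempty hb) ?_
      rintro e' ⟨ρ', hρ', rfl⟩
      refine le_of_le_of_eq (mgse_le_energy hWm hM (grpFP k ρ') ?_)
        (grpFP_energy hWm hM k ρ')
      intro i
      rw [grpFP_int k ρ' hρ']
    exact le_trans (ltgseV_le_mgse hWm hM hadist hxa) h1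

end Scratch5

namespace Scratch6
open Scratch Scratch2 Scratch3 Scratch4 Scratch5

lemma exists_approx {q : ℕ} (hq : 1 ≤ q) {h : ℝ} (hh0 : 0 ≤ h) (x : Fin q → ℝ)
    (hx : ∀ i, 0 ≤ x i) (hxs : ∑ i, x i = h) {ε : ℝ} (hε : 0 < ε) :
    ∃ k : Fin q → ℕ, (∀ i, 1 ≤ k i) ∧
      ∀ i, |(k i : ℝ) * (h / ((∑ j, k j : ℕ) : ℝ)) - x i| ≤ ε := by
  haveI : NeZero q := ⟨by omega⟩
  by_cases hh : h = 0
  · refine ⟨fun _ => 1, fun _ => le_refl 1, fun i => ?_⟩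
    have hxi : x i = 0 := by
      have h1 : ∑ j, x j = 0 := by rw [hxs, hh]
      exact (Finset.sum_eq_zero_iff_of_nonneg (fun j _ => hx j)).1 h1 i (Finset.mem_univ i)
    simp [hh, hxi]
    exact hε.le
  · have hhpos : 0 < h := lt_of_le_of_ne hh0 (Ne.symm hh)
    set t : Fin q → ℝ := fun i => x i / h with ht
    have htnn : ∀ i, 0 ≤ t i := fun i => div_nonneg (hx i) hh0
    have hts : ∑ i, t i = 1 := by
      rw [ht, ← Finset.sum_div, hxs, div_self hh]
    obtain ⟨n, hn⟩ := exists_nat_ge (max ((q + 1) * h / ε) ((q : ℝ) * q + q))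
    have hn1 : (q + 1) * h / ε ≤ n := le_trans (le_max_left _ _) hn
    have hn2 : (q : ℝ) * q + q ≤ n := le_trans (le_max_right _ _) hn
    have hq1 : (1:ℝ) ≤ (q:ℝ) := by exact_mod_cast hq
    have hnq : (q : ℝ) ≤ n := by nlinarith
    set m : Fin q → ℕ := fun i => ⌊t i * n⌋₊ with hm
    have hfl : ∀ i, (m i : ℝ) ≤ t i * n :=
      fun i => Nat.floor_le (mul_nonneg (htnn i) (Nat.cast_nonneg n))
    have hfl2 : ∀ i, t i * n < m i + 1 := fun i => Nat.lt_floor_add_one _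
    have hsm_le : (∑ i, m i : ℕ) ≤ n := by
      have : ((∑ i, m i : ℕ) : ℝ) ≤ n := by
        push_cast
        calc ∑ i, (m i : ℝ) ≤ ∑ i, t i * n := Finset.sum_le_sum fun i _ => hfl i
          _ = (∑ i, t i) * n := by rw [← Finset.sum_mul]
          _ = n := by rw [hts, one_mul]
      exact_mod_cast this
    have hsm_ge : n ≤ (∑ i, m i) + q := by
      have : (n : ℝ) ≤ (∑ i, m i : ℕ) + q := by
        push_cast
        calc (n : ℝ) = (∑ i, t i) * n := by rw [hts, one_mul]
          _ = ∑ i, t i * n := by rw [Finset.sum_mul]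
          _ ≤ ∑ i, ((m i : ℝ) + 1) := Finset.sum_le_sum fun i _ => (hfl2 i).le
          _ = (∑ i, (m i : ℝ)) + q := by
              rw [Finset.sum_add_distrib, Finset.sum_const, Finset.card_univ,
                Fintype.card_fin, nsmul_eq_mul, mul_one]
      exact_mod_cast this
    set d : ℕ := n - ∑ i, m i with hd
    have hdq : d ≤ q := by omega
    obtain ⟨i₀, _, hmax⟩ := Finset.exists_max_image Finset.univ m
      (Finset.univ_nonempty)
    have hmmax : ∀ i, m i ≤ m i₀ := fun i => hmax i (Finset.mem_univ i)
    have havg : ∑ i, m i ≤ q * m i₀ := by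
      calc ∑ i, m i ≤ ∑ _i : Fin q, m i₀ := Finset.sum_le_sum fun i _ => hmmax i
        _ = q * m i₀ := by rw [Finset.sum_const, Finset.card_univ, Fintype.card_fin, smul_eq_mul]
    have hm0_ge : q ≤ m i₀ := by
      have hnn : (q : ℝ) * q + q ≤ n := hn2
      have hqn : (q:ℕ) * q + q ≤ n := by exact_mod_cast (by push_cast; linarith : ((q*q+q : ℕ):ℝ) ≤ n)
      nlinarith [havg, hsm_ge, hdq]
    set k : Fin q → ℕ := fun i => if i = i₀ then m i + 1 + d - q else m i + 1 with hk
    have hk1 : ∀ i, 1 ≤ k i := by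
      intro i
      rw [hk]
      simp only
      split
      · next hi => subst hi; omega
      · omega
    have hm0_le_sum : m i₀ ≤ ∑ i, m i :=
      Finset.single_le_sum (fun i _ => Nat.zero_le _) (Finset.mem_univ i₀)
    have hksum : ∑ i, k i = n := by
      have hsplit : ∑ i, k i = k i₀ + ∑ i ∈ Finset.univ.erase i₀, k i :=
        (Finset.add_sum_erase _ _ (Finset.mem_univ i₀)).symm
      have herase : ∑ i ∈ Finset.univ.erase i₀, k i =
          ∑ i ∈ Finset.univ.erase i₀, (m i + 1) := by
        refine Finset.sum_congr rfl fun i hi => ?_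
        rw [hk]
        simp only
        rw [if_neg (Finset.mem_erase.1 hi).1]
      have hsum_m : ∑ i ∈ Finset.univ.erase i₀, (m i + 1) =
          (∑ i ∈ Finset.univ.erase i₀, m i) + (q - 1) := by
        rw [Finset.sum_add_distrib, Finset.sum_const,
          Finset.card_erase_of_mem (Finset.mem_univ i₀), Finset.card_univ,
          Fintype.card_fin, smul_eq_mul, mul_one]
      have hm_erase : (∑ i ∈ Finset.univ.erase i₀, m i) = (∑ i, m i) - m i₀ := by
        have := Finset.add_sum_erase Finset.univ m (Finset.mem_univ i₀)
        omega
      have hk0 : k i₀ = m i₀ + 1 + d - q := by rw [hk]; simp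
      omega
    refine ⟨k, hk1, fun i => ?_⟩
    rw [hksum]
    have hnpos : (0:ℝ) < n := by linarith
    have hkd : |(k i : ℝ) - t i * n| ≤ q + 1 := by
      by_cases hi : i = i₀
      · subst hi
        have hle : q ≤ m i + 1 + d := by omega
        have hcast : (k i : ℝ) = (m i : ℝ) + 1 + d - q := by
          rw [hk]
          simp only [if_pos rfl]
          push_cast [Nat.cast_sub hle]
          ring
        rw [hcast]
        have h1 := hfl i
        have h2 := hfl2 i
        have hdR : (d:ℝ) ≤ q := by exact_mod_cast hdq
        have hdnn : (0:ℝ) ≤ d := Nat.cast_nonneg d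
        rw [abs_le]
        constructor <;> linarith
      · have hki : k i = m i + 1 := by rw [hk]; simp [hi]
        rw [hki]
        push_cast
        have h1 := hfl i
        have h2 := hfl2 i
        rw [abs_le]
        constructor
        · linarith
        · linarith
    have hxi : x i = t i * h := by
      rw [ht]
      field_simp
    have heq : (k i : ℝ) * (h / n) - x i = (h / n) * ((k i : ℝ) - t i * n) := by
      rw [hxi]
      field_simp
    rw [heq, abs_mul, abs_of_nonneg (by positivity : (0:ℝ) ≤ h / n)]
    have hq1h : (q:ℝ) + 1 > 0 := by linarith
    calc (h/n) * |(k i:ℝ) - t i * n| ≤ (h/n) * (q+1) :=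
        mul_le_mul_of_nonneg_left hkd (by positivity)
      _ ≤ ε := by
          rw [div_mul_eq_mul_div, div_le_iff₀ hnpos]
          have := (div_le_iff₀ hε).1 hn1
          nlinarith

end Scratch6

theorem stmt12 (lo hi : ℝ) (W : ℕ → ℝ → ℝ → ℝ)
    (hW : ∀ n, IsGraphon (W n)) (hWI : ∀ n x y, W n x y ∈ Set.Icc lo hi)
    (h : ℝ) (hh0 : 0 ≤ h) (hh1 : h ≤ 1)
    (hconv : ∀ q' : ℕ, 1 ≤ q' → ∀ J' : Matrix (Fin q') (Fin q') ℝ, J'.IsSymm →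
      ∃ L : ℝ, Tendsto (fun n => ltgse (W n) J' (h / q')) atTop (nhds L)) :
    ∀ q : ℕ, 1 ≤ q → ∀ x : Fin q → ℝ, (∀ i, 0 ≤ x i) → ∑ i, x i = h →
      ∀ J : Matrix (Fin q) (Fin q) ℝ, J.IsSymm →
        ∃ L : ℝ, Tendsto (fun n => ltgseV (W n) J x) atTop (nhds L) := by
  intro q hq x hx hxs J hJ
  classical
  have hWm : ∀ n, Measurable (Function.uncurry (W n)) := fun n => (hW n).1
  set M : ℝ := max |lo| |hi| with hMdef
  have hM : ∀ n, ∀ a b : ℝ, |W n a b| ≤ M := by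
    intro n a b
    obtain ⟨h1, h2⟩ := hWI n a b
    rw [abs_le]
    constructor
    · calc -M ≤ -|lo| := neg_le_neg (le_max_left _ _)
        _ ≤ lo := neg_abs_le lo
        _ ≤ W n a b := h1
    · exact h2.trans ((le_abs_self hi).trans (le_max_right _ _))
  have h0M : 0 ≤ M := le_trans (abs_nonneg lo) (le_max_left _ _)
  have hSnn : 0 ≤ ∑ i, ∑ j, |J i j| :=
    Finset.sum_nonneg fun i _ => Finset.sum_nonneg fun j _ => abs_nonneg _
  set S : ℝ := ∑ i, ∑ j, |J i j| with hS
  set K : ℝ := S * (2 * M) with hK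
  have hKnn : 0 ≤ K := by
    rw [hK]
    positivity
  have hF : CauchySeq (fun n => ltgseV (W n) J x) := by
    rw [Metric.cauchySeq_iff]
    intro ε hε
    have hden : (0:ℝ) < K * q + 1 := by positivity
    set δ : ℝ := ε / (3 * (K * q + 1)) with hδ
    have hδpos : 0 < δ := by
      rw [hδ]
      positivity
    obtain ⟨k, hk1, hkap⟩ := Scratch6.exists_approx hq hh0 x hx hxs hδpos
    have hq'1 : 1 ≤ ∑ i, k i := by
      have h0 : (⟨0, by omega⟩ : Fin q) ∈ Finset.univ := Finset.mem_univ _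
      exact le_trans (hk1 ⟨0, by omega⟩)
        (Finset.single_le_sum (fun i _ => Nat.zero_le _) h0)
    have hq'pos : (0:ℝ) < ((∑ i, k i : ℕ) : ℝ) := by
      exact_mod_cast Nat.lt_of_lt_of_le Nat.zero_lt_one hq'1
    have hcnn : 0 ≤ h / ((∑ i, k i : ℕ) : ℝ) := div_nonneg hh0 hq'pos.le
    have hc1 : ((∑ i, k i : ℕ) : ℝ) * (h / ((∑ i, k i : ℕ) : ℝ)) = h := by
      rw [mul_comm, div_mul_cancel₀ h hq'pos.ne']
    have hxtnn : ∀ i, 0 ≤ (k i : ℝ) * (h / ((∑ j, k j : ℕ) : ℝ)) :=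
      fun i => mul_nonneg (Nat.cast_nonneg _) hcnn
    have hxts : (∑ i, (k i : ℝ) * (h / ((∑ j, k j : ℕ) : ℝ))) = h := by
      rw [← Finset.sum_mul]
      rw [show (∑ i, (k i : ℝ)) = ((∑ i, k i : ℕ) : ℝ) by push_cast; rfl]
      exact hc1
    have hdiff : (∑ i, |x i - (k i : ℝ) * (h / ((∑ j, k j : ℕ) : ℝ))|) ≤ q * δ := by
      calc (∑ i, |x i - (k i : ℝ) * (h / ((∑ j, k j : ℕ) : ℝ))|)
          ≤ ∑ _i : Fin q, δ := Finset.sum_le_sum fun i _ => by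
            rw [abs_sub_comm]
            exact hkap i
        _ = q * δ := by
            rw [Finset.sum_const, Finset.card_univ, Fintype.card_fin, nsmul_eq_mul]
    have hbound : ∀ n, |ltgseV (W n) J x -
        ltgseV (W n) J (fun i => (k i : ℝ) * (h / ((∑ j, k j : ℕ) : ℝ)))| ≤ ε / 3 := by
      intro n
      have hb := Scratch4.abs_ltgseV_sub_le (hWm n) (hM n) (J := J) hq hx hxtnn
        (by rw [hxts, hxs]) (by rw [hxs]; exact hh1)
      refine hb.trans ?_
      have step1 : S * (2 * M * ∑ i, |x i - (k i : ℝ) * (h / ((∑ j, k j : ℕ) : ℝ))|) ≤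
          S * (2 * M * (q * δ)) := by
        refine mul_le_mul_of_nonneg_left ?_ hSnn
        exact mul_le_mul_of_nonneg_left hdiff (by positivity)
      refine step1.trans ?_
      have step2 : S * (2 * M * (q * δ)) = K * q * δ := by rw [hK]; ring
      rw [step2]
      have step3 : (K * q + 1) * δ = ε / 3 := by
        rw [hδ]
        field_simp
      have hexp : (K * q + 1) * δ = K * q * δ + δ := by ring
      linarith
    have hGeq : ∀ n, ltgse (W n) (Scratch5.Jblow k J) (h / ((∑ i, k i : ℕ) : ℝ)) =
        ltgseV (W n) J (fun i => (k i : ℝ) * (h / ((∑ j, k j : ℕ) : ℝ))) := by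
      intro n
      exact Scratch5.ltgse_blow_eq (hWm n) (hM n) (J := J) hq k hk1 hcnn
        (by rw [hc1]; exact hh1)
    obtain ⟨L', hL'⟩ := hconv (∑ i, k i) hq'1 (Scratch5.Jblow k J)
      (Scratch5.Jblow_symm k hJ)
    have hGc : CauchySeq (fun n =>
        ltgseV (W n) J (fun i => (k i : ℝ) * (h / ((∑ j, k j : ℕ) : ℝ)))) := by
      have hc := hL'.cauchySeq
      have : (fun n => ltgse (W n) (Scratch5.Jblow k J) (h / ((∑ i, k i : ℕ) : ℝ))) =
          (fun n => ltgseV (W n) J (fun i => (k i : ℝ) * (h / ((∑ j, k j : ℕ) : ℝ)))) := by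
        funext n
        exact hGeq n
      rwa [this] at hc
    obtain ⟨N, hN⟩ := Metric.cauchySeq_iff.1 hGc (ε/3) (by positivity)
    refine ⟨N, fun m hm n hn => ?_⟩
    have h1 := hbound m
    have h2 := hbound n
    have h3 := hN m hm n hn
    rw [Real.dist_eq] at h3 ⊢
    set Fm := ltgseV (W m) J x
    set Fn := ltgseV (W n) J x
    set Gm := ltgseV (W m) J (fun i => (k i : ℝ) * (h / ((∑ j, k j : ℕ) : ℝ)))
    set Gn := ltgseV (W n) J (fun i => (k i : ℝ) * (h / ((∑ j, k j : ℕ) : ℝ)))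
    have t1 : |Fm - Fn| ≤ |Fm - Gm| + |Gm - Gn| + |Gn - Fn| := by
      calc |Fm - Fn| ≤ |Fm - Gn| + |Gn - Fn| := abs_sub_le _ _ _
        _ ≤ (|Fm - Gm| + |Gm - Gn|) + |Gn - Fn| :=
          add_le_add_left (abs_sub_le _ _ _) _
    have h2' : |Gn - Fn| ≤ ε / 3 := by rw [abs_sub_comm]; exact h2
    linarith
  exact cauchySeq_tendsto_of_complete hF
end
end
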